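/- arXiv:0907.1485 — 5 statements merged into one kernel-verified Lean document; each statement's English description precedes it below -/
import Mathlib

section
/- The Stirling number of the first kind s(m,r) equals the sum of the weights of all lattice paths from (0,0) to (r-1, m-r), where a path consists of north steps (0,1) and east steps (1,0), the weight of the i-th step of a path is -i if it is a north step and 1 if it is an east step, and the weight of a path is the product of the weights of its steps. -/
/-- `(i,j)` is a standard edge of the set partition `p` of `[n]`:
`i < j` lie in the same block with no block element strictly between them. -/
def stdEdge {n : ℕ} (p : Finpartition (Finset.Icc 1 n : Finset ℕ)) (i j : ℕ) : Prop :=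
  i < j ∧ ∃ B ∈ p.parts, i ∈ B ∧ j ∈ B ∧ ∀ t ∈ B, ¬ (i < t ∧ t < j)

/-- `(i,j)` is a front edge: `i < j` lie in the same block and `i` is the
minimum (head) of that block. -/
def frontEdge {n : ℕ} (p : Finpartition (Finset.Icc 1 n : Finset ℕ)) (i j : ℕ) : Prop :=
  i < j ∧ ∃ B ∈ p.parts, i ∈ B ∧ j ∈ B ∧ ∀ t ∈ B, i ≤ t

/-- `h` is a head of `p`, i.e. the minimum element of its block. -/
def isHead {n : ℕ} (p : Finpartition (Finset.Icc 1 n : Finset ℕ)) (h : ℕ) : Prop :=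
  ∃ B ∈ p.parts, h ∈ B ∧ ∀ t ∈ B, h ≤ t

/-- `p` has no `k`-distant crossing: no standard edges `(i1,j1)`, `(i2,j2)` with
`i1 < i2 < j1 < j2` and `j1 - i2 ≥ k`. -/
def kDistantNoncrossing {n : ℕ} (k : ℕ) (p : Finpartition (Finset.Icc 1 n : Finset ℕ)) : Prop :=
  ¬ ∃ i1 j1 i2 j2, stdEdge p i1 j1 ∧ stdEdge p i2 j2 ∧
    i1 < i2 ∧ i2 < j1 ∧ j1 < j2 ∧ k ≤ j1 - i2

/-- `p` has no `k`-front crossing: no front edges `(i1,j1)`, `(i2,j2)` with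
`i1 < i2 < j1 < j2` and at least `k - 2` heads strictly between `i2` and `j1`.
This is equivalent to `p` being `12⋯k12`-avoiding. -/
def kFrontNoncrossing {n : ℕ} (k : ℕ) (p : Finpartition (Finset.Icc 1 n : Finset ℕ)) : Prop :=
  ¬ ∃ i1 j1 i2 j2, frontEdge p i1 j1 ∧ frontEdge p i2 j2 ∧
    i1 < i2 ∧ i2 < j1 ∧ j1 < j2 ∧
    k - 2 ≤ Nat.card {h : ℕ // isHead p h ∧ i2 < h ∧ h < j1}

/-- number of cycles (including fixed points) of a permutation of `Fin n`. -/
def cycleCount {n : ℕ} (σ : Equiv.Perm (Fin n)) : ℕ :=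
  σ.cycleType.card + (n - σ.cycleType.sum)

/-- the signed Stirling number of the first kind: `(-1)^(n-k)` times the number of
permutations of `[n]` with `k` cycles. -/
noncomputable def stirlingFirst (n k : ℕ) : ℤ :=
  (-1) ^ (n - k) * (Nat.card {σ : Equiv.Perm (Fin n) // cycleCount σ = k} : ℤ)

/-- the Stirling number of the second kind: the number of set partitions of `[n]`
into `k` blocks. -/
noncomputable def stirlingSecond (n k : ℕ) : ℕ :=
  Nat.card {p : Finpartition (Finset.Icc 1 n : Finset ℕ) // p.parts.card = k}

/-- the Bell number: the number of set partitions of `[n]`. -/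
noncomputable def bell (n : ℕ) : ℕ := Nat.card (Finpartition (Finset.Icc 1 n : Finset ℕ))

/-- the number of `k`-distant noncrossing partitions of `[n]`. -/
noncomputable def dcount (k n : ℕ) : ℕ :=
  Nat.card {p : Finpartition (Finset.Icc 1 n : Finset ℕ) // kDistantNoncrossing k p}

/-- the number of `12⋯k12`-avoiding (= `k`-front noncrossing) partitions of `[n]`. -/
noncomputable def fcount (k n : ℕ) : ℕ :=
  Nat.card {p : Finpartition (Finset.Icc 1 n : Finset ℕ) // kFrontNoncrossing k p}


section AuxStirling

open Equiv Equiv.Perm Finset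

variable {α : Type*} [DecidableEq α] [Fintype α]

private lemma isCycle_insert {c : Perm α} (hc : c.IsCycle) {a b : α}
    (hca : c a = a) (hb : c b ≠ b) : IsCycle (swap a b * c) := by
  have hanb : a ≠ b := fun h => hb (h ▸ hca)
  have hans : a ∉ c.support := by simp [hca]
  have hbs : b ∈ c.support := mem_support.2 hb
  have hga : (swap a b * c) a = b := by simp [mul_apply, hca]
  have hgy : ∀ y, y ≠ a → c y ≠ b → (swap a b * c) y = c y := by
    intro y hya hcyb
    have hcya : c y ≠ a := fun h => hya (c.injective (h.trans hca.symm))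
    simp [mul_apply, swap_apply_of_ne_of_ne hcya hcyb]
  have key : ∀ k : ℕ, (swap a b * c).SameCycle b (((c : Perm α) ^ k) b) := by
    intro k
    induction k with
    | zero => exact ⟨0, rfl⟩
    | succ k ih =>
      have hck : ((c : Perm α) ^ (k+1)) b = c (((c : Perm α) ^ k) b) := by
        rw [pow_succ', mul_apply]
      by_cases hcy : c (((c : Perm α) ^ k) b) = b
      · rw [hck, hcy]
      · have hys : ((c : Perm α) ^ k) b ∈ c.support := (c.pow_apply_mem_support).2 hbs
        have hya : ((c : Perm α) ^ k) b ≠ a := fun h => hans (h ▸ hys)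
        have h2 : (swap a b * c) (((c : Perm α) ^ k) b) = ((c : Perm α) ^ (k+1)) b := by
          rw [hgy _ hya hcy, hck]
        exact ih.trans ⟨1, by simpa using h2⟩
  refine ⟨b, ?_, ?_⟩
  · rw [hgy b hanb.symm hb]; exact hb
  · intro y hy
    by_cases hya : y = a
    · have h3 : SameCycle (swap a b * c) a b := ⟨1, by simpa using hga⟩
      rw [hya]; exact h3.symm
    · have hys : c y ≠ y := by
        intro hcy
        by_cases hyb : y = b
        · exact hb (hyb ▸ hcy)
        · exact hy (by rw [hgy y hya (hcy.symm ▸ hyb)]; exact hcy)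
      obtain ⟨k, hk⟩ := hc.exists_pow_eq hb hys
      exact hk ▸ key k

private lemma support_insert {c : Perm α} {a b : α}
    (hca : c a = a) (hb : c b ≠ b) : (swap a b * c).support = insert a c.support := by
  have hanb : a ≠ b := fun h => hb (h ▸ hca)
  ext y
  simp only [mem_support, mem_insert, mul_apply]
  constructor
  · intro hy
    by_cases hya : y = a
    · exact Or.inl hya
    by_cases hyb : y = b
    · exact Or.inr (hyb ▸ hb)
    by_cases hys : c y = y
    · exact absurd (by rw [hys, swap_apply_of_ne_of_ne hya hyb]) hy
    · exact Or.inr hys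
  · intro hy h
    rcases hy with hya | hys
    · subst hya; rw [hca, swap_apply_left] at h; exact hanb h.symm
    · by_cases h1 : c y = a
      · rw [h1, swap_apply_left] at h
        subst h
        exact hanb (c.injective (hca.trans h1.symm))
      by_cases h2 : c y = b
      · rw [h2, swap_apply_right] at h
        subst h
        exact hanb (hca.symm.trans h2)
      · rw [swap_apply_of_ne_of_ne h1 h2] at h
        exact hys h

/-- auxiliary cycle count on a general fintype -/
private def cc (σ : Perm α) : ℕ :=
  Multiset.card σ.cycleType + (Fintype.card α - σ.support.card)

private lemma cycleType_swap_mul {τ : Perm α} {a b : α} (ha : τ a = a) (hab : a ≠ b)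
    (hb : τ b ≠ b) :
    ∃ s : Multiset ℕ, ∃ k : ℕ, τ.cycleType = s + {k} ∧ (swap a b * τ).cycleType = s + {k + 1} := by
  set c := τ.cycleOf b with hcdef
  have hb' : b ∈ τ.support := mem_support.2 hb
  have hmem : c ∈ τ.cycleFactorsFinset := cycleOf_mem_cycleFactorsFinset_iff.2 hb'
  have hc : c.IsCycle := isCycle_cycleOf τ hb
  have hcb : c b = b → False := by
    intro h; rw [hcdef, cycleOf_apply_self] at h; exact hb h
  have hca : c a = a := by
    by_contra h
    exact (mem_support.1 (support_cycleOf_le τ b (mem_support.2 h))).elim ha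
  have hdisj : Disjoint (τ * c⁻¹) c := disjoint_mul_inv_of_mem_cycleFactorsFinset hmem
  set τ' := τ * c⁻¹ with hτ'
  have hτeq : τ = τ' * c := by rw [hτ']; group
  have hτ'a : τ' a = a := by
    rw [hτ', mul_apply]
    have : c⁻¹ a = a := by nth_rewrite 1 [← hca]; exact c.symm_apply_apply a
    rw [this, ha]
  have hτ'b : τ' b = b := by
    rw [hτ', mul_apply, hcdef, cycleOf_inv, cycleOf_apply_self]
    simp
  have hdisj2 : Disjoint (swap a b) τ' := by
    intro x
    by_cases hxa : x = a
    · exact Or.inr (hxa ▸ hτ'a)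
    by_cases hxb : x = b
    · exact Or.inr (hxb ▸ hτ'b)
    · exact Or.inl (swap_apply_of_ne_of_ne hxa hxb)
  have heq : swap a b * τ = τ' * (swap a b * c) := by
    rw [hτeq, ← mul_assoc, hdisj2.commute.eq, mul_assoc]
  have hgc : (swap a b * c).IsCycle := isCycle_insert hc hca (fun h => hcb h)
  have hdisj3 : Disjoint τ' (swap a b * c) := by
    intro x
    by_cases hx : τ' x = x
    · exact Or.inl hx
    · have hcx : c x = x := ((hdisj x).resolve_left hx)
      have hxa : x ≠ a := fun h => hx (h ▸ hτ'a)
      have hxb : x ≠ b := fun h => hx (h ▸ hτ'b)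
      exact Or.inr (by rw [mul_apply, hcx, swap_apply_of_ne_of_ne hxa hxb])
  refine ⟨τ'.cycleType, c.support.card, ?_, ?_⟩
  · rw [hτeq, hdisj.cycleType_mul, hc.cycleType]
  · rw [heq, hdisj3.cycleType_mul, hgc.cycleType, support_insert hca (fun h => hcb h),
      card_insert_of_notMem (by simp [hca])]

private lemma cc_swap_mul {τ : Perm α} {a b : α} (ha : τ a = a) (hab : a ≠ b) :
    cc (swap a b * τ) + 1 = cc τ := by
  have hsupla : τ.support.card + 1 ≤ Fintype.card α := by
    have : insert a τ.support ⊆ univ := subset_univ _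
    have h2 := card_le_card this
    rwa [card_insert_of_notMem (by simp [ha]), card_univ] at h2
  by_cases hb : τ b = b
  · have hdisj : Disjoint (swap a b) τ := by
      intro x
      by_cases hxa : x = a
      · exact Or.inr (hxa ▸ ha)
      by_cases hxb : x = b
      · exact Or.inr (hxb ▸ hb)
      · exact Or.inl (swap_apply_of_ne_of_ne hxa hxb)
    have hct : (swap a b * τ).cycleType = {2} + τ.cycleType := by
      rw [hdisj.cycleType_mul, (isCycle_swap hab).cycleType, support_swap hab, card_pair hab]
    have hsup : τ.support.card + 2 ≤ Fintype.card α := by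
      have : insert a (insert b τ.support) ⊆ univ := subset_univ _
      have h2 := card_le_card this
      rwa [card_insert_of_notMem (by simp [ha, hab]), card_insert_of_notMem (by simp [hb]),
        card_univ] at h2
    have h3 : (swap a b * τ).support.card = τ.support.card + 2 := by
      rw [← sum_cycleType, hct, Multiset.sum_add, ← sum_cycleType]
      simp [add_comm]
    have h4 : Multiset.card (swap a b * τ).cycleType = Multiset.card τ.cycleType + 1 := by
      rw [hct]; simp
    unfold cc
    rw [h3, h4]
    omega
  · obtain ⟨s, k, h1, h2⟩ := cycleType_swap_mul ha hab hb
    have hsum1 : τ.support.card = s.sum + k := by rw [← sum_cycleType, h1]; simp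
    have hsum2 : (swap a b * τ).support.card = s.sum + k + 1 := by
      rw [← sum_cycleType, h2]; simp; omega
    have hcard : Multiset.card (swap a b * τ).cycleType = Multiset.card τ.cycleType := by
      rw [h1, h2]; simp
    unfold cc
    rw [hsum1] at hsupla
    rw [hcard, hsum1, hsum2]
    omega

private def succEquiv (n : ℕ) : Fin n ≃ {x : Fin (n + 1) // x ≠ 0} where
  toFun i := ⟨i.succ, Fin.succ_ne_zero i⟩
  invFun x := x.1.pred x.2
  left_inv i := by simp
  right_inv x := by simp

private lemma decomposeFin_zero_eq {n : ℕ} (e : Perm (Fin n)) :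
    Equiv.Perm.decomposeFin.symm (0, e) = e.extendDomain (succEquiv n) := by
  ext x
  rcases Fin.eq_zero_or_eq_succ x with hx | ⟨y, hy⟩
  · subst hx
    rw [Equiv.Perm.decomposeFin_symm_apply_zero]
    rw [Perm.extendDomain_apply_not_subtype _ _ (by simp)]
  · subst hy
    have h4 := Perm.extendDomain_apply_subtype e (succEquiv n) (Fin.succ_ne_zero y)
    rw [Equiv.Perm.decomposeFin_symm_apply_succ, h4]
    simp [succEquiv]

private lemma cc_decomposeFin {n : ℕ} (p : Fin (n + 1)) (e : Perm (Fin n)) :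
    cc (Equiv.Perm.decomposeFin.symm (p, e)) + 1 = cc e + 1 + (if p = 0 then 1 else 0) := by
  have hzero : cc (Equiv.Perm.decomposeFin.symm (0, e)) = cc e + 1 := by
    rw [decomposeFin_zero_eq]
    unfold cc
    rw [Perm.cycleType_extendDomain, Perm.card_support_extend_domain,
      Fintype.card_fin, Fintype.card_fin]
    have : e.support.card ≤ n := by
      simpa using card_le_card (subset_univ e.support)
    omega
  by_cases hp : p = 0
  · subst hp; simp [hzero]
  · have heq : Equiv.Perm.decomposeFin.symm (p, e) =
        swap 0 p * Equiv.Perm.decomposeFin.symm (0, e) := by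
      ext x
      rcases Fin.eq_zero_or_eq_succ x with hx | ⟨y, hy⟩
      · subst hx; simp [Perm.mul_apply]
      · subst hy
        rw [Perm.mul_apply, Equiv.Perm.decomposeFin_symm_apply_succ,
          Equiv.Perm.decomposeFin_symm_apply_succ]
        simp
    have hfix : Equiv.Perm.decomposeFin.symm (0, e) 0 = 0 := by simp
    rw [heq, if_neg hp, cc_swap_mul hfix (Ne.symm hp), hzero, add_zero]

private lemma cycleCount_eq_cc {n : ℕ} (σ : Perm (Fin n)) : cycleCount σ = cc σ := by
  unfold cycleCount cc
  rw [sum_cycleType, Fintype.card_fin]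

/-- number of permutations of `Fin n` with `k` cycles -/
private noncomputable def C (n k : ℕ) : ℕ :=
  Nat.card {σ : Equiv.Perm (Fin n) // cycleCount σ = k}

private lemma C_zero {n : ℕ} (hn : 1 ≤ n) : C n 0 = 0 := by
  rw [C, Nat.card_eq_zero]
  left
  constructor
  intro ⟨σ, hσ⟩
  unfold cycleCount at hσ
  have h1 : Multiset.card σ.cycleType = 0 := by omega
  have h2 : σ = 1 := by rwa [card_cycleType_eq_zero] at h1
  subst h2
  rw [cycleType_one] at hσ
  simp at hσ
  omega

private lemma C_gt {n k : ℕ} (h : n < k) : C n k = 0 := by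
  rw [C, Nat.card_eq_zero]
  left
  constructor
  intro ⟨σ, hσ⟩
  have h1 : Multiset.card σ.cycleType ≤ σ.cycleType.sum := by
    have h0 : Multiset.card σ.cycleType • 1 ≤ σ.cycleType.sum :=
      Multiset.card_nsmul_le_sum (fun x hx => (one_lt_of_mem_cycleType hx).le)
    simpa using h0
  have h2 : σ.cycleType.sum ≤ n := by
    rw [sum_cycleType]
    simpa using card_le_card (subset_univ σ.support)
  unfold cycleCount at hσ
  omega

private lemma C_one_one : C 1 1 = 1 := by
  have h1 : cycleCount (1 : Perm (Fin 1)) = 1 := by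
    unfold cycleCount; rw [cycleType_one]; simp
  rw [C, Nat.card_eq_fintype_card]
  exact Fintype.card_eq_one_iff.2
    ⟨⟨1, h1⟩, fun y => Subtype.ext (Subsingleton.elim _ _)⟩

private lemma C_rec (n k : ℕ) : C (n + 1) (k + 1) = C n k + n * C n (k + 1) := by
  have e1 : {σ : Perm (Fin (n+1)) // cycleCount σ = k + 1} ≃
      {x : Fin (n+1) × Perm (Fin n) // cycleCount x.2 + (if x.1 = 0 then 1 else 0) = k + 1} := by
    refine Equiv.subtypeEquiv Equiv.Perm.decomposeFin fun σ => ?_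
    have h := cc_decomposeFin (Equiv.Perm.decomposeFin σ).1 (Equiv.Perm.decomposeFin σ).2
    rw [Prod.mk.eta, Equiv.symm_apply_apply] at h
    rw [cycleCount_eq_cc, cycleCount_eq_cc]
    omega
  have e2 : {x : Fin (n+1) × Perm (Fin n) // cycleCount x.2 + (if x.1 = 0 then 1 else 0) = k + 1}
      ≃ Σ p : Fin (n+1), {e : Perm (Fin n) // cycleCount e + (if p = 0 then 1 else 0) = k + 1} :=
    Equiv.subtypeProdEquivSigmaSubtype
      (fun (p : Fin (n+1)) (e : Perm (Fin n)) => cycleCount e + (if p = 0 then 1 else 0) = k + 1)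
  rw [C, Nat.card_congr (e1.trans e2), Nat.card_eq_fintype_card, Fintype.card_sigma,
    Fin.sum_univ_succ]
  simp only [if_pos rfl, Fin.succ_ne_zero, if_neg, add_zero]
  rw [sum_const, card_univ, Fintype.card_fin, smul_eq_mul]
  congr 1
  · rw [C, Nat.card_eq_fintype_card]
    exact Fintype.card_congr (Equiv.subtypeEquivRight fun e => by simp)
  · congr 1
    rw [C, Nat.card_eq_fintype_card]
    exact Fintype.card_congr (Equiv.subtypeEquivRight fun e => by simp)

/-- the lattice-path weight sum -/
private noncomputable def T (a j : ℕ) : ℤ :=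
  ∑ f ∈ Finset.univ.filter
      (fun f : Fin a → Bool => (Finset.univ.filter (fun i => f i = true)).card = j),
    ∏ i : Fin a, (if f i then -((i : ℕ) + 1 : ℤ) else 1)

private def cnt {a : ℕ} (f : Fin a → Bool) : ℕ :=
  (Finset.univ.filter (fun i => f i = true)).card

private lemma T_eq (a j : ℕ) :
    T a j = ∑ f : Fin a → Bool,
      (if cnt f = j then ∏ i : Fin a, (if f i then -((i : ℕ) + 1 : ℤ) else 1) else 0) := by
  rw [T, sum_filter]; rfl

private lemma cnt_le {a : ℕ} (f : Fin a → Bool) : cnt f ≤ a := by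
  have := card_filter_le (univ : Finset (Fin a)) (fun i => f i = true)
  simpa [cnt] using this

private lemma T_gt {a j : ℕ} (h : a < j) : T a j = 0 := by
  rw [T_eq]
  apply Finset.sum_eq_zero
  intro f _
  rw [if_neg]
  exact fun hc => absurd (hc ▸ cnt_le f) (by omega)

private lemma T_zero_zero : T 0 0 = 1 := by
  rw [T_eq]
  simp [cnt]

private lemma cnt_snoc {a : ℕ} (f : Fin a → Bool) (b : Bool) :
    cnt (Fin.snoc f b : Fin (a+1) → Bool) = cnt f + (if b then 1 else 0) := by
  unfold cnt
  rw [card_filter, card_filter, Fin.sum_univ_castSucc]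
  simp [Fin.snoc_castSucc, Fin.snoc_last]

private lemma prod_snoc {a : ℕ} (f : Fin a → Bool) (b : Bool) :
    ∏ i : Fin (a+1), (if (Fin.snoc f b : Fin (a+1) → Bool) i then -((i : ℕ) + 1 : ℤ) else 1) =
      (∏ i : Fin a, (if f i then -((i : ℕ) + 1 : ℤ) else 1)) *
        (if b then -((a : ℕ) + 1 : ℤ) else 1) := by
  rw [Fin.prod_univ_castSucc]
  simp [Fin.snoc_castSucc, Fin.snoc_last]

private lemma T_rec_succ (a j : ℕ) :
    T (a + 1) (j + 1) = T a (j + 1) - ((a : ℤ) + 1) * T a j := by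
  rw [T_eq, ← Equiv.sum_comp (Fin.snocEquiv (fun _ => Bool)), Fintype.sum_prod_type,
    Fintype.sum_bool]
  have h0 : ∀ (b : Bool) (f : Fin a → Bool),
      (Fin.snocEquiv (fun _ => Bool)) (b, f) = (Fin.snoc f b : Fin (a+1) → Bool) := fun _ _ => rfl
  simp only [h0, cnt_snoc, prod_snoc, Bool.false_eq_true, if_true, if_false, add_zero, mul_one,
    add_left_inj]
  have h1 : ∀ f : Fin a → Bool,
      (if cnt f = j then
          (∏ i : Fin a, (if f i then -((i : ℕ) + 1 : ℤ) else 1)) * (-((a : ℕ) + 1 : ℤ)) else 0)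
      = (if cnt f = j then (∏ i : Fin a, (if f i then -((i : ℕ) + 1 : ℤ) else 1)) else 0) *
          (-((a : ℕ) + 1 : ℤ)) := by
    intro f; split <;> simp
  rw [Finset.sum_congr rfl (fun f _ => h1 f), ← Finset.sum_mul, ← T_eq, ← T_eq]
  ring

private lemma T_rec_zero (a : ℕ) : T (a + 1) 0 = T a 0 := by
  rw [T_eq, ← Equiv.sum_comp (Fin.snocEquiv (fun _ => Bool)), Fintype.sum_prod_type,
    Fintype.sum_bool]
  have h0 : ∀ (b : Bool) (f : Fin a → Bool),
      (Fin.snocEquiv (fun _ => Bool)) (b, f) = (Fin.snoc f b : Fin (a+1) → Bool) := fun _ _ => rfl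
  simp only [h0, cnt_snoc, prod_snoc, Bool.false_eq_true, if_true, if_false, add_zero, mul_one]
  rw [← T_eq]
  simp

private lemma T_eq_C (a : ℕ) : ∀ j, T a j = (-1 : ℤ) ^ j * (C (a + 1) (a + 1 - j) : ℤ) := by
  induction a with
  | zero =>
    intro j
    cases j with
    | zero => rw [T_zero_zero]; simp [C_one_one]
    | succ j =>
      rw [T_gt (by omega), show 0 + 1 - (j + 1) = 0 by omega, C_zero (by omega)]
      simp
  | succ a ih =>
    intro j
    cases j with
    | zero =>
      rw [T_rec_zero, ih 0]
      simp only [pow_zero, one_mul, Nat.sub_zero]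
      rw [C_rec (a + 1) (a + 1), C_gt (n := a + 1) (k := a + 2) (by omega)]
      push_cast
      ring
    | succ j =>
      rw [T_rec_succ, ih (j + 1), ih j]
      rcases le_or_gt j a with h | h
      · have e1 : a + 1 - (j + 1) = a - j := by omega
        have e2 : a + 1 - j = (a - j) + 1 := by omega
        have e3 : a + 1 + 1 - (j + 1) = (a - j) + 1 := by omega
        rw [e1, e2, e3, C_rec (a + 1) (a - j)]
        push_cast
        ring
      · have e1 : a + 1 - (j + 1) = 0 := by omega
        have e2 : a + 1 - j = 0 := by omega
        have e3 : a + 1 + 1 - (j + 1) = 0 := by omega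
        rw [e1, e2, e3, C_zero (by omega), C_zero (by omega)]
        simp

end AuxStirling

/-- A lattice path from (0,0) to (r-1, m-r) is encoded as `f : Fin (m-1) → Bool`
(`true` = north step, `false` = east step), with `m - r` north steps; the weight of
the `i`-th step (1-indexed) is `-i` if north and `1` if east. The sum of the weights
of such paths is the Stirling number of the first kind `s(m,r)`. -/
theorem stirlingFirst_eq_sum_latticePath_weights (m r : ℕ) (h1 : 1 ≤ r) (h2 : r ≤ m) :
    stirlingFirst m r =
      ∑ f ∈ Finset.univ.filter
          (fun f : Fin (m - 1) → Bool =>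
            (Finset.univ.filter (fun i => f i = true)).card = m - r),
        ∏ i : Fin (m - 1), (if f i then -((i : ℕ) + 1 : ℤ) else 1) := by
  have hm : m - 1 + 1 = m := by omega
  have hr : m - (m - r) = r := by omega
  have hT := T_eq_C (m - 1) (m - r)
  rw [hm, hr] at hT
  have hrhs : (∑ f ∈ Finset.univ.filter
          (fun f : Fin (m - 1) → Bool =>
            (Finset.univ.filter (fun i => f i = true)).card = m - r),
        ∏ i : Fin (m - 1), (if f i then -((i : ℕ) + 1 : ℤ) else 1)) = T (m - 1) (m - r) := rfl
  rw [hrhs, hT, stirlingFirst]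
  rfl
end

section
/- For each fixed nonnegative integer m, the exponential generating function Σ_{n≥0} p(m, m+n) x^n / n! equals exp(m·x + e^x - 1), where p(m,N) is the number of set partitions of [N] in which each of 1,...,m is the minimum element of its block. -/
/-- the number of set partitions of `[n]` in which each of `1,…,m` is the head of
its block. -/
noncomputable def headCount (m n : ℕ) : ℕ :=
  Nat.card {p : Finpartition (Finset.Icc 1 n : Finset ℕ) // ∀ i, 1 ≤ i → i ≤ m → isHead p i}

/-- `exp(G)` for a formal power series `G` over `ℚ` with zero constant term:
the coefficient of `x^n` in `Σ_k G^k / k!` (only `k ≤ n` contribute). -/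
noncomputable def expComp (G : PowerSeries ℚ) : PowerSeries ℚ :=
  PowerSeries.mk fun n =>
    ∑ k ∈ Finset.range (n + 1), (PowerSeries.coeff n (G ^ k)) / (k.factorial : ℚ)

section Aux
open PowerSeries


lemma expComp_const (G : ℚ⟦X⟧) : constantCoeff (expComp G) = 1 := by
  rw [← coeff_zero_eq_constantCoeff_apply]
  simp [expComp]

lemma coeff_pow_zero {G : ℚ⟦X⟧} (hG : constantCoeff G = 0) {j k : ℕ} (h : j < k) :
    PowerSeries.coeff j (G ^ k) = 0 := by
  have : (PowerSeries.X : ℚ⟦X⟧) ^ k ∣ G ^ k := pow_dvd_pow_of_dvd (X_dvd_iff.mpr hG) k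
  exact (X_pow_dvd_iff.mp this) j h

lemma ode_unique {H f g : ℚ⟦X⟧} (hf : d⁄dX ℚ f = H * f) (hg : d⁄dX ℚ g = H * g)
    (h0 : constantCoeff f = constantCoeff g) : f = g := by
  ext n
  induction n using Nat.strong_induction_on with
  | _ n ih =>
    match n with
    | 0 => simpa using h0
    | Nat.succ n =>
      have h1 : PowerSeries.coeff n (d⁄dX ℚ f) = PowerSeries.coeff n (d⁄dX ℚ g) := by
        rw [hf, hg, coeff_mul, coeff_mul]
        refine Finset.sum_congr rfl fun p hp => ?_
        rw [ih p.2 (by have := Finset.HasAntidiagonal.mem_antidiagonal.mp hp; omega)]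
      rw [coeff_derivative, coeff_derivative] at h1
      exact mul_right_cancel₀ (by positivity) h1

lemma derivative_exp' : d⁄dX ℚ (exp ℚ) = exp ℚ := by
  ext n
  rw [coeff_derivative, coeff_exp, coeff_exp]
  simp only [eq_ratCast, Rat.cast_div, Rat.cast_one, Rat.cast_natCast]
  rw [Nat.factorial_succ]
  push_cast
  rw [div_mul_eq_mul_div, div_eq_div_iff (by positivity) (by positivity)]
  ring

lemma expComp_deriv {G : ℚ⟦X⟧} (hG : constantCoeff G = 0) :
    d⁄dX ℚ (expComp G) = (d⁄dX ℚ G) * expComp G := by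
  ext n
  rw [coeff_derivative]
  rw [show (coeff (n+1)) (expComp G)
      = ∑ k ∈ Finset.range (n+2), (coeff (n+1)) (G^k) / k.factorial from by
    simp [expComp]]
  rw [Finset.sum_mul]
  have step : ∀ k : ℕ, (coeff (n+1)) (G^k) / k.factorial * (n+1)
      = (k : ℚ) * (coeff n) (d⁄dX ℚ G * G^(k-1)) / k.factorial := by
    intro k
    have h1 : (coeff n) (d⁄dX ℚ (G^k)) = (k:ℚ) * (coeff n) (d⁄dX ℚ G * G^(k-1)) := by
      rw [Derivation.leibniz_pow, smul_eq_mul, mul_comm (G ^ (k-1)), map_nsmul, nsmul_eq_mul]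
    rw [coeff_derivative] at h1
    rw [div_mul_eq_mul_div, h1]
  simp only [step]
  rw [Finset.sum_range_succ']
  simp only [Nat.cast_zero, zero_mul, zero_div, add_zero, Nat.add_sub_cancel]
  have step2 : ∀ l : ℕ, ((l:ℚ)+1) * (coeff n) (d⁄dX ℚ G * G^l) / (l+1).factorial
      = (coeff n) (d⁄dX ℚ G * G^l) / l.factorial := by
    intro l
    rw [Nat.factorial_succ]
    push_cast
    rw [mul_div_mul_left _ _ (by positivity : (l:ℚ)+1 ≠ 0)]
  push_cast
  simp only [step2]
  -- now LHS = ∑ l ∈ range (n+1), coeff n (dG * G^l) / l!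
  rw [coeff_mul]
  have expand : ∀ l : ℕ, (coeff n) (d⁄dX ℚ G * G^l) / l.factorial
      = ∑ p ∈ Finset.HasAntidiagonal.antidiagonal n, (coeff p.1 (d⁄dX ℚ G) * coeff p.2 (G^l)) / l.factorial := by
    intro l
    rw [coeff_mul, Finset.sum_div]
  simp only [expand]
  rw [Finset.sum_comm]
  refine Finset.sum_congr rfl fun p hp => ?_
  have hp2 : p.2 ≤ n := by have := Finset.HasAntidiagonal.mem_antidiagonal.mp hp; omega
  rw [show (coeff p.2) (expComp G)
      = ∑ k ∈ Finset.range (p.2+1), (coeff p.2) (G^k) / k.factorial from by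
    simp [expComp]]
  rw [Finset.mul_sum]
  rw [← Finset.sum_subset (Finset.range_subset_range.mpr (by omega : p.2 + 1 ≤ n + 1))]
  · exact Finset.sum_congr rfl fun k _ => by rw [mul_div_assoc]
  · intro k _ hk
    rw [coeff_pow_zero hG (by simp at hk ⊢; omega)]
    simp

end Aux

section Comb
open Finset


lemma eq_bot_of_heads {m : ℕ} (p : Finpartition (Finset.Icc 1 m : Finset ℕ))
    (hp : ∀ i, 1 ≤ i → i ≤ m → isHead p i) : p = ⊥ := by
  have key : ∀ B ∈ p.parts, ∀ x ∈ B, ∀ y ∈ B, x ≤ y := by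
    intro B hB x hx y hy
    have hxs : x ∈ Finset.Icc 1 m := p.le hB hx
    rw [Finset.mem_Icc] at hxs
    obtain ⟨Bx, hBx, hxBx, hmin⟩ := hp x hxs.1 hxs.2
    have hBe : Bx = B := p.eq_of_mem_parts hBx hB hxBx hx
    exact hmin y (hBe ▸ hy)
  have hsing : ∀ B ∈ p.parts, ∀ a ∈ B, B = {a} := by
    intro B hB a ha
    apply Finset.eq_singleton_iff_unique_mem.mpr
    exact ⟨ha, fun x hx => le_antisymm (key B hB x hx a ha) (key B hB a ha x hx)⟩
  apply Finpartition.ext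
  ext B
  rw [Finpartition.mem_bot_iff]
  constructor
  · intro hB
    obtain ⟨a, ha⟩ := p.nonempty_of_mem_parts hB
    exact ⟨a, p.le hB ha, (hsing B hB a ha).symm⟩
  · rintro ⟨a, ha, rfl⟩
    have h1 : a ∈ p.part a := p.mem_part ha
    have h2 := p.part_mem.2 ha
    have := hsing _ h2 a h1
    rw [← this]
    exact h2

lemma bot_heads {m n : ℕ} (h : ∀ i, 1 ≤ i → i ≤ m → i ∈ Finset.Icc 1 n) :
    ∀ i, 1 ≤ i → i ≤ m → isHead (⊥ : Finpartition (Finset.Icc 1 n : Finset ℕ)) i := by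
  intro i h1 h2
  refine ⟨{i}, Finpartition.mem_bot_iff.mpr ⟨i, h i h1 h2, rfl⟩, Finset.mem_singleton_self i, ?_⟩
  simp

lemma headCount_diag (m : ℕ) : headCount m m = 1 := by
  rw [headCount, Nat.card_eq_one_iff_unique]
  constructor
  · constructor
    rintro ⟨p, hp⟩ ⟨q, hq⟩
    exact Subtype.ext ((eq_bot_of_heads p hp).trans (eq_bot_of_heads q hq).symm)
  · exact ⟨⟨⊥, bot_heads (fun i h1 h2 => Finset.mem_Icc.mpr ⟨h1, h2⟩)⟩⟩

def shUp (m t : ℕ) : ℕ := if t ≤ m then t else t + 1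
def shDn (m t : ℕ) : ℕ := if t ≤ m then t else t - 1

lemma shUp_inj (m : ℕ) : Function.Injective (shUp m) := by
  intro a b
  unfold shUp
  split_ifs <;> omega

lemma shDn_shUp (m t : ℕ) : shDn m (shUp m t) = t := by
  unfold shUp shDn
  split_ifs <;> omega

lemma shUp_shDn (m : ℕ) {t : ℕ} (ht : t ≠ m + 1) : shUp m (shDn m t) = t := by
  unfold shUp shDn
  split_ifs <;> omega

lemma shUp_ne (m t : ℕ) : shUp m t ≠ m + 1 := by
  unfold shUp; split_ifs <;> omega

lemma le_shUp (m t : ℕ) : t ≤ shUp m t := by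
  unfold shUp; split_ifs <;> omega

lemma shUp_eq_self {m t : ℕ} (h : t ≤ m) : shUp m t = t := if_pos h

lemma shDn_eq_self {m t : ℕ} (h : t ≤ m) : shDn m t = t := if_pos h

lemma shUp_mem {m N t : ℕ} (ht : t ∈ Finset.Icc 1 N) : shUp m t ∈ Finset.Icc 1 (N+1) := by
  rw [Finset.mem_Icc] at *
  unfold shUp; split_ifs <;> omega

lemma shDn_mem {m N t : ℕ} (hmN : m ≤ N) (ht : t ∈ Finset.Icc 1 (N+1)) (hne : t ≠ m+1) :
    shDn m t ∈ Finset.Icc 1 N := by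
  rw [Finset.mem_Icc] at *
  unfold shDn; split_ifs <;> omega

/-- insert `m+1` into the image of `B`, if `i ∈ B`. -/
def insPart (m i : ℕ) (B : Finset ℕ) : Finset ℕ :=
  if i ∈ B then insert (m+1) (B.image (shUp m)) else B.image (shUp m)

def delPart (m : ℕ) (C : Finset ℕ) : Finset ℕ := (C.erase (m+1)).image (shDn m)

lemma not_mem_image_shUp (m : ℕ) (B : Finset ℕ) : m + 1 ∉ B.image (shUp m) := by
  intro h
  obtain ⟨t, _, ht⟩ := Finset.mem_image.mp h
  exact shUp_ne m t ht

lemma delPart_insPart (m i : ℕ) (B : Finset ℕ) : delPart m (insPart m i B) = B := by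
  unfold delPart insPart
  have him : ((B.image (shUp m)).image (shDn m)) = B := by
    rw [Finset.image_image]
    have : ∀ x ∈ B, (shDn m ∘ shUp m) x = id x := fun x _ => shDn_shUp m x
    rw [Finset.image_congr this, Finset.image_id]
  split_ifs with hi
  · rw [Finset.erase_insert (not_mem_image_shUp m B), him]
  · rw [Finset.erase_eq_of_notMem (not_mem_image_shUp m B), him]

lemma insPart_inj (m i : ℕ) : Function.Injective (insPart m i) :=
  Function.LeftInverse.injective (delPart_insPart m i)

variable {m N : ℕ}

lemma part_subset {s : Finset ℕ} (q : Finpartition s) {B : Finset ℕ} (hB : B ∈ q.parts) :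
    B ⊆ s := q.le hB

/-- inserting `m+1` into the block of `i`, after shifting all labels `> m` up by one. -/
def insFp (hmN : m ≤ N) (i : ℕ) (hi : i ∈ Finset.Icc 1 m)
    (q : Finpartition (Finset.Icc 1 N : Finset ℕ)) :
    Finpartition (Finset.Icc 1 (N+1) : Finset ℕ) where
  parts := q.parts.image (insPart m i)
  supIndep := by
    rw [Finset.supIndep_iff_pairwiseDisjoint]
    intro C hC C' hC' hne
    rw [Finset.mem_coe, Finset.mem_image] at hC hC'
    obtain ⟨B, hB, rfl⟩ := hC
    obtain ⟨B', hB', rfl⟩ := hC'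
    have hBB' : B ≠ B' := fun h => hne (by rw [h])
    have hd : Disjoint B B' := q.disjoint hB hB' hBB'
    have hdim : Disjoint (B.image (shUp m)) (B'.image (shUp m)) := by
      rw [Finset.disjoint_image (shUp_inj m)]
      exact hd
    rw [Function.onFun, id_eq, id_eq, Finset.disjoint_left]
    intro x hx hx'
    unfold insPart at hx hx'
    split_ifs at hx hx' with h1 h2 h2
    · exact Finset.disjoint_left.mp hd h1 h2
    · rcases Finset.mem_insert.mp hx with h | hx2
      · exact not_mem_image_shUp m B' (h ▸ hx')
      · exact Finset.disjoint_left.mp hdim hx2 hx'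
    · rcases Finset.mem_insert.mp hx' with h | hx2
      · exact not_mem_image_shUp m B (h ▸ hx)
      · exact Finset.disjoint_left.mp hdim hx hx2
    · exact Finset.disjoint_left.mp hdim hx hx'
  sup_parts := by
    have hiN : i ∈ Finset.Icc 1 N := by
      rw [Finset.mem_Icc] at hi ⊢; omega
    ext a
    rw [Finset.mem_sup]
    constructor
    · rintro ⟨C, hC, haC⟩
      obtain ⟨B, hB, rfl⟩ := Finset.mem_image.mp hC
      unfold insPart at haC
      have himage : ∀ x ∈ B.image (shUp m), x ∈ Finset.Icc 1 (N+1) := by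
        intro x hx
        obtain ⟨t, ht, rfl⟩ := Finset.mem_image.mp hx
        exact shUp_mem (part_subset q hB ht)
      split_ifs at haC with h1
      · rcases Finset.mem_insert.mp haC with rfl | h
        · rw [Finset.mem_Icc]; omega
        · exact himage a h
      · exact himage a haC
    · intro ha
      by_cases ham : a = m + 1
      · refine ⟨insPart m i (q.part i), Finset.mem_image_of_mem _ (q.part_mem.2 hiN), ?_⟩
        unfold insPart
        rw [if_pos (q.mem_part hiN)]
        exact ham ▸ Finset.mem_insert_self _ _
      · set t := shDn m a with hta
        have htN : t ∈ Finset.Icc 1 N := shDn_mem hmN ha ham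
        have hat : a = shUp m t := (shUp_shDn m ham).symm
        refine ⟨insPart m i (q.part t), Finset.mem_image_of_mem _ (q.part_mem.2 htN), ?_⟩
        have : a ∈ (q.part t).image (shUp m) :=
          hat ▸ Finset.mem_image_of_mem _ (q.mem_part htN)
        unfold insPart
        split_ifs with h1
        · exact Finset.mem_insert_of_mem this
        · exact this
  bot_notMem := by
    intro h
    obtain ⟨B, hB, hBe⟩ := Finset.mem_image.mp h
    obtain ⟨a, ha⟩ := q.nonempty_of_mem_parts hB
    have : shUp m a ∈ insPart m i B := by
      unfold insPart
      split_ifs with h1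
      · exact Finset.mem_insert_of_mem (Finset.mem_image_of_mem _ ha)
      · exact Finset.mem_image_of_mem _ ha
    rw [hBe] at this
    simp at this

lemma mem_insPart_self {i : ℕ} (hi : i ≤ m) {B : Finset ℕ} (hiB : i ∈ B) :
    i ∈ insPart m i B := by
  have h : i ∈ B.image (shUp m) := by
    rw [← shUp_eq_self hi]
    exact Finset.mem_image_of_mem _ hiB
  unfold insPart
  rw [if_pos hiB]
  exact Finset.mem_insert_of_mem h

lemma le_of_mem_insPart {i j : ℕ} (hj : j ≤ m) {B : Finset ℕ} (hmin : ∀ t ∈ B, j ≤ t)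
    {t : ℕ} (ht : t ∈ insPart m i B) : j ≤ t := by
  unfold insPart at ht
  have himg : ∀ x ∈ B.image (shUp m), j ≤ x := by
    intro x hx
    obtain ⟨s, hs, rfl⟩ := Finset.mem_image.mp hx
    exact le_trans (hmin s hs) (le_shUp m s)
  split_ifs at ht with h1
  · rcases Finset.mem_insert.mp ht with rfl | h
    · omega
    · exact himg t h
  · exact himg t ht

lemma insFp_heads (hmN : m ≤ N) (i : ℕ) (hi : i ∈ Finset.Icc 1 m)
    (q : Finpartition (Finset.Icc 1 N : Finset ℕ))
    (hq : ∀ j, 1 ≤ j → j ≤ m → isHead q j) :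
    ∀ j, 1 ≤ j → j ≤ m → isHead (insFp hmN i hi q) j := by
  intro j hj1 hj2
  obtain ⟨B, hB, hjB, hmin⟩ := hq j hj1 hj2
  refine ⟨insPart m i B, Finset.mem_image_of_mem _ hB, ?_, ?_⟩
  · have h : j ∈ B.image (shUp m) := by
      rw [← shUp_eq_self hj2]
      exact Finset.mem_image_of_mem _ hjB
    unfold insPart
    split_ifs
    · exact Finset.mem_insert_of_mem h
    · exact h
  · exact fun t ht => le_of_mem_insPart hj2 hmin ht

lemma insFp_not_head (hmN : m ≤ N) (i : ℕ) (hi : i ∈ Finset.Icc 1 m)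
    (q : Finpartition (Finset.Icc 1 N : Finset ℕ)) :
    ¬ isHead (insFp hmN i hi q) (m+1) := by
  rintro ⟨C, hC, hmC, hmin⟩
  obtain ⟨B, hB, rfl⟩ := Finset.mem_image.mp hC
  rw [Finset.mem_Icc] at hi
  unfold insPart at hmC
  split_ifs at hmC with h1
  · have : i ∈ insPart m i B := mem_insPart_self hi.2 h1
    have := hmin i this
    omega
  · exact not_mem_image_shUp m B hmC

lemma insFp_part_min (hmN : m ≤ N) (i : ℕ) (hi : i ∈ Finset.Icc 1 m)
    (q : Finpartition (Finset.Icc 1 N : Finset ℕ))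
    (hq : ∀ j, 1 ≤ j → j ≤ m → isHead q j) :
    i ∈ (insFp hmN i hi q).part (m+1) ∧ ∀ t ∈ (insFp hmN i hi q).part (m+1), i ≤ t := by
  obtain ⟨hi1, hi2⟩ := Finset.mem_Icc.mp hi
  obtain ⟨B, hB, hiB, hmin⟩ := hq i hi1 hi2
  have hPB : insPart m i B ∈ (insFp hmN i hi q).parts := Finset.mem_image_of_mem _ hB
  have hm1mem : m+1 ∈ insPart m i B := by
    unfold insPart
    rw [if_pos hiB]
    exact Finset.mem_insert_self _ _
  have hpart : (insFp hmN i hi q).part (m+1) = insPart m i B :=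
    Finpartition.part_eq_of_mem _ hPB hm1mem
  rw [hpart]
  exact ⟨mem_insPart_self hi2 hiB, fun t ht => le_of_mem_insPart hi2 hmin ht⟩

/-- deleting `m+1` and shifting all labels `> m+1` down by one. -/
def delFp (hmN : m ≤ N) (P : Finpartition (Finset.Icc 1 (N+1) : Finset ℕ))
    (hP : ¬ isHead P (m+1)) : Finpartition (Finset.Icc 1 N : Finset ℕ) where
  parts := P.parts.image (delPart m)
  supIndep := by
    rw [Finset.supIndep_iff_pairwiseDisjoint]
    intro C hC C' hC' hne
    rw [Finset.mem_coe, Finset.mem_image] at hC hC'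
    obtain ⟨B, hB, rfl⟩ := hC
    obtain ⟨B', hB', rfl⟩ := hC'
    have hBB' : B ≠ B' := fun h => hne (by rw [h])
    have hd : Disjoint B B' := P.disjoint hB hB' hBB'
    rw [Function.onFun, id_eq, id_eq, Finset.disjoint_left]
    intro x hx hx'
    obtain ⟨a, ha, rfl⟩ := Finset.mem_image.mp hx
    obtain ⟨b, hb, hba⟩ := Finset.mem_image.mp hx'
    rw [Finset.mem_erase] at ha hb
    have : b = a := by
      rw [← shUp_shDn m hb.1, hba, shUp_shDn m ha.1]
    exact Finset.disjoint_left.mp hd ha.2 (this ▸ hb.2)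
  sup_parts := by
    ext a
    rw [Finset.mem_sup]
    constructor
    · rintro ⟨C, hC, haC⟩
      obtain ⟨B, hB, rfl⟩ := Finset.mem_image.mp hC
      obtain ⟨t, ht, rfl⟩ := Finset.mem_image.mp haC
      rw [Finset.mem_erase] at ht
      exact shDn_mem hmN (part_subset P hB ht.2) ht.1
    · intro ha
      have htm : shUp m a ∈ Finset.Icc 1 (N+1) := shUp_mem ha
      refine ⟨delPart m (P.part (shUp m a)), Finset.mem_image_of_mem _ (P.part_mem.2 htm), ?_⟩
      have hmem : shDn m (shUp m a) ∈ delPart m (P.part (shUp m a)) :=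
        Finset.mem_image_of_mem _ (Finset.mem_erase.mpr ⟨shUp_ne m a, P.mem_part htm⟩)
      rwa [shDn_shUp] at hmem
  bot_notMem := by
    intro h
    obtain ⟨B, hB, hBe⟩ := Finset.mem_image.mp h
    rw [delPart, Finset.bot_eq_empty, Finset.image_eq_empty] at hBe
    rcases (Finset.erase_eq_empty_iff _ _).mp hBe with h1 | h1
    · exact (P.nonempty_of_mem_parts hB).ne_empty h1
    · refine hP ⟨B, hB, ?_, ?_⟩
      · rw [h1]; exact Finset.mem_singleton_self _
      · intro t ht
        rw [h1, Finset.mem_singleton] at ht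
        omega

lemma le_shDn_of_le {j s : ℕ} (hj : j ≤ m) (hjs : j ≤ s) : j ≤ shDn m s := by
  unfold shDn; split_ifs <;> omega

lemma delFp_heads (hmN : m ≤ N) (P : Finpartition (Finset.Icc 1 (N+1) : Finset ℕ))
    (hP : ¬ isHead P (m+1)) (hH : ∀ j, 1 ≤ j → j ≤ m → isHead P j) :
    ∀ j, 1 ≤ j → j ≤ m → isHead (delFp hmN P hP) j := by
  intro j hj1 hj2
  obtain ⟨B, hB, hjB, hmin⟩ := hH j hj1 hj2
  refine ⟨delPart m B, Finset.mem_image_of_mem _ hB, ?_, ?_⟩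
  · have : j ∈ B.erase (m+1) := Finset.mem_erase.mpr ⟨by omega, hjB⟩
    rw [← shDn_eq_self hj2]
    exact Finset.mem_image_of_mem _ this
  · intro t ht
    obtain ⟨s, hs, rfl⟩ := Finset.mem_image.mp ht
    rw [Finset.mem_erase] at hs
    exact le_shDn_of_le hj2 (hmin s hs.2)

lemma reconstruct (hmN : m ≤ N) (P : Finpartition (Finset.Icc 1 (N+1) : Finset ℕ))
    {i : ℕ} (hiC : i ∈ P.part (m+1)) (him : i ≤ m) {B : Finset ℕ} (hB : B ∈ P.parts) :
    insPart m i (delPart m B) = B := by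
  have hm1Icc : m+1 ∈ Finset.Icc 1 (N+1) := Finset.mem_Icc.mpr (by omega)
  have hCmem : P.part (m+1) ∈ P.parts := P.part_mem.2 hm1Icc
  have hiB_iff : i ∈ delPart m B ↔ m+1 ∈ B := by
    constructor
    · intro h
      obtain ⟨t, ht, hti⟩ := Finset.mem_image.mp h
      rw [Finset.mem_erase] at ht
      have hti' : t = i := by rw [← shUp_shDn m ht.1, hti, shUp_eq_self him]
      by_contra hmB
      have hne : B ≠ P.part (m+1) := by
        rintro rfl; exact hmB (P.mem_part hm1Icc)
      exact Finset.disjoint_left.mp (P.disjoint hB hCmem hne) (hti' ▸ ht.2) hiC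
    · intro hmB
      have hBC : B = P.part (m+1) := P.eq_of_mem_parts hB hCmem hmB (P.mem_part hm1Icc)
      have hie : i ∈ B.erase (m+1) := Finset.mem_erase.mpr ⟨by omega, hBC ▸ hiC⟩
      rw [delPart, ← shDn_eq_self him]
      exact Finset.mem_image_of_mem _ hie
  have himg : (delPart m B).image (shUp m) = B.erase (m+1) := by
    rw [delPart, Finset.image_image]
    have hcong : ∀ x ∈ B.erase (m+1), (shUp m ∘ shDn m) x = id x := fun x hx =>
      shUp_shDn m (Finset.mem_erase.mp hx).1
    rw [Finset.image_congr hcong, Finset.image_id]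
  unfold insPart
  by_cases hmB : m+1 ∈ B
  · rw [if_pos (hiB_iff.mpr hmB), himg, Finset.insert_erase hmB]
  · rw [if_neg (fun h => hmB (hiB_iff.mp h)), himg, Finset.erase_eq_of_notMem hmB]

lemma card_split {α : Type*} [Finite α] (P Q : α → Prop) :
    Nat.card {x // P x} = Nat.card {x // P x ∧ Q x} + Nat.card {x // P x ∧ ¬ Q x} := by
  classical
  have e : {x // P x} ≃ {x // P x ∧ Q x} ⊕ {x // P x ∧ ¬ Q x} :=
    (Equiv.sumCompl fun y : {x // P x} => Q y.1).symm.trans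
      (Equiv.sumCongr (Equiv.subtypeSubtypeEquivSubtypeInter P Q)
        (Equiv.subtypeSubtypeEquivSubtypeInter P fun x => ¬ Q x))
  rw [Nat.card_congr e, Nat.card_sum]

lemma card_second (hmN : m ≤ N) :
    Nat.card {P : Finpartition (Finset.Icc 1 (N+1) : Finset ℕ) //
        (∀ j, 1 ≤ j → j ≤ m → isHead P j) ∧ ¬ isHead P (m+1)}
      = m * headCount m N := by
  classical
  set D := {i : ℕ // i ∈ Finset.Icc 1 m} ×
    {q : Finpartition (Finset.Icc 1 N : Finset ℕ) // ∀ j, 1 ≤ j → j ≤ m → isHead q j} with hD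
  let Φ : D → {P : Finpartition (Finset.Icc 1 (N+1) : Finset ℕ) //
      (∀ j, 1 ≤ j → j ≤ m → isHead P j) ∧ ¬ isHead P (m+1)} := fun x =>
    ⟨insFp hmN x.1.1 x.1.2 x.2.1,
      insFp_heads hmN x.1.1 x.1.2 x.2.1 x.2.2, insFp_not_head hmN x.1.1 x.1.2 x.2.1⟩
  have hbij : Function.Bijective Φ := by
    constructor
    · intro x y h
      have h' : insFp hmN x.1.1 x.1.2 x.2.1 = insFp hmN y.1.1 y.1.2 y.2.1 :=
        congrArg Subtype.val h
      obtain ⟨hx1, hx2⟩ := insFp_part_min hmN x.1.1 x.1.2 x.2.1 x.2.2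
      obtain ⟨hy1, hy2⟩ := insFp_part_min hmN y.1.1 y.1.2 y.2.1 y.2.2
      rw [h'] at hx1 hx2
      have hieq : x.1.1 = y.1.1 := le_antisymm (hx2 _ hy1) (hy2 _ hx1)
      have hparts' : x.2.1.parts.image (insPart m x.1.1)
          = y.2.1.parts.image (insPart m y.1.1) := congrArg Finpartition.parts h'
      rw [← hieq] at hparts'
      have hq : x.2.1 = y.2.1 :=
        Finpartition.ext (Finset.image_injective (insPart_inj m x.1.1) hparts')
      exact Prod.ext (Subtype.ext hieq) (Subtype.ext hq)
    · rintro ⟨P, hH, hNh⟩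
      have hm1Icc : m+1 ∈ Finset.Icc 1 (N+1) := Finset.mem_Icc.mpr (by omega)
      have hCne : (P.part (m+1)).Nonempty := ⟨m+1, P.mem_part hm1Icc⟩
      set i := (P.part (m+1)).min' hCne with hidef
      have hiC : i ∈ P.part (m+1) := Finset.min'_mem _ _
      have hi1 : 1 ≤ i := by
        have := Finset.mem_Icc.mp (part_subset P (P.part_mem.2 hm1Icc) hiC)
        omega
      have him : i ≤ m := by
        by_contra hc
        refine hNh ⟨P.part (m+1), P.part_mem.2 hm1Icc, P.mem_part hm1Icc, fun t ht => ?_⟩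
        have h1 := Finset.min'_le _ t ht
        omega
      have hi : i ∈ Finset.Icc 1 m := Finset.mem_Icc.mpr ⟨hi1, him⟩
      refine ⟨⟨⟨i, hi⟩, ⟨delFp hmN P hNh, delFp_heads hmN P hNh hH⟩⟩, ?_⟩
      apply Subtype.ext
      apply Finpartition.ext
      show ((delFp hmN P hNh).parts).image (insPart m i) = P.parts
      show (P.parts.image (delPart m)).image (insPart m i) = P.parts
      rw [Finset.image_image]
      have hcong : ∀ B ∈ P.parts, (insPart m i ∘ delPart m) B = id B := fun B hB =>
        reconstruct hmN P hiC him hB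
      rw [Finset.image_congr hcong, Finset.image_id]
  have hcard := Nat.card_eq_of_bijective Φ hbij
  rw [← hcard, hD, Nat.card_prod]
  congr 1
  rw [Nat.card_eq_fintype_card, Fintype.card_coe, Nat.card_Icc]
  omega

lemma headCount_rec (m n : ℕ) :
    headCount m (m + (n+1)) = m * headCount m (m+n) + headCount (m+1) (m+1+n) := by
  classical
  have hmN : m ≤ m + n := Nat.le_add_right m n
  have hsplit := card_split
    (fun p : Finpartition (Finset.Icc 1 (m+n+1) : Finset ℕ) =>
      ∀ i, 1 ≤ i → i ≤ m → isHead p i)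
    (fun p => isHead p (m+1))
  have h1 : Nat.card {p : Finpartition (Finset.Icc 1 (m+n+1) : Finset ℕ) //
      (∀ i, 1 ≤ i → i ≤ m → isHead p i) ∧ isHead p (m+1)}
      = headCount (m+1) (m+n+1) := by
    apply Nat.card_congr
    apply Equiv.subtypeEquivRight
    intro p
    constructor
    · rintro ⟨h, hm1⟩ i hi1 hi2
      rcases Nat.lt_or_ge i (m+1) with h' | h'
      · exact h i hi1 (by omega)
      · have : i = m+1 := by omega
        exact this ▸ hm1
    · intro h
      exact ⟨fun i hi1 hi2 => h i hi1 (by omega), h (m+1) (by omega) le_rfl⟩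
  have h2 := card_second (m := m) (N := m + n) hmN
  have hform : headCount m (m + (n+1)) = Nat.card
      {p : Finpartition (Finset.Icc 1 (m+n+1) : Finset ℕ) //
        ∀ i, 1 ≤ i → i ≤ m → isHead p i} := rfl
  have hidx : m+1+n = m+n+1 := by omega
  rw [hform, hsplit, h1, h2, hidx]
  omega

end Comb

section Asm
open PowerSeries
noncomputable def Egf (c : ℚ) : ℚ⟦X⟧ := expComp (c • X + exp ℚ - 1)

lemma deriv_Egf (c : ℚ) : d⁄dX ℚ (Egf c) = (C c + exp ℚ) * Egf c := by
  have h0 : constantCoeff (c • X + exp ℚ - 1) = 0 := by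
    simp [constantCoeff_exp]
  rw [Egf, expComp_deriv h0]
  congr 1
  rw [map_sub, map_add, Derivation.map_smul, derivative_X, derivative_exp',
    Derivation.map_one_eq_zero, sub_zero, smul_eq_C_mul, mul_one]

lemma Egf_succ (c : ℚ) : Egf (c + 1) = exp ℚ * Egf c := by
  refine ode_unique (H := C (c+1) + exp ℚ) (deriv_Egf (c+1)) ?_ ?_
  · rw [Derivation.leibniz, smul_eq_mul, smul_eq_mul, deriv_Egf, derivative_exp', map_add,
      map_one]
    ring
  · rw [Egf, Egf, expComp_const, map_mul, expComp_const, constantCoeff_exp, mul_one]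

lemma key : ∀ n m : ℕ, coeff n (Egf (m:ℚ)) = (headCount m (m+n) : ℚ) / (n.factorial : ℚ) := by
  intro n
  induction n with
  | zero =>
    intro m
    rw [coeff_zero_eq_constantCoeff_apply, Egf, expComp_const, Nat.add_zero, headCount_diag]
    norm_num
  | succ n ih =>
    intro m
    have hd := deriv_Egf (m:ℚ)
    have h1 : coeff n (d⁄dX ℚ (Egf (m:ℚ))) = coeff (n+1) (Egf (m:ℚ)) * (n+1) :=
      coeff_derivative _ _
    rw [hd, add_mul, map_add, coeff_C_mul] at h1
    have h2 : exp ℚ * Egf (m:ℚ) = Egf ((m+1 : ℕ) : ℚ) := by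
      push_cast
      rw [Egf_succ]
    rw [h2, ih, ih (m+1)] at h1
    have h3 : (m:ℚ) * ((headCount m (m+n) : ℚ) / n.factorial)
        + (headCount (m+1) ((m+1)+n) : ℚ) / n.factorial
        = (headCount m (m+(n+1)) : ℚ) / n.factorial := by
      rw [headCount_rec m n]
      push_cast
      ring
    rw [h3] at h1
    have h4 : ((n:ℚ)+1) ≠ 0 := by positivity
    rw [Nat.factorial_succ]
    push_cast
    rw [eq_div_iff (by positivity)]
    have h5 := h1.symm
    rw [eq_div_iff (by positivity : (n.factorial : ℚ) ≠ 0)] at h5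
    rw [← mul_assoc]
    exact h5


end Asm

/-- `Σ_{n≥0} p(m, m+n) xⁿ/n! = exp(m·x + eˣ - 1)`. -/
theorem headCount_egf (m : ℕ) :
    (PowerSeries.mk fun n => (headCount m (m + n) : ℚ) / (n.factorial : ℚ)) =
      expComp ((m : ℚ) • PowerSeries.X + PowerSeries.exp ℚ - 1) := by
  ext n
  rw [PowerSeries.coeff_mk, ← Egf, key n m]
end

section
/- For fixed m ≥ 0 and n ≥ 0, p(m, m+n) = Σ_{i=0}^{n} C(n,i)·m^i·B(n-i), where B denotes the Bell numbers and p(m,N) is the number of set partitions of [N] in which each of 1,...,m is the minimum of its block. -/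
section Helpers
open Finset

instance finpartitionFinite (s : Finset ℕ) : Finite (Finpartition s) := by
  apply Finite.of_injective
    (fun p : Finpartition s => (⟨p.parts, by
      rw [Finset.mem_powerset]
      intro B hB
      exact Finset.mem_powerset.2 (p.le hB)⟩ : ↥(s.powerset.powerset)))
  intro p q h
  exact Finpartition.ext (by simpa using congrArg Subtype.val h)

def mapFP (σ : ℕ → ℕ) {s : Finset ℕ} (hσ : Set.InjOn σ s) (p : Finpartition s) :
    Finpartition (s.image σ) where
  parts := p.parts.image (Finset.image σ)
  supIndep := by
    rw [Finset.supIndep_iff_pairwiseDisjoint]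
    rintro B₁ hB₁ B₂ hB₂ hne
    simp only [coe_image, Set.mem_image, mem_coe] at hB₁ hB₂
    obtain ⟨A₁, hA₁, rfl⟩ := hB₁
    obtain ⟨A₂, hA₂, rfl⟩ := hB₂
    have hA : A₁ ≠ A₂ := fun h => hne (by rw [h])
    have hd : Disjoint A₁ A₂ :=
      (Finset.supIndep_iff_pairwiseDisjoint.1 p.supIndep) hA₁ hA₂ hA
    simp only [Function.onFun, id] at hd ⊢
    rw [Finset.disjoint_left] at hd ⊢
    rintro a ha₁ ha₂
    simp only [Finset.mem_image] at ha₁ ha₂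
    obtain ⟨x, hx, rfl⟩ := ha₁
    obtain ⟨y, hy, hxy⟩ := ha₂
    have : y = x := hσ (p.le hA₂ hy) (p.le hA₁ hx) hxy
    exact hd hx (this ▸ hy)
  sup_parts := by
    ext a
    rw [Finset.sup_image]
    simp only [Function.comp_def, id_eq, Finset.mem_sup, Finset.mem_image]
    constructor
    · rintro ⟨A, hA, x, hx, rfl⟩
      exact ⟨x, by rw [← p.sup_parts]; exact Finset.mem_sup.2 ⟨A, hA, hx⟩, rfl⟩
    · rintro ⟨x, hx, rfl⟩
      rw [← p.sup_parts] at hx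
      obtain ⟨A, hA, hx⟩ := Finset.mem_sup.1 hx
      exact ⟨A, hA, x, hx, rfl⟩
  bot_notMem := by
    simp only [Finset.bot_eq_empty, Finset.mem_image]
    rintro ⟨A, hA, h⟩
    obtain ⟨x, hx⟩ := p.nonempty_of_mem_parts hA
    exact Finset.notMem_empty (σ x) (h ▸ Finset.mem_image_of_mem σ hx)

lemma mapFP_injective (σ : ℕ → ℕ) {s : Finset ℕ} (hσ : Set.InjOn σ s) :
    Function.Injective (mapFP σ hσ) := by
  intro p q h
  have hparts : p.parts.image (Finset.image σ) = q.parts.image (Finset.image σ) :=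
    congrArg Finpartition.parts h
  have key : ∀ (A B : Finset ℕ), A ⊆ s → B ⊆ s → A.image σ = B.image σ → A = B := by
    intro A B hA hB hAB
    ext x
    constructor
    · intro hx
      have : σ x ∈ B.image σ := hAB ▸ Finset.mem_image_of_mem σ hx
      obtain ⟨y, hy, hxy⟩ := Finset.mem_image.1 this
      exact (hσ (hB hy) (hA hx) hxy) ▸ hy
    · intro hx
      have : σ x ∈ A.image σ := hAB ▸ Finset.mem_image_of_mem σ hx
      obtain ⟨y, hy, hxy⟩ := Finset.mem_image.1 this
      exact (hσ (hA hy) (hB hx) hxy) ▸ hy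
  apply Finpartition.ext
  ext A
  constructor
  · intro hA
    have : A.image σ ∈ q.parts.image (Finset.image σ) := hparts ▸ Finset.mem_image_of_mem _ hA
    obtain ⟨B, hB, hAB⟩ := Finset.mem_image.1 this
    exact key B A (q.le hB) (p.le hA) hAB ▸ hB
  · intro hA
    have : A.image σ ∈ p.parts.image (Finset.image σ) := hparts ▸ Finset.mem_image_of_mem _ hA
    obtain ⟨B, hB, hAB⟩ := Finset.mem_image.1 this
    exact key B A (p.le hB) (q.le hA) hAB ▸ hB

lemma card_fp_le {s t : Finset ℕ} (σ : ℕ → ℕ) (hσ : Set.InjOn σ s) (ht : s.image σ = t) :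
    Nat.card (Finpartition s) ≤ Nat.card (Finpartition t) := by
  subst ht
  exact Nat.card_le_card_of_injective _ (mapFP_injective σ hσ)

lemma card_fp_eq_bell (s : Finset ℕ) : Nat.card (Finpartition s) = bell s.card := by
  set k := s.card with hk
  let iso := s.orderIsoOfFin hk.symm
  set σ : ℕ → ℕ := fun x => if hx : x ∈ s then ((iso.symm ⟨x, hx⟩ : Fin k) : ℕ) + 1 else 0
    with hσdef
  set τ : ℕ → ℕ := fun y => if hy : y - 1 < k then ((iso ⟨y - 1, hy⟩ : ℕ)) else 0 with hτdef
  have hσs : ∀ x (hx : x ∈ s), σ x = ((iso.symm ⟨x, hx⟩ : Fin k) : ℕ) + 1 := by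
    intro x hx; simp only [hσdef, dif_pos hx]
  have hτs : ∀ y (hy : y - 1 < k), τ y = ((iso ⟨y - 1, hy⟩ : ℕ)) := by
    intro y hy; simp only [hτdef, dif_pos hy]
  have hmem : ∀ j : Fin k, ((iso j : ℕ)) ∈ s := fun j => (iso j).2
  have hinjσ : Set.InjOn σ s := by
    intro x hx y hy hxy
    rw [hσs x hx, hσs y hy] at hxy
    have : iso.symm ⟨x, hx⟩ = iso.symm ⟨y, hy⟩ := Fin.ext (by omega)
    have := iso.symm.injective this
    exact congrArg Subtype.val this
  have himgσ : s.image σ = Finset.Icc 1 k := by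
    ext y
    simp only [Finset.mem_image, Finset.mem_Icc]
    constructor
    · rintro ⟨x, hx, rfl⟩
      rw [hσs x hx]
      have := (iso.symm ⟨x, hx⟩).2
      omega
    · rintro ⟨h1, h2⟩
      have hy : y - 1 < k := by omega
      refine ⟨(iso ⟨y - 1, hy⟩ : ℕ), hmem _, ?_⟩
      rw [hσs _ (hmem _)]
      have h0 : (⟨(iso ⟨y - 1, hy⟩ : ℕ), hmem _⟩ : {x // x ∈ s}) = iso ⟨y - 1, hy⟩ := rfl
      rw [h0, iso.symm_apply_apply]
      show y - 1 + 1 = y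
      omega
  have hinjτ : Set.InjOn τ (Finset.Icc 1 k) := by
    intro x hx y hy hxy
    simp only [Finset.coe_Icc, Set.mem_Icc] at hx hy
    have hx' : x - 1 < k := by omega
    have hy' : y - 1 < k := by omega
    rw [hτs x hx', hτs y hy'] at hxy
    have : (⟨x - 1, hx'⟩ : Fin k) = ⟨y - 1, hy'⟩ :=
      iso.injective (Subtype.ext hxy)
    have := congrArg Fin.val this
    simp only [Fin.mk.injEq] at this; omega
  have himgτ : (Finset.Icc 1 k).image τ = s := by
    ext x
    simp only [Finset.mem_image, Finset.mem_Icc]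
    constructor
    · rintro ⟨y, ⟨h1, h2⟩, rfl⟩
      have hy : y - 1 < k := by omega
      rw [hτs y hy]; exact hmem _
    · intro hx
      have hv := (iso.symm ⟨x, hx⟩).2
      refine ⟨((iso.symm ⟨x, hx⟩ : Fin k) : ℕ) + 1, by omega, ?_⟩
      have h' : ((iso.symm ⟨x, hx⟩ : Fin k) : ℕ) + 1 - 1 < k := by omega
      rw [hτs _ h']
      have : (⟨((iso.symm ⟨x, hx⟩ : Fin k) : ℕ) + 1 - 1, h'⟩ : Fin k) = iso.symm ⟨x, hx⟩ :=
        Fin.ext (by simp)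
      rw [this, iso.apply_symm_apply]
  exact le_antisymm (card_fp_le σ hinjσ himgσ) (card_fp_le τ hinjτ himgτ)


section Defs

abbrev TT (m n : ℕ) : Finset ℕ := Finset.Icc (m + 1) (m + n)

def DD (m n : ℕ) : Type :=
  Σ A : {A : Finset ℕ // A ∈ (TT m n).powerset},
    ({x // x ∈ A.1} → Fin m) × Finpartition (TT m n \ A.1)

def blk {m : ℕ} (A : Finset ℕ) (f : {x // x ∈ A} → Fin m) (j : ℕ) : Finset ℕ :=
  insert j ((A.attach.filter (fun x => (f x : ℕ) + 1 = j)).image Subtype.val)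

lemma mem_blk {m : ℕ} {A : Finset ℕ} {f : {x // x ∈ A} → Fin m} {j x : ℕ} :
    x ∈ blk A f j ↔ x = j ∨ ∃ hx : x ∈ A, (f ⟨x, hx⟩ : ℕ) + 1 = j := by
  simp [blk]

end Defs

section Bwd

variable {m n : ℕ}

def bwd (d : DD m n) : Finpartition (Finset.Icc 1 (m + n) : Finset ℕ) where
  parts := d.2.2.parts ∪ (Finset.Icc 1 m).image (blk d.1.1 d.2.1)
  supIndep := by
    obtain ⟨⟨A, hA⟩, f, q⟩ := d
    rw [Finset.mem_powerset] at hA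
    rw [Finset.supIndep_iff_pairwiseDisjoint]
    intro B₁ hB₁ B₂ hB₂ hne
    simp only [coe_union, coe_image, Set.mem_union, mem_coe, Set.mem_image] at hB₁ hB₂
    have hq : ∀ B ∈ q.parts, ∀ x ∈ B, m < x ∧ x ∉ A := by
      intro B hB x hx
      have := q.le hB hx
      rw [Finset.mem_sdiff, Finset.mem_Icc] at this
      exact ⟨by omega, this.2⟩
    have hblk : ∀ j ∈ Finset.Icc 1 m, ∀ x ∈ blk A f j, x = j ∨ (x ∈ A ∧ m < x) := by
      intro j hj x hx
      rcases mem_blk.1 hx with h | ⟨hxA, _⟩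
      · exact Or.inl h
      · refine Or.inr ⟨hxA, ?_⟩
        have := hA hxA
        rw [Finset.mem_Icc] at this
        omega
    simp only [Function.onFun, id]
    rw [Finset.disjoint_left]
    intro a ha₁ ha₂
    rcases hB₁ with hB₁ | ⟨j₁, hj₁, rfl⟩ <;> rcases hB₂ with hB₂ | ⟨j₂, hj₂, rfl⟩
    · exact Finset.disjoint_left.1
        ((Finset.supIndep_iff_pairwiseDisjoint.1 q.supIndep) hB₁ hB₂ hne) ha₁ ha₂
    · rcases hblk j₂ hj₂ a ha₂ with rfl | ⟨haA, _⟩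
      · have := (hq _ hB₁ _ ha₁).1
        rw [Finset.mem_Icc] at hj₂; omega
      · exact (hq _ hB₁ _ ha₁).2 haA
    · rcases hblk j₁ hj₁ a ha₁ with rfl | ⟨haA, _⟩
      · have := (hq _ hB₂ _ ha₂).1
        rw [Finset.mem_Icc] at hj₁; omega
      · exact (hq _ hB₂ _ ha₂).2 haA
    · have hjne : j₁ ≠ j₂ := fun h => hne (by rw [h])
      rw [Finset.mem_Icc] at hj₁ hj₂
      rcases mem_blk.1 ha₁ with rfl | ⟨hxA, he₁⟩
      · rcases mem_blk.1 ha₂ with h | ⟨hxA, _⟩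
        · exact hjne h
        · have := hA hxA; rw [Finset.mem_Icc] at this; omega
      · rcases mem_blk.1 ha₂ with rfl | ⟨hxA', he₂⟩
        · have := hA hxA; rw [Finset.mem_Icc] at this; omega
        · exact hjne (by omega)
  sup_parts := by
    obtain ⟨⟨A, hA⟩, f, q⟩ := d
    rw [Finset.mem_powerset] at hA
    ext x
    rw [Finset.mem_sup]
    simp only [Finset.mem_union, Finset.mem_image, Finset.mem_Icc]
    constructor
    · rintro ⟨B, hB | ⟨j, hj, rfl⟩, hx⟩
      · have := q.le hB hx
        rw [Finset.mem_sdiff, Finset.mem_Icc] at this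
        omega
      · rcases mem_blk.1 hx with rfl | ⟨hxA, _⟩
        · omega
        · have := hA hxA; rw [Finset.mem_Icc] at this; omega
    · intro hx
      by_cases hxm : x ≤ m
      · exact ⟨blk A f x, Or.inr ⟨x, ⟨hx.1, hxm⟩, rfl⟩, mem_blk.2 (Or.inl rfl)⟩
      · by_cases hxA : x ∈ A
        · refine ⟨blk A f ((f ⟨x, hxA⟩ : ℕ) + 1), Or.inr ⟨_, ?_, rfl⟩,
            mem_blk.2 (Or.inr ⟨hxA, rfl⟩)⟩
          have := (f ⟨x, hxA⟩).2
          constructor <;> omega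
        · have hx' : x ∈ TT m n \ A := by
            rw [Finset.mem_sdiff, Finset.mem_Icc]
            exact ⟨⟨by omega, hx.2⟩, hxA⟩
          rw [← q.sup_parts, Finset.mem_sup] at hx'
          obtain ⟨B, hB, hxB⟩ := hx'
          exact ⟨B, Or.inl hB, hxB⟩
  bot_notMem := by
    obtain ⟨⟨A, hA⟩, f, q⟩ := d
    simp only [Finset.bot_eq_empty, Finset.mem_union, Finset.mem_image]
    rintro (h | ⟨j, hj, h⟩)
    · exact q.bot_notMem h
    · have : j ∈ blk A f j := mem_blk.2 (Or.inl rfl)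
      rw [h] at this
      exact Finset.notMem_empty j this

lemma bwd_parts (d : DD m n) :
    (bwd d).parts = d.2.2.parts ∪ (Finset.Icc 1 m).image (blk d.1.1 d.2.1) := rfl

lemma bwd_heads (d : DD m n) : ∀ i, 1 ≤ i → i ≤ m →
    ∃ B ∈ (bwd d).parts, i ∈ B ∧ ∀ t ∈ B, i ≤ t := by
  intro i h1 h2
  obtain ⟨⟨A, hA⟩, f, q⟩ := d
  rw [Finset.mem_powerset] at hA
  refine ⟨blk A f i, ?_, mem_blk.2 (Or.inl rfl), ?_⟩
  · exact Finset.mem_union_right _ (Finset.mem_image_of_mem _ (Finset.mem_Icc.2 ⟨h1, h2⟩))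
  · intro t ht
    rcases mem_blk.1 ht with rfl | ⟨htA, _⟩
    · exact le_refl t
    · have := hA htA; rw [Finset.mem_Icc] at this; omega

end Bwd

section Fwd

variable {m n : ℕ}

def Aset (m n : ℕ) (p : Finpartition (Finset.Icc 1 (m + n) : Finset ℕ)) : Finset ℕ :=
  (TT m n).filter (fun x => ((Finset.Icc 1 m).filter (fun j => j ∈ p.part x)).Nonempty)

lemma mem_Aset {p : Finpartition (Finset.Icc 1 (m + n) : Finset ℕ)} {x : ℕ} :
    x ∈ Aset m n p ↔ x ∈ TT m n ∧ ∃ j, 1 ≤ j ∧ j ≤ m ∧ j ∈ p.part x := by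
  simp [Aset, Finset.filter_nonempty_iff, Finset.mem_Icc, and_assoc]

noncomputable def hdOf (m n : ℕ) (p : Finpartition (Finset.Icc 1 (m + n) : Finset ℕ))
    (x : ℕ) : ℕ :=
  if h : ((Finset.Icc 1 m).filter (fun j => j ∈ p.part x)).Nonempty then
    ((Finset.Icc 1 m).filter (fun j => j ∈ p.part x)).min' h
  else 0

lemma hdOf_spec {p : Finpartition (Finset.Icc 1 (m + n) : Finset ℕ)} {x : ℕ}
    (h : ((Finset.Icc 1 m).filter (fun j => j ∈ p.part x)).Nonempty) :
    1 ≤ hdOf m n p x ∧ hdOf m n p x ≤ m ∧ hdOf m n p x ∈ p.part x := by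
  rw [hdOf, dif_pos h]
  have := Finset.min'_mem _ h
  rw [Finset.mem_filter, Finset.mem_Icc] at this
  exact ⟨this.1.1, this.1.2, this.2⟩

noncomputable def fwd (m n : ℕ) (p : Finpartition (Finset.Icc 1 (m + n) : Finset ℕ)) :
    DD m n :=
  ⟨⟨Aset m n p, Finset.mem_powerset.2 (Finset.filter_subset _ _)⟩,
   fun x => ⟨hdOf m n p x.1 - 1, by
      have hx := x.2
      rw [mem_Aset] at hx
      have hne : ((Finset.Icc 1 m).filter (fun j => j ∈ p.part x.1)).Nonempty := by
        rw [Finset.filter_nonempty_iff]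
        obtain ⟨_, j, h1, h2, h3⟩ := hx
        exact ⟨j, Finset.mem_Icc.2 ⟨h1, h2⟩, h3⟩
      have := hdOf_spec hne
      omega⟩,
   { parts := p.parts.filter (fun B => ∀ j ∈ B, m < j)
     supIndep := p.supIndep.subset (Finset.filter_subset _ _)
     sup_parts := by
       ext x
       rw [Finset.mem_sup]
       constructor
       · rintro ⟨B, hB, hx⟩
         rw [Finset.mem_filter] at hB
         simp only [id] at hx
         obtain ⟨hBp, hall⟩ := hB
         have hxS := p.le hBp hx
         rw [Finset.mem_Icc] at hxS
         have hmx := hall x hx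
         rw [Finset.mem_sdiff, Finset.mem_Icc]
         refine ⟨⟨by omega, hxS.2⟩, ?_⟩
         intro hxA
         rw [mem_Aset] at hxA
         obtain ⟨_, j, h1, h2, h3⟩ := hxA
         rw [p.part_eq_of_mem hBp hx] at h3
         exact absurd (hall j h3) (by omega)
       · intro hx
         rw [Finset.mem_sdiff, Finset.mem_Icc] at hx
         obtain ⟨⟨h1, h2⟩, hxA⟩ := hx
         have hxS : x ∈ Finset.Icc 1 (m + n) := Finset.mem_Icc.2 ⟨by omega, h2⟩
         refine ⟨p.part x, Finset.mem_filter.2 ⟨p.part_mem.2 hxS, ?_⟩, p.mem_part hxS⟩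
         intro j hj
         by_contra hjm
         push_neg at hjm
         have hj1 : 1 ≤ j := by
           have := p.le (p.part_mem.2 hxS) hj
           rw [Finset.mem_Icc] at this; exact this.1
         exact hxA (mem_Aset.2 ⟨Finset.mem_Icc.2 ⟨by omega, h2⟩, j, hj1, hjm, hj⟩)
     bot_notMem := fun h => p.bot_notMem (Finset.mem_filter.1 h).1 }⟩

lemma fwd_Aset (p : Finpartition (Finset.Icc 1 (m + n) : Finset ℕ)) :
    (fwd m n p).1.1 = Aset m n p := rfl

lemma fwd_f (p : Finpartition (Finset.Icc 1 (m + n) : Finset ℕ)) (x : {x // x ∈ (fwd m n p).1.1}) :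
    ((fwd m n p).2.1 x : ℕ) = hdOf m n p x.1 - 1 := rfl

lemma fwd_q_parts (p : Finpartition (Finset.Icc 1 (m + n) : Finset ℕ)) :
    (fwd m n p).2.2.parts = p.parts.filter (fun B => ∀ j ∈ B, m < j) := rfl

end Fwd

section Round

variable {m n : ℕ} {p : Finpartition (Finset.Icc 1 (m + n) : Finset ℕ)}

def Heads (m n : ℕ) (p : Finpartition (Finset.Icc 1 (m + n) : Finset ℕ)) : Prop :=
  ∀ i, 1 ≤ i → i ≤ m → isHead p i

lemma head_min (hp : Heads m n p) {j : ℕ} (h1 : 1 ≤ j) (h2 : j ≤ m) :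
    ∀ t ∈ p.part j, j ≤ t := by
  obtain ⟨B, hB, hjB, hmin⟩ := hp j h1 h2
  rwa [p.part_eq_of_mem hB hjB]

lemma hdOf_eq (hp : Heads m n p) {x j : ℕ} (hxS : x ∈ Finset.Icc 1 (m + n))
    (h1 : 1 ≤ j) (h2 : j ≤ m) (hj : j ∈ p.part x) : hdOf m n p x = j := by
  have hne : ((Finset.Icc 1 m).filter (fun i => i ∈ p.part x)).Nonempty :=
    ⟨j, Finset.mem_filter.2 ⟨Finset.mem_Icc.2 ⟨h1, h2⟩, hj⟩⟩
  obtain ⟨hh1, hh2, hh3⟩ := hdOf_spec (m := m) (n := n) hne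
  set h := hdOf m n p x
  -- both h and j lie in p.part x and are ≤ m; use heads to show equal
  have hpartx : p.part x ∈ p.parts := p.part_mem.2 hxS
  have hpj : p.part j = p.part x := p.part_eq_of_mem hpartx hj
  have hph : p.part h = p.part x := p.part_eq_of_mem hpartx hh3
  have hj_le : j ≤ h := by
    have := head_min hp h1 h2 (t := h)
    rw [hpj] at this
    exact this hh3
  have hh_le : h ≤ j := by
    have := head_min hp hh1 hh2 (t := j)
    rw [hph] at this
    exact this hj
  omega

lemma blk_fwd_eq_part (hp : Heads m n p) {j : ℕ} (h1 : 1 ≤ j) (h2 : j ≤ m) :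
    blk (fwd m n p).1.1 (fwd m n p).2.1 j = p.part j := by
  have hjS : j ∈ Finset.Icc 1 (m + n) := Finset.mem_Icc.2 ⟨h1, by omega⟩
  ext x
  rw [mem_blk]
  constructor
  · rintro (rfl | ⟨hx, hfx⟩)
    · exact p.mem_part hjS
    · rw [fwd_Aset] at hx
      have hxS : x ∈ Finset.Icc 1 (m + n) := by
        have := (mem_Aset.1 hx).1
        rw [Finset.mem_Icc] at this ⊢
        omega
      have hfx' : hdOf m n p x = j := by
        have := fwd_f p ⟨x, hx⟩
        simp only at this
        obtain ⟨_, j', hj'1, hj'2, hj'3⟩ := mem_Aset.1 hx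
        have hne : ((Finset.Icc 1 m).filter (fun i => i ∈ p.part x)).Nonempty :=
          ⟨j', Finset.mem_filter.2 ⟨Finset.mem_Icc.2 ⟨hj'1, hj'2⟩, hj'3⟩⟩
        have hs := hdOf_spec (m := m) (n := n) hne
        omega
      have : hdOf m n p x ∈ p.part x := by
        obtain ⟨_, j', hj'1, hj'2, hj'3⟩ := mem_Aset.1 hx
        exact (hdOf_spec ⟨j', Finset.mem_filter.2
          ⟨Finset.mem_Icc.2 ⟨hj'1, hj'2⟩, hj'3⟩⟩).2.2
      rw [hfx'] at this
      have := p.part_eq_of_mem (p.part_mem.2 hxS) this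
      rw [this]
      exact p.mem_part hxS
  · intro hx
    have hxS : x ∈ Finset.Icc 1 (m + n) := p.le (p.part_mem.2 hjS) hx
    by_cases hxj : x = j
    · exact Or.inl hxj
    · right
      have hpxj : p.part x = p.part j := p.part_eq_of_mem (p.part_mem.2 hjS) hx
      have hx1 : 1 ≤ x := (Finset.mem_Icc.1 hxS).1
      have hmx : m < x := by
        by_contra hxm
        push_neg at hxm
        -- x is a head, j is a head, same part: contradiction
        have hxmin := head_min hp hx1 hxm
        rw [hpxj] at hxmin
        have hjmin := head_min hp h1 h2
        exact hxj (le_antisymm (hxmin j (p.mem_part hjS)) (hjmin x hx))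
      have hxA : x ∈ Aset m n p := by
        rw [mem_Aset]
        refine ⟨Finset.mem_Icc.2 ⟨by omega, (Finset.mem_Icc.1 hxS).2⟩, j, h1, h2, ?_⟩
        rw [hpxj]; exact p.mem_part hjS
      have hhd : hdOf m n p x = j := hdOf_eq hp hxS h1 h2 (by rw [hpxj]; exact p.mem_part hjS)
      refine ⟨hxA, ?_⟩
      have := fwd_f p ⟨x, hxA⟩
      simp only at this
      omega

lemma bwd_fwd (hp : Heads m n p) : bwd (fwd m n p) = p := by
  apply Finpartition.ext
  rw [bwd_parts]
  ext B
  rw [Finset.mem_union, Finset.mem_image]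
  constructor
  · rintro (hB | ⟨j, hj, rfl⟩)
    · rw [fwd_q_parts, Finset.mem_filter] at hB
      exact hB.1
    · rw [Finset.mem_Icc] at hj
      rw [blk_fwd_eq_part hp hj.1 hj.2]
      exact p.part_mem.2 (Finset.mem_Icc.2 ⟨hj.1, by omega⟩)
  · intro hB
    by_cases hall : ∀ j ∈ B, m < j
    · left
      rw [fwd_q_parts, Finset.mem_filter]
      exact ⟨hB, hall⟩
    · right
      push_neg at hall
      obtain ⟨j, hjB, hjm⟩ := hall
      have hj1 : 1 ≤ j := by
        have := p.le hB hjB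
        rw [Finset.mem_Icc] at this; exact this.1
      refine ⟨j, Finset.mem_Icc.2 ⟨hj1, hjm⟩, ?_⟩
      rw [blk_fwd_eq_part hp hj1 hjm]
      exact (p.part_eq_of_mem hB hjB).symm ▸ rfl

end Round

section Inj

variable {m n : ℕ}

lemma DD_ext {d d' : DD m n} (h1 : d.1.1 = d'.1.1)
    (hf : ∀ x (hx : x ∈ d.1.1) (hx' : x ∈ d'.1.1), d.2.1 ⟨x, hx⟩ = d'.2.1 ⟨x, hx'⟩)
    (hq : d.2.2.parts = d'.2.2.parts) : d = d' := by
  obtain ⟨⟨A, hA⟩, f, q⟩ := d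
  obtain ⟨⟨A', hA'⟩, f', q'⟩ := d'
  simp only at h1 hf hq
  subst h1
  have hff : f = f' := funext fun x => hf x.1 x.2 x.2
  subst hff
  have hqq : q = q' := Finpartition.ext hq
  subst hqq
  rfl

lemma mem_A_iff_bwd (d : DD m n) (x : ℕ) :
    x ∈ d.1.1 ↔ m < x ∧ ∃ B ∈ (bwd d).parts, x ∈ B ∧ ∃ j ∈ B, j ≤ m := by
  obtain ⟨⟨A, hA⟩, f, q⟩ := d
  rw [Finset.mem_powerset] at hA
  constructor
  · intro hx
    have hmx : m < x := by
      have := hA hx; rw [Finset.mem_Icc] at this; omega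
    refine ⟨hmx, blk A f ((f ⟨x, hx⟩ : ℕ) + 1), ?_, mem_blk.2 (Or.inr ⟨hx, rfl⟩),
      (f ⟨x, hx⟩ : ℕ) + 1, mem_blk.2 (Or.inl rfl), by have := (f ⟨x, hx⟩).2; omega⟩
    show _ ∈ q.parts ∪ (Finset.Icc 1 m).image (blk A f)
    refine Finset.mem_union_right _ (Finset.mem_image_of_mem _ ?_)
    rw [Finset.mem_Icc]
    have := (f ⟨x, hx⟩).2
    omega
  · rintro ⟨hmx, B, hB, hxB, j, hjB, hjm⟩
    change B ∈ q.parts ∪ (Finset.Icc 1 m).image (blk A f) at hB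
    rw [Finset.mem_union] at hB
    rcases hB with hB | hB
    · have := q.le hB hjB
      rw [Finset.mem_sdiff, Finset.mem_Icc] at this
      omega
    · rw [Finset.mem_image] at hB
      obtain ⟨j', hj', rfl⟩ := hB
      rcases mem_blk.1 hxB with rfl | ⟨hxA, _⟩
      · rw [Finset.mem_Icc] at hj'; omega
      · exact hxA

lemma q_parts_bwd (d : DD m n) :
    d.2.2.parts = (bwd d).parts.filter (fun B => ∀ j ∈ B, m < j) := by
  obtain ⟨⟨A, hA⟩, f, q⟩ := d
  show q.parts = (q.parts ∪ (Finset.Icc 1 m).image (blk A f)).filter (fun B => ∀ j ∈ B, m < j)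
  rw [Finset.filter_union]
  have h1 : Finset.filter (fun B => ∀ j ∈ B, m < j) q.parts = q.parts := by
    rw [Finset.filter_eq_self]
    intro B hB j hjB
    have := q.le hB hjB
    rw [Finset.mem_sdiff, Finset.mem_Icc] at this
    omega
  have h2 : Finset.filter (fun B => ∀ j ∈ B, m < j)
      ((Finset.Icc 1 m).image (blk A f)) = ∅ := by
    rw [Finset.filter_eq_empty_iff]
    intro B hB
    rw [Finset.mem_image] at hB
    obtain ⟨j, hj, rfl⟩ := hB
    rw [Finset.mem_Icc] at hj
    intro hall
    exact absurd (hall j (mem_blk.2 (Or.inl rfl))) (by omega)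
  rw [h1, h2, Finset.union_empty]

lemma bwd_injective : Function.Injective (bwd : DD m n → _) := by
  intro d d' h
  have hA : d.1.1 = d'.1.1 := by
    ext x
    rw [mem_A_iff_bwd, mem_A_iff_bwd, h]
  apply DD_ext hA
  · intro x hx hx'
    have hAsub : d.1.1 ⊆ TT m n := Finset.mem_powerset.1 d.1.2
    -- the blocks containing x in bwd d and bwd d' coincide
    have hb1 : blk d.1.1 d.2.1 ((d.2.1 ⟨x, hx⟩ : ℕ) + 1) ∈ (bwd d).parts := by
      rw [bwd_parts]
      refine Finset.mem_union_right _ (Finset.mem_image_of_mem _ ?_)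
      rw [Finset.mem_Icc]
      have := (d.2.1 ⟨x, hx⟩).2; omega
    have hb2 : blk d'.1.1 d'.2.1 ((d'.2.1 ⟨x, hx'⟩ : ℕ) + 1) ∈ (bwd d).parts := by
      rw [h, bwd_parts]
      refine Finset.mem_union_right _ (Finset.mem_image_of_mem _ ?_)
      rw [Finset.mem_Icc]
      have := (d'.2.1 ⟨x, hx'⟩).2; omega
    have hxb1 : x ∈ blk d.1.1 d.2.1 ((d.2.1 ⟨x, hx⟩ : ℕ) + 1) := mem_blk.2 (Or.inr ⟨hx, rfl⟩)
    have hxb2 : x ∈ blk d'.1.1 d'.2.1 ((d'.2.1 ⟨x, hx'⟩ : ℕ) + 1) :=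
      mem_blk.2 (Or.inr ⟨hx', rfl⟩)
    have heqB := (bwd d).eq_of_mem_parts hb1 hb2 hxb1 hxb2
    -- d'.2.1 x + 1 lies in the first block
    have : ((d'.2.1 ⟨x, hx'⟩ : ℕ) + 1) ∈ blk d.1.1 d.2.1 ((d.2.1 ⟨x, hx⟩ : ℕ) + 1) := by
      rw [heqB]; exact mem_blk.2 (Or.inl rfl)
    rcases mem_blk.1 this with he | ⟨hmem, _⟩
    · exact Fin.ext (by omega)
    · have := Finset.mem_powerset.1 d.1.2 hmem
      rw [Finset.mem_Icc] at this
      have := (d'.2.1 ⟨x, hx'⟩).2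
      omega
  · rw [q_parts_bwd, q_parts_bwd, h]

end Inj

section Count

instance (m n : ℕ) : Finite (DD m n) := by
  unfold DD
  infer_instance

lemma nat_card_sigma {ι : Type*} [Fintype ι] (F : ι → Type*) [∀ i, Finite (F i)] :
    Nat.card (Σ i, F i) = ∑ i, Nat.card (F i) := by
  letI : ∀ i, Fintype (F i) := fun i => Fintype.ofFinite _
  simp [Nat.card_eq_fintype_card]

theorem final_count (m n : ℕ) :
    Nat.card {p : Finpartition (Finset.Icc 1 (m + n) : Finset ℕ) // Heads m n p} =
      ∑ i ∈ Finset.range (n + 1), n.choose i * m ^ i * bell (n - i) := by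
  have e1 : Nat.card {p : Finpartition (Finset.Icc 1 (m + n) : Finset ℕ) // Heads m n p}
      = Nat.card (DD m n) := by
    refine le_antisymm ?_ ?_
    · refine Nat.card_le_card_of_injective (fun p => fwd m n p.1) ?_
      intro p q hpq
      have := congrArg bwd hpq
      rw [bwd_fwd p.2, bwd_fwd q.2] at this
      exact Subtype.ext this
    · refine Nat.card_le_card_of_injective
        (fun d => (⟨bwd d, bwd_heads d⟩ :
          {p : Finpartition (Finset.Icc 1 (m + n) : Finset ℕ) // Heads m n p})) ?_
      intro d d' hdd
      exact bwd_injective (congrArg Subtype.val hdd)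
  rw [e1]
  have e2 : Nat.card (DD m n)
      = ∑ A ∈ (TT m n).powerset, m ^ A.card * bell (n - A.card) := by
    have := nat_card_sigma (fun A : {A : Finset ℕ // A ∈ (TT m n).powerset} =>
      ({x // x ∈ A.1} → Fin m) × Finpartition (TT m n \ A.1))
    rw [show Nat.card (DD m n) = _ from this]
    rw [← Finset.sum_coe_sort ((TT m n).powerset)
      (fun A => m ^ A.card * bell (n - A.card))]
    apply Finset.sum_congr rfl
    intro A _
    rw [Nat.card_prod, Nat.card_fun, card_fp_eq_bell]
    have hsub : A.1 ⊆ TT m n := Finset.mem_powerset.1 A.2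
    have hT : (TT m n).card = n := by
      rw [Nat.card_Icc]; omega
    rw [Finset.card_sdiff_of_subset hsub, hT]
    congr 1
    rw [Nat.card_eq_finsetCard, Nat.card_eq_fintype_card, Fintype.card_fin]
  rw [e2]
  have hT : (TT m n).card = n := by rw [Nat.card_Icc]; omega
  rw [Finset.sum_powerset_apply_card (fun i => m ^ i * bell (n - i)), hT]
  apply Finset.sum_congr rfl
  intro i _
  rw [smul_eq_mul, mul_assoc]

end Count

end Helpers

theorem headCount_eq_sum_choose_bell (m n : ℕ) :
    headCount m (m + n) = ∑ i ∈ Finset.range (n + 1), n.choose i * m ^ i * bell (n - i) := by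
  exact final_count m n
end

section
/- For n ≥ 1, the number of noncrossing partitions of [n] equals the number of plane unary-binary trees with n vertices in which every left child has at least one of a left child or a right child (i.e., no left child is a leaf or has only a middle child). -/
/-- Plane unary-binary trees: each non-leaf vertex has a middle child only,
a left child only, a right child only, or both left and right children. -/
inductive PUB : Type
  | leaf : PUB
  | middle (t : PUB) : PUB
  | left (t : PUB) : PUB
  | right (t : PUB) : PUB
  | both (l r : PUB) : PUB

/-- number of vertices -/
def PUB.size : PUB → ℕ
  | .leaf => 1
  | .middle t => t.size + 1
  | .left t => t.size + 1
  | .right t => t.size + 1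
  | .both l r => l.size + r.size + 1

/-- the root has a left child or a right child -/
def PUB.hasLR : PUB → Prop
  | .left _ => True
  | .right _ => True
  | .both _ _ => True
  | _ => False

/-- every left child in the tree has a left or right child -/
def PUB.good : PUB → Prop
  | .leaf => True
  | .middle t => t.good
  | .left t => t.good ∧ t.hasLR
  | .right t => t.good
  | .both l r => l.good ∧ r.good ∧ l.hasLR

/-- number of leaves -/
def PUB.leaves : PUB → ℕ
  | .leaf => 1
  | .middle t => t.leaves
  | .left t => t.leaves
  | .right t => t.leaves
  | .both l r => l.leaves + r.leaves

/-- number of vertices having a middle child -/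
def PUB.middles : PUB → ℕ
  | .leaf => 0
  | .middle t => t.middles + 1
  | .left t => t.middles
  | .right t => t.middles
  | .both l r => l.middles + r.middles

/-- `p` is noncrossing: no standard edges `(i1,j1)`, `(i2,j2)` with `i1<i2<j1<j2`. -/
def noncrossing {n : ℕ} (p : Finpartition (Finset.Icc 1 n : Finset ℕ)) : Prop :=
  ¬ ∃ i1 j1 i2 j2, stdEdge p i1 j1 ∧ stdEdge p i2 j2 ∧ i1 < i2 ∧ i2 < j1 ∧ j1 < j2

namespace NCP

open scoped Classical

abbrev Arcs := Finset (ℕ × ℕ)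

def shiftUp (k : ℕ) (E : Arcs) : Arcs := E.image fun p => (p.1 + k, p.2 + k)
def shiftDown (k : ℕ) (E : Arcs) : Arcs := E.image fun p => (p.1 - k, p.2 - k)

def IsDiag (n : ℕ) (E : Arcs) : Prop :=
  (∀ p ∈ E, 1 ≤ p.1 ∧ p.1 < p.2 ∧ p.2 ≤ n) ∧
  (∀ p ∈ E, ∀ q ∈ E, p.1 = q.1 → p = q) ∧
  (∀ p ∈ E, ∀ q ∈ E, p.2 = q.2 → p = q) ∧
  ¬ ∃ p ∈ E, ∃ q ∈ E, p.1 < q.1 ∧ q.1 < p.2 ∧ p.2 < q.2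

def arcFrom (i : ℕ) (E : Arcs) : ℕ := (E.filter fun p => p.1 = i).sup fun p => p.2

lemma arcFrom_eq {E : Arcs} (hf : ∀ p ∈ E, ∀ q ∈ E, p.1 = q.1 → p = q)
    {i j : ℕ} (h : (i, j) ∈ E) : arcFrom i E = j := by
  have : E.filter (fun p => p.1 = i) = {(i, j)} := by
    ext q
    simp only [Finset.mem_filter, Finset.mem_singleton]
    constructor
    · rintro ⟨hq, hq1⟩
      exact hf q hq (i, j) h hq1
    · rintro rfl; exact ⟨h, rfl⟩
  rw [arcFrom, this, Finset.sup_singleton]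

lemma arcFrom_mem {E : Arcs} (hf : ∀ p ∈ E, ∀ q ∈ E, p.1 = q.1 → p = q)
    {i : ℕ} (h : arcFrom i E ≠ 0) : (i, arcFrom i E) ∈ E := by
  rcases (E.filter fun p => p.1 = i).eq_empty_or_nonempty with he | ⟨q, hq⟩
  · exfalso; apply h; rw [arcFrom, he]; rfl
  · simp only [Finset.mem_filter] at hq
    have : q = (i, q.2) := by rw [← hq.2]
    rw [arcFrom_eq hf (this ▸ hq.1)]
    exact this ▸ hq.1

lemma arcFrom_eq_zero {E : Arcs} (h : ∀ j, (i, j) ∉ E) : arcFrom i E = 0 := by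
  have : E.filter (fun p => p.1 = i) = ∅ := by
    ext q
    simp only [Finset.mem_filter, Finset.notMem_empty, iff_false]
    rintro ⟨hq, rfl⟩
    exact h q.2 (by simpa using hq)
  rw [arcFrom, this]; rfl

lemma shiftDown_shiftUp (k : ℕ) (E : Arcs) : shiftDown k (shiftUp k E) = E := by
  rw [shiftUp, shiftDown, Finset.image_image]
  have : E.image ((fun p : ℕ × ℕ => (p.1 - k, p.2 - k)) ∘ fun p => (p.1 + k, p.2 + k)) =
      E.image id := Finset.image_congr (fun p _ => by simp)
  simpa using this

lemma shiftUp_shiftDown {k : ℕ} {E : Arcs} (h : ∀ p ∈ E, k ≤ p.1) (h2 : ∀ p ∈ E, k ≤ p.2) :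
    shiftUp k (shiftDown k E) = E := by
  rw [shiftUp, shiftDown, Finset.image_image]
  have : E.image ((fun p : ℕ × ℕ => (p.1 + k, p.2 + k)) ∘ fun p => (p.1 - k, p.2 - k)) =
      E.image id := Finset.image_congr (fun p hp => by
    simp [Nat.sub_add_cancel (h p hp), Nat.sub_add_cancel (h2 p hp)])
  simpa using this

lemma mem_shiftUp {k : ℕ} {E : Arcs} {a b : ℕ} :
    (a, b) ∈ shiftUp k E ↔ ∃ p ∈ E, p.1 + k = a ∧ p.2 + k = b := by
  simp [shiftUp, Prod.ext_iff]

lemma isDiag_shiftUp {n k : ℕ} {E : Arcs} (h : IsDiag n E) : IsDiag (n + k) (shiftUp k E) := by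
  obtain ⟨hb, hf, hg, hc⟩ := h
  refine ⟨?_, ?_, ?_, ?_⟩
  · rintro p hp
    rw [show p = (p.1, p.2) from rfl, mem_shiftUp] at hp
    obtain ⟨q, hq, h1, h2⟩ := hp
    have := hb q hq
    omega
  · rintro p hp q hq he
    rw [show p = (p.1, p.2) from rfl, mem_shiftUp] at hp
    rw [show q = (q.1, q.2) from rfl, mem_shiftUp] at hq
    obtain ⟨p', hp', e1, e2⟩ := hp
    obtain ⟨q', hq', f1, f2⟩ := hq
    have : p' = q' := hf p' hp' q' hq' (by omega)
    subst this
    have : p = (p.1, p.2) := rfl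
    rw [this, show q = (q.1, q.2) from rfl]
    simp only [Prod.mk.injEq]; omega
  · rintro p hp q hq he
    rw [show p = (p.1, p.2) from rfl, mem_shiftUp] at hp
    rw [show q = (q.1, q.2) from rfl, mem_shiftUp] at hq
    obtain ⟨p', hp', e1, e2⟩ := hp
    obtain ⟨q', hq', f1, f2⟩ := hq
    have : p' = q' := hg p' hp' q' hq' (by omega)
    subst this
    rw [show p = (p.1, p.2) from rfl, show q = (q.1, q.2) from rfl]
    simp only [Prod.mk.injEq]; omega
  · rintro ⟨p, hp, q, hq, h1, h2, h3⟩
    rw [show p = (p.1, p.2) from rfl, mem_shiftUp] at hp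
    rw [show q = (q.1, q.2) from rfl, mem_shiftUp] at hq
    obtain ⟨p', hp', e1, e2⟩ := hp
    obtain ⟨q', hq', f1, f2⟩ := hq
    exact hc ⟨p', hp', q', hq', by omega, by omega, by omega⟩

lemma isDiag_shiftDown {n k : ℕ} {E : Arcs} (h : IsDiag n E) (hk : ∀ p ∈ E, k + 1 ≤ p.1) :
    IsDiag (n - k) (shiftDown k E) := by
  obtain ⟨hb, hf, hg, hc⟩ := h
  have mem : ∀ q ∈ shiftDown k E, ∃ p ∈ E, p.1 - k = q.1 ∧ p.2 - k = q.2 := by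
    intro q hq
    simp only [shiftDown, Finset.mem_image] at hq
    obtain ⟨p, hp, he⟩ := hq
    exact ⟨p, hp, by rw [← he], by rw [← he]⟩
  refine ⟨?_, ?_, ?_, ?_⟩
  · intro q hq
    obtain ⟨p, hp, e1, e2⟩ := mem q hq
    have := hb p hp; have := hk p hp; omega
  · intro p hp q hq he
    obtain ⟨p', hp', e1, e2⟩ := mem p hp
    obtain ⟨q', hq', f1, f2⟩ := mem q hq
    have h1 := hk p' hp'; have h2 := hk q' hq'
    have : p' = q' := hf p' hp' q' hq' (by omega)
    subst this
    rw [show p = (p.1, p.2) from rfl, show q = (q.1, q.2) from rfl]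
    simp only [Prod.mk.injEq]; omega
  · intro p hp q hq he
    obtain ⟨p', hp', e1, e2⟩ := mem p hp
    obtain ⟨q', hq', f1, f2⟩ := mem q hq
    have h1 := hb p' hp'; have h2 := hb q' hq'
    have h3 := hk p' hp'; have h4 := hk q' hq'
    have : p' = q' := hg p' hp' q' hq' (by omega)
    subst this
    rw [show p = (p.1, p.2) from rfl, show q = (q.1, q.2) from rfl]
    simp only [Prod.mk.injEq]; omega
  · rintro ⟨p, hp, q, hq, h1, h2, h3⟩
    obtain ⟨p', hp', e1, e2⟩ := mem p hp
    obtain ⟨q', hq', f1, f2⟩ := mem q hq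
    have b1 := hb p' hp'; have b2 := hb q' hq'
    have k1 := hk p' hp'; have k2 := hk q' hq'
    exact hc ⟨p', hp', q', hq', by omega, by omega, by omega⟩


lemma size_pos (t : PUB) : 1 ≤ t.size := by
  cases t <;> simp [PUB.size]

def leftMap : ℕ × ℕ → ℕ × ℕ := fun p => if p.1 = 1 then (1, p.2 + 1) else (p.1 + 1, p.2 + 1)

def treeArcs : PUB → Arcs
  | .leaf => ∅
  | .middle t => shiftUp 1 (treeArcs t)
  | .right t => insert (1, 2) (shiftUp 1 (treeArcs t))
  | .left t => (treeArcs t).image leftMap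
  | .both a g => insert (1, a.size + 2) (shiftUp 1 (treeArcs a) ∪ shiftUp (a.size + 1) (treeArcs g))

lemma isDiag_build {a b : ℕ} {A B : Arcs} (hA : IsDiag a A) (hB : IsDiag b B) (hb : 1 ≤ b) :
    IsDiag (a + b + 1) (insert (1, a + 2) (shiftUp 1 A ∪ shiftUp (a + 1) B)) := by
  obtain ⟨Ab, Af, Ag, Ac⟩ := hA
  obtain ⟨Bb, Bf, Bg, Bc⟩ := hB
  have memA : ∀ q ∈ shiftUp 1 A, ∃ p ∈ A, p.1 + 1 = q.1 ∧ p.2 + 1 = q.2 := by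
    intro q hq
    simp only [shiftUp, Finset.mem_image] at hq
    obtain ⟨p, hp, he⟩ := hq
    exact ⟨p, hp, by rw [← he], by rw [← he]⟩
  have memB : ∀ q ∈ shiftUp (a + 1) B, ∃ p ∈ B, p.1 + (a + 1) = q.1 ∧ p.2 + (a + 1) = q.2 := by
    intro q hq
    simp only [shiftUp, Finset.mem_image] at hq
    obtain ⟨p, hp, he⟩ := hq
    exact ⟨p, hp, by rw [← he], by rw [← he]⟩
  have boundA : ∀ q ∈ shiftUp 1 A, 2 ≤ q.1 ∧ q.1 < q.2 ∧ q.2 ≤ a + 1 := by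
    intro q hq; obtain ⟨p, hp, e1, e2⟩ := memA q hq; have := Ab p hp; omega
  have boundB : ∀ q ∈ shiftUp (a + 1) B, a + 2 ≤ q.1 ∧ q.1 < q.2 ∧ q.2 ≤ a + b + 1 := by
    intro q hq; obtain ⟨p, hp, e1, e2⟩ := memB q hq; have := Bb p hp; omega
  have cases : ∀ q ∈ insert ((1 : ℕ), a + 2) (shiftUp 1 A ∪ shiftUp (a + 1) B),
      q = (1, a + 2) ∨ q ∈ shiftUp 1 A ∨ q ∈ shiftUp (a + 1) B := by
    intro q hq
    simpa [Finset.mem_insert, Finset.mem_union] using hq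
  -- shifted sets inherit functionality & crossing
  have hSA : IsDiag (a + 1) (shiftUp 1 A) := isDiag_shiftUp ⟨Ab, Af, Ag, Ac⟩
  have hSB : IsDiag (b + (a + 1)) (shiftUp (a + 1) B) := isDiag_shiftUp ⟨Bb, Bf, Bg, Bc⟩
  obtain ⟨_, SAf, SAg, SAc⟩ := hSA
  obtain ⟨_, SBf, SBg, SBc⟩ := hSB
  refine ⟨?_, ?_, ?_, ?_⟩
  · intro q hq
    rcases cases q hq with rfl | h | h
    · simp; omega
    · have := boundA q h; omega
    · have := boundB q h; omega
  · intro p hp q hq he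
    rcases cases p hp with rfl | h | h <;> rcases cases q hq with rfl | h' | h'
    · rfl
    · have := boundA q h'; omega
    · have := boundB q h'; omega
    · have := boundA p h; omega
    · exact SAf p h q h' he
    · have := boundA p h; have := boundB q h'; omega
    · have := boundB p h; omega
    · have := boundA q h'; have := boundB p h; omega
    · exact SBf p h q h' he
  · intro p hp q hq he
    rcases cases p hp with rfl | h | h <;> rcases cases q hq with rfl | h' | h'
    · rfl
    · have := boundA q h'; simp at he; omega
    · have := boundB q h'; simp at he
      obtain ⟨p', hp', e1, e2⟩ := memB q h'
      have := Bb p' hp'; omega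
    · have := boundA p h; simp at he; omega
    · exact SAg p h q h' he
    · have h1 := boundA p h
      obtain ⟨q', hq', e1, e2⟩ := memB q h'
      have := Bb q' hq'; omega
    · have := boundB p h; simp at he
      obtain ⟨p', hp', e1, e2⟩ := memB p h
      have := Bb p' hp'; omega
    · have h1 := boundA q h'
      obtain ⟨p', hp', e1, e2⟩ := memB p h
      have := Bb p' hp'; omega
    · exact SBg p h q h' he
  · rintro ⟨p, hp, q, hq, h1, h2, h3⟩
    rcases cases p hp with rfl | h | h <;> rcases cases q hq with rfl | h' | h'
    · omega
    · have := boundA q h'; simp at h1 h2 h3; omega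
    · have := boundB q h'; simp at h1 h2 h3; omega
    · have := boundA p h; simp at h1; omega
    · exact SAc ⟨p, h, q, h', h1, h2, h3⟩
    · have := boundA p h; have := boundB q h'; omega
    · have := boundB p h; simp at h1; omega
    · have := boundB p h; have := boundA q h'; omega
    · exact SBc ⟨p, h, q, h', h1, h2, h3⟩

lemma isDiag_leftExtend {n : ℕ} {A : Arcs} (hA : IsDiag n A) {j : ℕ} (hj : (1, j) ∈ A) :
    IsDiag (n + 1) (A.image leftMap) := by
  obtain ⟨Ab, Af, Ag, Ac⟩ := hA
  have mem : ∀ q ∈ A.image leftMap, ∃ p ∈ A, leftMap p = q := by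
    intro q hq; simpa [Finset.mem_image] using hq
  have lm : ∀ p : ℕ × ℕ, (leftMap p).2 = p.2 + 1 := by
    intro p; rw [leftMap]; split <;> rfl
  have lm1 : ∀ p : ℕ × ℕ, p ∈ A → ((p.1 = 1 ∧ (leftMap p).1 = 1) ∨ (2 ≤ p.1 ∧ (leftMap p).1 = p.1 + 1)) := by
    intro p hp
    have := Ab p hp
    by_cases h : p.1 = 1
    · left; exact ⟨h, by rw [leftMap]; simp [h]⟩
    · right; exact ⟨by omega, by rw [leftMap]; simp [h]⟩
  refine ⟨?_, ?_, ?_, ?_⟩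
  · intro q hq
    obtain ⟨p, hp, rfl⟩ := mem q hq
    have hb := Ab p hp
    rcases lm1 p hp with ⟨e1, e2⟩ | ⟨e1, e2⟩ <;> rw [lm p] at * <;> omega
  · intro p' hp' q' hq' he
    obtain ⟨p, hp, rfl⟩ := mem p' hp'
    obtain ⟨q, hq, rfl⟩ := mem q' hq'
    rcases lm1 p hp with ⟨e1, e2⟩ | ⟨e1, e2⟩ <;> rcases lm1 q hq with ⟨f1, f2⟩ | ⟨f1, f2⟩
    · have : p = q := Af p hp q hq (by omega); rw [this]
    · omega
    · omega
    · have : p = q := Af p hp q hq (by omega); rw [this]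
  · intro p' hp' q' hq' he
    obtain ⟨p, hp, rfl⟩ := mem p' hp'
    obtain ⟨q, hq, rfl⟩ := mem q' hq'
    rw [lm p, lm q] at he
    have : p = q := Ag p hp q hq (by omega); rw [this]
  · rintro ⟨p', hp', q', hq', h1, h2, h3⟩
    obtain ⟨p, hp, rfl⟩ := mem p' hp'
    obtain ⟨q, hq, rfl⟩ := mem q' hq'
    rw [lm p, lm q] at *
    rcases lm1 p hp with ⟨e1, e2⟩ | ⟨e1, e2⟩ <;> rcases lm1 q hq with ⟨f1, f2⟩ | ⟨f1, f2⟩ <;>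
      [skip; skip; omega; skip] <;>
      exact Ac ⟨p, hp, q, hq, by omega, by omega, by omega⟩

lemma good_diag : ∀ t : PUB, t.good →
    IsDiag t.size (treeArcs t) ∧ (arcFrom 1 (treeArcs t) ≠ 0 ↔ t.hasLR) := by
  intro t
  induction t with
  | leaf =>
    intro _
    refine ⟨⟨?_, ?_, ?_, ?_⟩, ?_⟩ <;> simp [treeArcs, PUB.hasLR, arcFrom, PUB.size]
  | middle t ih =>
    intro hg
    obtain ⟨hd, _⟩ := ih hg
    constructor
    · exact isDiag_shiftUp hd
    · simp only [PUB.hasLR, iff_false, ne_eq, not_not]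
      apply arcFrom_eq_zero
      intro j hj
      rw [treeArcs, mem_shiftUp] at hj
      obtain ⟨p, hp, e1, e2⟩ := hj
      have := hd.1 p hp; omega
  | right t ih =>
    intro hg
    obtain ⟨hd, _⟩ := ih hg
    have hb : IsDiag (0 + t.size + 1) (insert (1, 0 + 2)
        (shiftUp 1 (∅ : Arcs) ∪ shiftUp (0 + 1) (treeArcs t))) :=
      isDiag_build (by refine ⟨?_, ?_, ?_, ?_⟩ <;> simp) hd (size_pos t)
    simp only [shiftUp, Finset.image_empty, Finset.empty_union, Nat.zero_add] at hb
    have hb' : IsDiag (PUB.size (.right t)) (treeArcs (.right t)) := by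
      simpa [treeArcs, PUB.size, shiftUp] using hb
    refine ⟨hb', ?_⟩
    simp only [PUB.hasLR, iff_true, ne_eq]
    have : arcFrom 1 (treeArcs (.right t)) = 2 :=
      arcFrom_eq hb'.2.1 (by simp [treeArcs])
    omega
  | left t ih =>
    intro hg
    obtain ⟨hg1, hg2⟩ := hg
    obtain ⟨hd, hlr⟩ := ih hg1
    have hne : arcFrom 1 (treeArcs t) ≠ 0 := hlr.mpr hg2
    have hroot : (1, arcFrom 1 (treeArcs t)) ∈ treeArcs t := arcFrom_mem hd.2.1 hne
    have hb : IsDiag (PUB.size (.left t)) (treeArcs (.left t)) := by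
      simpa [treeArcs, PUB.size] using isDiag_leftExtend hd hroot
    refine ⟨hb, ?_⟩
    simp only [PUB.hasLR, iff_true, ne_eq]
    have hmem : (1, arcFrom 1 (treeArcs t) + 1) ∈ treeArcs (.left t) := by
      rw [treeArcs, Finset.mem_image]
      exact ⟨(1, arcFrom 1 (treeArcs t)), hroot, by simp [leftMap]⟩
    have := arcFrom_eq hb.2.1 hmem
    omega
  | both a g iha ihg =>
    intro hg
    obtain ⟨ha, hgg, halr⟩ := hg
    obtain ⟨hda, hlra⟩ := iha ha
    obtain ⟨hdg, _⟩ := ihg hgg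
    have hb : IsDiag (PUB.size (.both a g)) (treeArcs (.both a g)) := by
      simpa [treeArcs, PUB.size] using isDiag_build hda hdg (size_pos g)
    refine ⟨hb, ?_⟩
    simp only [PUB.hasLR, iff_true, ne_eq]
    have : arcFrom 1 (treeArcs (.both a g)) = a.size + 2 :=
      arcFrom_eq hb.2.1 (by simp [treeArcs])
    omega


def leftShrink : ℕ × ℕ → ℕ × ℕ := fun p => if p.1 = 1 then (1, p.2 - 1) else (p.1 - 1, p.2 - 1)

lemma leftShrink_eq_one {p : ℕ × ℕ} (h : p.1 = 1) : leftShrink p = (1, p.2 - 1) := by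
  rw [leftShrink]; simp [h]

lemma leftShrink_eq_ne {p : ℕ × ℕ} (h : p.1 ≠ 1) : leftShrink p = (p.1 - 1, p.2 - 1) := by
  rw [leftShrink]; simp [h]

lemma leftMap_eq_one {p : ℕ × ℕ} (h : p.1 = 1) : leftMap p = (1, p.2 + 1) := by
  rw [leftMap]; simp [h]

lemma leftMap_eq_ne {p : ℕ × ℕ} (h : p.1 ≠ 1) : leftMap p = (p.1 + 1, p.2 + 1) := by
  rw [leftMap]; simp [h]

def decode : ℕ → ℕ → Arcs → PUB
  | 0, _, _ => .leaf
  | fuel + 1, n, E =>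
    if n ≤ 1 then .leaf
    else
      let j := arcFrom 1 E
      if j = 0 then .middle (decode fuel (n - 1) (shiftDown 1 E))
      else if j = 2 then .right (decode fuel (n - 1) (shiftDown 1 (E.erase (1, 2))))
      else if arcFrom 2 E = 0 then .left (decode fuel (n - 1) (E.image leftShrink))
      else
        .both (decode fuel (j - 2) (shiftDown 1 (E.filter fun p => 2 ≤ p.1 ∧ p.2 ≤ j - 1)))
              (decode fuel (n + 1 - j) (shiftDown (j - 1) (E.filter fun p => j ≤ p.1)))

lemma decode_treeArcs : ∀ t : PUB, t.good → ∀ fuel, t.size ≤ fuel →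
    decode fuel t.size (treeArcs t) = t := by
  intro t
  induction t with
  | leaf =>
    intro _ fuel _
    cases fuel with
    | zero => rfl
    | succ f => simp [decode, PUB.size]
  | middle t ih =>
    intro hg fuel hfuel
    obtain ⟨hd, _⟩ := good_diag t hg
    have hs := size_pos t
    obtain ⟨f, rfl⟩ : ∃ f, fuel = f + 1 := by
      cases fuel with
      | zero => simp [PUB.size] at hfuel
      | succ f => exact ⟨f, rfl⟩
    have hAF : arcFrom 1 (treeArcs (.middle t)) = 0 := by
      apply arcFrom_eq_zero
      intro j hj
      rw [treeArcs, mem_shiftUp] at hj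
      obtain ⟨p, hp, e1, e2⟩ := hj
      have := hd.1 p hp; omega
    rw [PUB.size, decode]
    simp only [hAF]
    rw [if_neg (by omega), if_pos trivial]
    rw [show t.size + 1 - 1 = t.size from rfl, treeArcs, shiftDown_shiftUp]
    rw [ih hg f (by simpa [PUB.size] using hfuel)]
  | right t ih =>
    intro hg fuel hfuel
    obtain ⟨hd, _⟩ := good_diag t hg
    obtain ⟨hD, _⟩ := good_diag (.right t) hg
    have hs := size_pos t
    obtain ⟨f, rfl⟩ : ∃ f, fuel = f + 1 := by
      cases fuel with
      | zero => simp [PUB.size] at hfuel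
      | succ f => exact ⟨f, rfl⟩
    have hAF : arcFrom 1 (treeArcs (.right t)) = 2 :=
      arcFrom_eq hD.2.1 (by simp [treeArcs])
    rw [PUB.size, decode]
    simp only [hAF]
    rw [if_neg (by omega), if_neg (by omega), if_pos trivial]
    have herase : (treeArcs (.right t)).erase (1, 2) = shiftUp 1 (treeArcs t) := by
      rw [treeArcs, Finset.erase_insert]
      rw [mem_shiftUp]
      rintro ⟨p, hp, e1, e2⟩
      have := hd.1 p hp; omega
    rw [show t.size + 1 - 1 = t.size from rfl, herase, shiftDown_shiftUp]
    rw [ih hg f (by simpa [PUB.size] using hfuel)]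
  | left t ih =>
    intro hg fuel hfuel
    obtain ⟨hg1, hg2⟩ := hg
    obtain ⟨hd, hlr⟩ := good_diag t hg1
    obtain ⟨hD, _⟩ := good_diag (.left t) ⟨hg1, hg2⟩
    have hs := size_pos t
    have hne : arcFrom 1 (treeArcs t) ≠ 0 := hlr.mpr hg2
    set jt := arcFrom 1 (treeArcs t) with hjt
    have hroot : (1, jt) ∈ treeArcs t := arcFrom_mem hd.2.1 hne
    have hjt2 : 2 ≤ jt := by have := hd.1 _ hroot; omega
    obtain ⟨f, rfl⟩ : ∃ f, fuel = f + 1 := by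
      cases fuel with
      | zero => simp [PUB.size] at hfuel
      | succ f => exact ⟨f, rfl⟩
    have hmem : (1, jt + 1) ∈ treeArcs (.left t) := by
      rw [treeArcs, Finset.mem_image]
      exact ⟨(1, jt), hroot, by simp [leftMap]⟩
    have hAF : arcFrom 1 (treeArcs (.left t)) = jt + 1 := arcFrom_eq hD.2.1 hmem
    have hAF2 : arcFrom 2 (treeArcs (.left t)) = 0 := by
      apply arcFrom_eq_zero
      intro k hk
      rw [treeArcs, Finset.mem_image] at hk
      obtain ⟨p, hp, he⟩ := hk
      have hb := hd.1 p hp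
      rw [leftMap] at he
      split at he <;> simp only [Prod.mk.injEq] at he <;> omega
    rw [PUB.size, decode]
    simp only [hAF, hAF2]
    rw [if_neg (by omega), if_neg (by omega), if_neg (by omega), if_pos trivial]
    have hshrink : (treeArcs (.left t)).image leftShrink = treeArcs t := by
      rw [treeArcs, Finset.image_image]
      have : (treeArcs t).image (leftShrink ∘ leftMap) = (treeArcs t).image id := by
        apply Finset.image_congr
        intro p hp
        have hb := hd.1 p hp
        simp only [Function.comp_apply, leftMap, leftShrink, id]
        by_cases h1 : p.1 = 1
        · simp only [h1, if_pos rfl, if_pos rfl, Nat.add_sub_cancel]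
          exact Prod.ext (by simp [h1]) rfl
        · have h0 : p.1 ≠ 0 := by omega
          simp [h1, h0]
      simpa using this
    rw [show t.size + 1 - 1 = t.size from rfl, hshrink]
    rw [ih hg1 f (by simpa [PUB.size] using hfuel)]
  | both a g iha ihg =>
    intro hgood fuel hfuel
    obtain ⟨ha, hgg, halr⟩ := hgood
    obtain ⟨hda, hlra⟩ := good_diag a ha
    obtain ⟨hdg, _⟩ := good_diag g hgg
    obtain ⟨hD, _⟩ := good_diag (.both a g) ⟨ha, hgg, halr⟩
    have hsa := size_pos a
    have hsg := size_pos g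
    obtain ⟨f, rfl⟩ : ∃ f, fuel = f + 1 := by
      cases fuel with
      | zero => simp [PUB.size] at hfuel
      | succ f => exact ⟨f, rfl⟩
    have hAF : arcFrom 1 (treeArcs (.both a g)) = a.size + 2 :=
      arcFrom_eq hD.2.1 (by simp [treeArcs])
    have hnea : arcFrom 1 (treeArcs a) ≠ 0 := hlra.mpr halr
    set ja := arcFrom 1 (treeArcs a) with hja
    have hroota : (1, ja) ∈ treeArcs a := arcFrom_mem hda.2.1 hnea
    have hmem2 : (2, ja + 1) ∈ treeArcs (.both a g) := by
      rw [treeArcs, Finset.mem_insert, Finset.mem_union, mem_shiftUp]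
      exact Or.inr (Or.inl ⟨(1, ja), hroota, rfl, rfl⟩)
    have hAF2 : arcFrom 2 (treeArcs (.both a g)) = ja + 1 := arcFrom_eq hD.2.1 hmem2
    rw [PUB.size, decode]
    simp only [hAF, hAF2]
    rw [if_neg (by omega), if_neg (by omega), if_neg (by omega), if_neg (by omega)]
    have hint : (treeArcs (.both a g)).filter (fun p => 2 ≤ p.1 ∧ p.2 ≤ a.size + 2 - 1)
        = shiftUp 1 (treeArcs a) := by
      ext p
      simp only [Finset.mem_filter, treeArcs, Finset.mem_insert, Finset.mem_union]
      constructor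
      · rintro ⟨rfl | h | h, h2, h3⟩
        · exfalso; simp at h2
        · exact h
        · exfalso
          rw [show p = (p.1, p.2) from rfl, mem_shiftUp] at h
          obtain ⟨q, hq, e1, e2⟩ := h
          have := hdg.1 q hq; omega
      · intro h
        rw [show p = (p.1, p.2) from rfl, mem_shiftUp] at h
        obtain ⟨q, hq, e1, e2⟩ := h
        have := hda.1 q hq
        refine ⟨Or.inr (Or.inl ?_), by omega, by omega⟩
        rw [show p = (p.1, p.2) from rfl, mem_shiftUp]
        exact ⟨q, hq, e1, e2⟩
    have htail : (treeArcs (.both a g)).filter (fun p => a.size + 2 ≤ p.1)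
        = shiftUp (a.size + 1) (treeArcs g) := by
      ext p
      simp only [Finset.mem_filter, treeArcs, Finset.mem_insert, Finset.mem_union]
      constructor
      · rintro ⟨rfl | h | h, h2⟩
        · exfalso; simp at h2
        · exfalso
          rw [show p = (p.1, p.2) from rfl, mem_shiftUp] at h
          obtain ⟨q, hq, e1, e2⟩ := h
          have := hda.1 q hq; omega
        · exact h
      · intro h
        rw [show p = (p.1, p.2) from rfl, mem_shiftUp] at h
        obtain ⟨q, hq, e1, e2⟩ := h
        have := hdg.1 q hq
        refine ⟨Or.inr (Or.inr ?_), by omega⟩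
        rw [show p = (p.1, p.2) from rfl, mem_shiftUp]
        exact ⟨q, hq, e1, e2⟩
    rw [hint, htail, show a.size + 2 - 1 = a.size + 1 from rfl,
      shiftDown_shiftUp, shiftDown_shiftUp]
    rw [show a.size + 2 - 2 = a.size from rfl]
    rw [show a.size + g.size + 1 + 1 - (a.size + 2) = g.size by omega]
    rw [iha ha f (by simp [PUB.size] at hfuel; omega),
        ihg hgg f (by simp [PUB.size] at hfuel; omega)]


lemma isDiag_subset {n : ℕ} {E E' : Arcs} (h : E' ⊆ E) (hd : IsDiag n E) : IsDiag n E' := by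
  obtain ⟨hb, hf, hg, hc⟩ := hd
  refine ⟨fun p hp => hb p (h hp), fun p hp q hq => hf p (h hp) q (h hq),
    fun p hp q hq => hg p (h hp) q (h hq), ?_⟩
  rintro ⟨p, hp, q, hq, h1, h2, h3⟩
  exact hc ⟨p, h hp, q, h hq, h1, h2, h3⟩

lemma isDiag_shrinkBound {n m : ℕ} {E : Arcs} (hd : IsDiag n E) (h : ∀ p ∈ E, p.2 ≤ m) :
    IsDiag m E := by
  obtain ⟨hb, hf, hg, hc⟩ := hd
  exact ⟨fun p hp => ⟨(hb p hp).1, (hb p hp).2.1, h p hp⟩, hf, hg, hc⟩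

lemma isDiag_leftShrink {n j : ℕ} {E : Arcs} (hE : IsDiag n E) (hroot : (1, j) ∈ E)
    (hj : 3 ≤ j) (h2 : ∀ p ∈ E, p.1 ≠ 2) : IsDiag (n - 1) (E.image leftShrink) := by
  obtain ⟨hb, hf, hg, hc⟩ := hE
  have hjn : j ≤ n := (hb _ hroot).2.2
  have mem : ∀ q ∈ E.image leftShrink, ∃ p ∈ E, leftShrink p = q := by
    intro q hq; simpa [Finset.mem_image] using hq
  have lm2 : ∀ p : ℕ × ℕ, (leftShrink p).2 = p.2 - 1 := by
    intro p; rw [leftShrink]; split <;> rfl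
  have key : ∀ p ∈ E, (p = (1, j) ∧ leftShrink p = (1, j - 1)) ∨
      (3 ≤ p.1 ∧ leftShrink p = (p.1 - 1, p.2 - 1)) := by
    intro p hp
    by_cases h1 : p.1 = 1
    · left
      have : p = (1, j) := hf p hp (1, j) hroot h1
      subst this
      exact ⟨rfl, by rw [leftShrink]; simp⟩
    · right
      have := hb p hp
      have := h2 p hp
      exact ⟨by omega, by rw [leftShrink]; simp [h1]⟩
  refine ⟨?_, ?_, ?_, ?_⟩
  · intro q hq
    obtain ⟨p, hp, rfl⟩ := mem q hq
    have hbp := hb p hp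
    rcases key p hp with ⟨rfl, e⟩ | ⟨e1, e⟩ <;> rw [e] <;> simp <;> omega
  · intro p' hp' q' hq' he
    obtain ⟨p, hp, rfl⟩ := mem p' hp'
    obtain ⟨q, hq, rfl⟩ := mem q' hq'
    have hbp := hb p hp; have hbq := hb q hq
    rcases key p hp with ⟨rfl, e⟩ | ⟨e1, e⟩ <;> rcases key q hq with ⟨rfl, f⟩ | ⟨f1, f⟩
    · rfl
    · rw [e, f] at he ⊢; simp at he ⊢; omega
    · rw [e, f] at he ⊢; simp at he ⊢; omega
    · rw [e, f] at he ⊢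
      simp only at he
      have : p = q := hf p hp q hq (by omega)
      rw [this]
  · intro p' hp' q' hq' he
    obtain ⟨p, hp, rfl⟩ := mem p' hp'
    obtain ⟨q, hq, rfl⟩ := mem q' hq'
    have hbp := hb p hp; have hbq := hb q hq
    rw [lm2, lm2] at he
    have : p = q := hg p hp q hq (by omega)
    rw [this]
  · rintro ⟨p', hp', q', hq', h1', h2', h3'⟩
    obtain ⟨p, hp, rfl⟩ := mem p' hp'
    obtain ⟨q, hq, rfl⟩ := mem q' hq'
    have hbp := hb p hp; have hbq := hb q hq
    rcases key p hp with ⟨hpe, e⟩ | ⟨e1, e⟩ <;> rcases key q hq with ⟨hqe, f⟩ | ⟨f1, f⟩ <;>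
      rw [e, f] at h1' h2' h3' <;>
      simp only [Prod.fst, Prod.snd] at h1' h2' h3'
    · omega
    · exact hc ⟨(1, j), hroot, q, hq, by omega, by omega, by omega⟩
    · rw [hqe] at hbq; simp only [Prod.fst, Prod.snd] at hbq; omega
    · exact hc ⟨p, hp, q, hq, by omega, by omega, by omega⟩

lemma decode_valid (n : ℕ) (hn : 1 ≤ n) :
    ∀ E, IsDiag n E → ∀ fuel, n ≤ fuel →
      (decode fuel n E).good ∧ (decode fuel n E).size = n ∧
      treeArcs (decode fuel n E) = E ∧ ((decode fuel n E).hasLR ↔ arcFrom 1 E ≠ 0) := by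
  induction n using Nat.strong_induction_on with
  | _ n IH =>
  intro E hE fuel hfuel
  obtain ⟨hb, hf, hg, hc⟩ := hE
  obtain ⟨f, rfl⟩ : ∃ f, fuel = f + 1 := by
    cases fuel with
    | zero => omega
    | succ f => exact ⟨f, rfl⟩
  by_cases h1 : n ≤ 1
  · -- n = 1 : E is empty
    have hn1 : n = 1 := by omega
    subst hn1
    have hempty : E = ∅ := by
      ext p
      simp only [Finset.notMem_empty, iff_false]
      intro hp
      have := hb p hp; omega
    subst hempty
    rw [decode]
    simp only [if_pos (le_refl 1)]
    refine ⟨trivial, rfl, rfl, ?_⟩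
    rw [arcFrom_eq_zero (by simp)]
    simp [PUB.hasLR]
  · -- n ≥ 2
    set j := arcFrom 1 E with hj
    by_cases hj0 : j = 0
    · -- middle case : no arc from 1
      have hno1 : ∀ p ∈ E, 2 ≤ p.1 := by
        intro p hp
        have hbp := hb p hp
        rcases Nat.lt_or_ge p.1 2 with h | h
        · exfalso
          have hp1 : p.1 = 1 := by omega
          have : p = (1, p.2) := by
            rw [show p = (p.1, p.2) from rfl, hp1]
          rw [this] at hp
          have := arcFrom_eq hf hp
          omega
        · exact h
      have hE' : IsDiag (n - 1) (shiftDown 1 E) :=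
        isDiag_shiftDown ⟨hb, hf, hg, hc⟩ hno1
      obtain ⟨c1, c2, c3, c4⟩ := IH (n - 1) (by omega) (by omega) (shiftDown 1 E) hE' f (by omega)
      rw [decode]
      simp only [← hj, if_neg h1, if_pos hj0]
      refine ⟨c1, by rw [PUB.size, c2]; omega, ?_, ?_⟩
      · rw [treeArcs, c3, shiftUp_shiftDown (fun p hp => by have := hno1 p hp; omega)
          (fun p hp => by have := hb p hp; omega)]
      · simp [PUB.hasLR, hj0]
    · have hroot : (1, j) ∈ E := arcFrom_mem hf hj0
      have hjb := hb _ hroot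
      by_cases hj2 : j = 2
      · -- right case
        rw [hj2] at hroot
        have hsub : E.erase (1, 2) ⊆ E := Finset.erase_subset _ _
        have hlow : ∀ p ∈ E.erase (1, 2), 2 ≤ p.1 := by
          intro p hp
          rw [Finset.mem_erase] at hp
          have hbp := hb p hp.2
          rcases Nat.lt_or_ge p.1 2 with h | h
          · exfalso
            have hp1 : p.1 = 1 := by omega
            have : p = (1, 2) := hf p hp.2 (1, 2) hroot hp1
            exact hp.1 this
          · exact h
        have hlow2 : ∀ p ∈ E.erase (1, 2), 3 ≤ p.2 := by
          intro p hp
          have := hlow p hp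
          have := hb p (hsub hp)
          omega
        have hE' : IsDiag (n - 1) (shiftDown 1 (E.erase (1, 2))) :=
          isDiag_shiftDown (isDiag_subset hsub ⟨hb, hf, hg, hc⟩) hlow
        obtain ⟨c1, c2, c3, c4⟩ := IH (n - 1) (by omega) (by omega) _ hE' f (by omega)
        rw [decode]
        simp only [← hj, if_neg h1, if_neg hj0, if_pos hj2]
        refine ⟨c1, by rw [PUB.size, c2]; omega, ?_, ?_⟩
        · rw [treeArcs, c3, shiftUp_shiftDown (fun p hp => by have := hlow p hp; omega)
            (fun p hp => by have := hlow2 p hp; omega)]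
          exact Finset.insert_erase hroot
        · simp [PUB.hasLR, ← hj, hj0]
      · by_cases hno2 : arcFrom 2 E = 0
        · -- left case
          have hj3 : 3 ≤ j := by omega
          have hne2 : ∀ p ∈ E, p.1 ≠ 2 := by
            intro p hp hp2
            have : p = (2, p.2) := by
              rw [show p = (p.1, p.2) from rfl, hp2]
            rw [this] at hp
            have := arcFrom_eq hf hp
            have := hb _ hp
            omega
          have hE' : IsDiag (n - 1) (E.image leftShrink) :=
            isDiag_leftShrink ⟨hb, hf, hg, hc⟩ hroot hj3 hne2
          obtain ⟨c1, c2, c3, c4⟩ := IH (n - 1) (by omega) (by omega) _ hE' f (by omega)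
          have hrootmem : (1, j - 1) ∈ E.image leftShrink := by
            rw [Finset.mem_image]
            exact ⟨(1, j), hroot, by rw [leftShrink]; simp⟩
          have hAF' : arcFrom 1 (E.image leftShrink) = j - 1 := arcFrom_eq hE'.2.1 hrootmem
          rw [decode]
          simp only [← hj, if_neg h1, if_neg hj0, if_neg hj2, if_pos hno2]
          refine ⟨⟨c1, c4.mpr (by omega)⟩, by rw [PUB.size, c2]; omega, ?_, ?_⟩
          · rw [treeArcs, c3, Finset.image_image]
            have : E.image (leftMap ∘ leftShrink) = E.image id := by
              apply Finset.image_congr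
              intro p hp
              have hbp := hb p hp
              have hne2p := hne2 p hp
              simp only [Function.comp_apply, id_eq]
              by_cases hp1 : p.1 = 1
              · have hpe : p = (1, j) := hf p hp (1, j) hroot hp1
                subst hpe
                rw [leftShrink_eq_one rfl, leftMap_eq_one rfl]
                simp only [Prod.mk.injEq, true_and]
                omega
              · rw [leftShrink_eq_ne hp1,
                  leftMap_eq_ne (p := (p.1 - 1, p.2 - 1)) (by simp only [Prod.fst]; omega)]
                simp only [Prod.fst, Prod.snd, Prod.ext_iff]
                constructor <;> omega
            simpa using this
          · simp [PUB.hasLR, ← hj, hj0]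
        · -- both case
          have hj3 : 3 ≤ j := by omega
          set I := E.filter (fun p => 2 ≤ p.1 ∧ p.2 ≤ j - 1) with hI
          set T := E.filter (fun p => j ≤ p.1) with hT
          have trich : ∀ p ∈ E, p = (1, j) ∨ p ∈ I ∨ p ∈ T := by
            intro p hp
            have hbp := hb p hp
            by_cases hp1 : p.1 = 1
            · exact Or.inl (hf p hp (1, j) hroot hp1)
            · right
              by_cases hpj : j ≤ p.1
              · exact Or.inr (Finset.mem_filter.mpr ⟨hp, hpj⟩)
              · left
                refine Finset.mem_filter.mpr ⟨hp, by omega, ?_⟩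
                rcases Nat.lt_or_ge p.2 j with h | h
                · omega
                · exfalso
                  rcases Nat.eq_or_lt_of_le h with h' | h'
                  · have : p = (1, j) := hg p hp (1, j) hroot h'.symm
                    rw [this] at hp1; simp at hp1
                  · exact hc ⟨(1, j), hroot, p, hp, by omega, by omega, by omega⟩
          have hIsub : I ⊆ E := Finset.filter_subset _ _
          have hTsub : T ⊆ E := Finset.filter_subset _ _
          have hIbound : ∀ p ∈ I, 2 ≤ p.1 ∧ p.2 ≤ j - 1 := by
            intro p hp; exact (Finset.mem_filter.mp hp).2
          have hTbound : ∀ p ∈ T, j ≤ p.1 := by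
            intro p hp; exact (Finset.mem_filter.mp hp).2
          have hEI : IsDiag (j - 2) (shiftDown 1 I) := by
            apply isDiag_shiftDown (n := j - 1)
            · exact isDiag_shrinkBound (isDiag_subset hIsub ⟨hb, hf, hg, hc⟩)
                (fun p hp => (hIbound p hp).2)
            · exact fun p hp => (hIbound p hp).1
          have hET : IsDiag (n + 1 - j) (shiftDown (j - 1) T) := by
            have := isDiag_shiftDown (k := j - 1) (isDiag_subset hTsub ⟨hb, hf, hg, hc⟩)
              (fun p hp => by have := hTbound p hp; omega)
            rwa [show n - (j - 1) = n + 1 - j by omega] at this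
          have harc2 : (2, arcFrom 2 E) ∈ E := arcFrom_mem hf hno2
          have harc2I : (2, arcFrom 2 E) ∈ I := by
            rcases trich _ harc2 with h | h | h
            · simp at h
            · exact h
            · have := hTbound _ h; simp at this; omega
          have harc2I' : (1, arcFrom 2 E - 1) ∈ shiftDown 1 I := by
            rw [shiftDown, Finset.mem_image]
            exact ⟨(2, arcFrom 2 E), harc2I, rfl⟩
          have hup2 : 3 ≤ arcFrom 2 E := by
            have := hb _ harc2; simp at this; omega
          obtain ⟨a1, a2, a3, a4⟩ := IH (j - 2) (by omega) (by omega) _ hEI f (by omega)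
          obtain ⟨g1, g2, g3, g4⟩ := IH (n + 1 - j) (by omega) (by omega) _ hET f (by omega)
          rw [decode]
          simp only [← hj, if_neg h1, if_neg hj0, if_neg hj2, if_neg hno2]
          have haLR : (decode f (j - 2) (shiftDown 1 I)).hasLR := by
            apply a4.mpr
            rw [arcFrom_eq hEI.2.1 harc2I']
            omega
          refine ⟨⟨a1, g1, haLR⟩, by rw [PUB.size, a2, g2]; omega, ?_, ?_⟩
          · rw [treeArcs, a3, g3, a2]
            rw [show j - 2 + 2 = j by omega, show j - 2 + 1 = j - 1 by omega]
            rw [shiftUp_shiftDown (fun p hp => by have := hIbound p hp; omega)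
              (fun p hp => by have := hb p (hIsub hp); have := hIbound p hp; omega)]
            rw [shiftUp_shiftDown (fun p hp => by have := hTbound p hp; omega)
              (fun p hp => by have := hb p (hTsub hp); have := hTbound p hp; omega)]
            ext p
            simp only [Finset.mem_insert, Finset.mem_union]
            constructor
            · rintro (rfl | h | h)
              · exact hroot
              · exact hIsub h
              · exact hTsub h
            · intro hp
              rcases trich p hp with h | h | h
              · exact Or.inl h
              · exact Or.inr (Or.inl h)
              · exact Or.inr (Or.inr h)
          · simp [PUB.hasLR, ← hj, hj0]


/-! ### Partitions and diagrams -/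

section Partitions

variable {n : ℕ}

noncomputable def pArcs (p : Finpartition (Finset.Icc 1 n : Finset ℕ)) : Arcs :=
  ((Finset.Icc 1 n) ×ˢ (Finset.Icc 1 n)).filter (fun q => stdEdge p q.1 q.2)

lemma mem_pArcs {p : Finpartition (Finset.Icc 1 n : Finset ℕ)} {i j : ℕ} :
    (i, j) ∈ pArcs p ↔ stdEdge p i j := by
  rw [pArcs, Finset.mem_filter, Finset.mem_product]
  constructor
  · exact fun h => h.2
  · intro h
    obtain ⟨hij, B, hB, hi, hj, -⟩ := id h
    exact ⟨⟨p.le hB hi, p.le hB hj⟩, h⟩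

lemma pArcs_partial (p : Finpartition (Finset.Icc 1 n : Finset ℕ)) :
    (∀ q ∈ pArcs p, 1 ≤ q.1 ∧ q.1 < q.2 ∧ q.2 ≤ n) ∧
    (∀ q ∈ pArcs p, ∀ r ∈ pArcs p, q.1 = r.1 → q = r) ∧
    (∀ q ∈ pArcs p, ∀ r ∈ pArcs p, q.2 = r.2 → q = r) := by
  refine ⟨?_, ?_, ?_⟩
  · intro q hq
    have hs : stdEdge p q.1 q.2 := mem_pArcs.mp hq
    rw [pArcs, Finset.mem_filter, Finset.mem_product] at hq
    simp only [Finset.mem_Icc] at hq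
    exact ⟨hq.1.1.1, hs.1, hq.1.2.2⟩
  · rintro ⟨a, b⟩ hq ⟨c, d⟩ hr he
    subst he
    obtain ⟨h1, B, hB, hi, hj, hm⟩ := mem_pArcs.mp hq
    obtain ⟨h1', B', hB', hi', hj', hm'⟩ := mem_pArcs.mp hr
    have hBB : B = B' := p.eq_of_mem_parts hB hB' hi hi'
    subst hBB
    have : b = d := by
      rcases Nat.lt_trichotomy b d with h | h | h
      · exact absurd ⟨h1, h⟩ (hm' b hj)
      · exact h
      · exact absurd ⟨h1', h⟩ (hm d hj')
    simp [this]
  · rintro ⟨a, b⟩ hq ⟨c, d⟩ hr he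
    subst he
    obtain ⟨h1, B, hB, hi, hj, hm⟩ := mem_pArcs.mp hq
    obtain ⟨h1', B', hB', hi', hj', hm'⟩ := mem_pArcs.mp hr
    have hBB : B = B' := p.eq_of_mem_parts hB hB' hj hj'
    subst hBB
    have : a = c := by
      rcases Nat.lt_trichotomy a c with h | h | h
      · exact absurd ⟨h, h1'⟩ (hm c hi')
      · exact h
      · exact absurd ⟨h, h1⟩ (hm' a hi)
    simp [this]

lemma isDiag_pArcs {p : Finpartition (Finset.Icc 1 n : Finset ℕ)} (hp : noncrossing p) :
    IsDiag n (pArcs p) := by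
  obtain ⟨h1, h2, h3⟩ := pArcs_partial p
  refine ⟨h1, h2, h3, ?_⟩
  rintro ⟨q, hq, r, hr, ha, hb, hc⟩
  exact hp ⟨q.1, q.2, r.1, r.2, mem_pArcs.mp (by simpa using hq),
    mem_pArcs.mp (by simpa using hr), ha, hb, hc⟩

/-- symmetric step relation -/
def rel (E : Arcs) : ℕ → ℕ → Prop :=
  Relation.ReflTransGen (fun a b => (a, b) ∈ E ∨ (b, a) ∈ E)

/-- forward (arc-following) reachability -/
def fwd (E : Arcs) : ℕ → ℕ → Prop := Relation.ReflTransGen (fun a b => (a, b) ∈ E)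

lemma rel_refl (E : Arcs) (x : ℕ) : rel E x x := Relation.ReflTransGen.refl

lemma rel_symm {E : Arcs} {x y : ℕ} (h : rel E x y) : rel E y x :=
  (@Relation.ReflTransGen.stdSymm ℕ _ ⟨fun a b hab => hab.symm.imp id id⟩).symm _ _ h

lemma rel_trans {E : Arcs} {x y z : ℕ} (h : rel E x y) (h' : rel E y z) : rel E x z :=
  Relation.ReflTransGen.trans h h'

lemma fwd_rel {E : Arcs} {x y : ℕ} (h : fwd E x y) : rel E x y := by
  induction h with
  | refl => exact rel_refl E x
  | tail _ hs ih => exact rel_trans ih (Relation.ReflTransGen.single (Or.inl hs))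

lemma fwd_le {E : Arcs} {m : ℕ} (hE : ∀ q ∈ E, 1 ≤ q.1 ∧ q.1 < q.2 ∧ q.2 ≤ m)
    {x y : ℕ} (h : fwd E x y) : x ≤ y := by
  induction h with
  | refl => exact le_refl x
  | tail _ hs ih => have := hE _ hs; simp at this; omega

lemma fwd_total {E : Arcs} (hf : ∀ q ∈ E, ∀ r ∈ E, q.1 = r.1 → q = r)
    {z a : ℕ} (h1 : fwd E z a) : ∀ b, fwd E z b → fwd E a b ∨ fwd E b a := by
  induction h1 using Relation.ReflTransGen.head_induction_on with
  | refl => exact fun b h2 => Or.inl h2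
  | @head z c step tail ih =>
    intro b h2
    rcases Relation.ReflTransGen.cases_head h2 with rfl | ⟨c', step', tail'⟩
    · exact Or.inr (Relation.ReflTransGen.head step tail)
    · have hcc : c' = c := by
        have := hf (z, c) step (z, c') step' rfl
        simpa using this.symm
      exact ih b (hcc ▸ tail')

lemma common_source {E : Arcs} (hg : ∀ q ∈ E, ∀ r ∈ E, q.2 = r.2 → q = r)
    {x y : ℕ} (h : rel E x y) : ∃ z, fwd E z x ∧ fwd E z y := by
  induction h with
  | refl => exact ⟨x, Relation.ReflTransGen.refl, Relation.ReflTransGen.refl⟩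
  | @tail w y hxw step ih =>
    obtain ⟨z, zx, zw⟩ := ih
    rcases step with hwy | hyw
    · exact ⟨z, zx, zw.tail hwy⟩
    · rcases Relation.ReflTransGen.cases_tail zw with rfl | ⟨c, zc, hcw⟩
      · exact ⟨y, (Relation.ReflTransGen.single hyw).trans zx, Relation.ReflTransGen.refl⟩
      · have : c = y := by
          have := hg (c, w) hcw (y, w) hyw rfl
          simpa using this
        exact ⟨z, zx, this ▸ zc⟩

lemma rel_not_between {E : Arcs} (hE : IsDiag n E) {i j : ℕ} (hij : (i, j) ∈ E)
    {t : ℕ} (ht : rel E i t) : ¬ (i < t ∧ t < j) := by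
  obtain ⟨hb, hf, hg, _⟩ := hE
  rintro ⟨h1, h2⟩
  obtain ⟨z, zi, zt⟩ := common_source hg ht
  rcases fwd_total hf zi t zt with h | h
  · rcases Relation.ReflTransGen.cases_head h with rfl | ⟨c, step, tail⟩
    · omega
    · have : c = j := by
        have := hf (i, c) step (i, j) hij rfl
        simpa using this
      subst this
      have := fwd_le hb tail
      omega
  · have := fwd_le hb h
    omega

noncomputable def partOf (E : Arcs) (x : ℕ) : Finset ℕ :=
  (Finset.Icc 1 n).filter (fun y => rel E x y)

lemma mem_partOf {E : Arcs} {x y : ℕ} :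
    y ∈ partOf (n := n) E x ↔ y ∈ Finset.Icc 1 n ∧ rel E x y := by
  rw [partOf, Finset.mem_filter]

lemma partOf_congr {E : Arcs} {x y : ℕ} (h : rel E x y) :
    partOf (n := n) E x = partOf (n := n) E y := by
  ext z
  rw [mem_partOf, mem_partOf]
  exact and_congr_right fun _ =>
    ⟨fun hz => rel_trans (rel_symm h) hz, fun hz => rel_trans h hz⟩

noncomputable def toPart (E : Arcs) : Finpartition (Finset.Icc 1 n : Finset ℕ) where
  parts := (Finset.Icc 1 n).image (partOf (n := n) E)
  supIndep := by
    rw [Finset.supIndep_iff_pairwiseDisjoint]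
    intro A hA B hB hAB
    simp only [Finset.coe_image, Set.mem_image, Finset.mem_coe] at hA hB
    obtain ⟨x, hx, rfl⟩ := hA
    obtain ⟨y, hy, rfl⟩ := hB
    simp only [Function.onFun, id_eq]
    rw [Finset.disjoint_left]
    intro z hzx hzy
    apply hAB
    rw [mem_partOf] at hzx hzy
    exact partOf_congr (rel_trans hzx.2 (rel_symm hzy.2))
  sup_parts := by
    apply le_antisymm
    · apply Finset.sup_le
      intro A hA
      simp only [Finset.mem_image] at hA
      obtain ⟨x, hx, rfl⟩ := hA
      intro z hz
      exact (mem_partOf.mp hz).1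
    · intro x hx
      rw [Finset.mem_sup]
      exact ⟨partOf E x, Finset.mem_image_of_mem _ hx, mem_partOf.mpr ⟨hx, rel_refl E x⟩⟩
  bot_notMem := by
    simp only [Finset.bot_eq_empty, Finset.mem_image]
    rintro ⟨x, hx, he⟩
    have : x ∈ partOf (n := n) E x := mem_partOf.mpr ⟨hx, rel_refl E x⟩
    rw [he] at this
    simp at this

lemma stdEdge_toPart {E : Arcs} (hE : IsDiag n E) {i j : ℕ} :
    stdEdge (toPart (n := n) E) i j ↔ (i, j) ∈ E := by
  constructor
  · rintro ⟨hij, B, hB, hi, hj, hm⟩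
    simp only [toPart, Finset.mem_image] at hB
    obtain ⟨x, hx, rfl⟩ := hB
    have hri : rel E x i := (mem_partOf.mp hi).2
    have hrj : rel E x j := (mem_partOf.mp hj).2
    have hrel : rel E i j := rel_trans (rel_symm hri) hrj
    obtain ⟨z, zi, zj⟩ := common_source hE.2.2.1 hrel
    rcases fwd_total hE.2.1 zi j zj with h | h
    · rcases Relation.ReflTransGen.cases_head h with rfl | ⟨c, step, tail⟩
      · omega
      · have hc := hE.1 _ step
        have hcj : c ≤ j := fwd_le hE.1 tail
        have hcB : c ∈ partOf (n := n) E x := by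
          rw [mem_partOf]
          refine ⟨?_, rel_trans hri (Relation.ReflTransGen.single (Or.inl step))⟩
          simp only [Finset.mem_Icc]
          simp only at hc
          omega
        rcases Nat.lt_or_ge c j with h' | h'
        · exact absurd ⟨by simp only at hc; omega, h'⟩ (hm c hcB)
        · have : c = j := by omega
          subst this
          exact step
    · have := fwd_le hE.1 h
      omega
  · intro h
    have hb := hE.1 _ h
    simp only at hb
    have hiI : i ∈ Finset.Icc 1 n := by simp only [Finset.mem_Icc]; omega
    refine ⟨hb.2.1, partOf E i, ?_, mem_partOf.mpr ⟨hiI, rel_refl E i⟩, ?_, ?_⟩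
    · exact Finset.mem_image_of_mem _ hiI
    · refine mem_partOf.mpr ⟨by simp only [Finset.mem_Icc]; omega,
        Relation.ReflTransGen.single (Or.inl h)⟩
    · intro t ht
      exact rel_not_between hE h (mem_partOf.mp ht).2

lemma noncrossing_toPart {E : Arcs} (hE : IsDiag n E) : noncrossing (toPart (n := n) E) := by
  rintro ⟨i1, j1, i2, j2, h1, h2, ha, hb, hc⟩
  exact hE.2.2.2 ⟨(i1, j1), (stdEdge_toPart hE).mp h1, (i2, j2), (stdEdge_toPart hE).mp h2,
    ha, hb, hc⟩

lemma pArcs_toPart {E : Arcs} (hE : IsDiag n E) : pArcs (toPart (n := n) E) = E := by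
  ext q
  rw [show q = (q.1, q.2) from rfl, mem_pArcs, stdEdge_toPart hE]

lemma rel_of_same_block {p : Finpartition (Finset.Icc 1 n : Finset ℕ)} {B : Finset ℕ}
    (hB : B ∈ p.parts) : ∀ d x y, x ∈ B → y ∈ B → x ≤ y → y - x ≤ d → rel (pArcs p) x y := by
  intro d
  induction d with
  | zero =>
    intro x y hx hy hxy hd
    have : x = y := by omega
    subst this
    exact rel_refl _ x
  | succ d ih =>
    intro x y hx hy hxy hd
    rcases Nat.eq_or_lt_of_le hxy with rfl | hlt
    · exact rel_refl _ x
    · have hne : (B.filter (fun t => x < t)).Nonempty := ⟨y, Finset.mem_filter.mpr ⟨hy, hlt⟩⟩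
      set m := (B.filter (fun t => x < t)).min' hne with hm
      have hmB : m ∈ B ∧ x < m := by
        have := Finset.min'_mem _ hne
        rw [← hm] at this
        exact Finset.mem_filter.mp this
      have hmy : m ≤ y := Finset.min'_le _ y (Finset.mem_filter.mpr ⟨hy, hlt⟩)
      have hstd : stdEdge p x m := by
        refine ⟨hmB.2, B, hB, hx, hmB.1, ?_⟩
        rintro t ht ⟨ht1, ht2⟩
        have : m ≤ t := Finset.min'_le _ t (Finset.mem_filter.mpr ⟨ht, ht1⟩)
        omega
      have harc : (x, m) ∈ pArcs p := mem_pArcs.mpr hstd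
      exact rel_trans (Relation.ReflTransGen.single (Or.inl harc))
        (ih m y hmB.1 hy hmy (by omega))

lemma same_block_of_rel {p : Finpartition (Finset.Icc 1 n : Finset ℕ)} {x y : ℕ}
    (hx : x ∈ Finset.Icc 1 n) (h : rel (pArcs p) x y) :
    ∃ B ∈ p.parts, x ∈ B ∧ y ∈ B := by
  induction h with
  | refl =>
    obtain ⟨B, hB, hxB⟩ := p.exists_mem hx
    exact ⟨B, hB, hxB, hxB⟩
  | @tail w y hxw step ih =>
    obtain ⟨B, hB, hxB, hwB⟩ := ih
    rcases step with hwy | hyw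
    · obtain ⟨_, B', hB', hw', hy', _⟩ := mem_pArcs.mp hwy
      have : B = B' := p.eq_of_mem_parts hB hB' hwB hw'
      subst this
      exact ⟨B, hB, hxB, hy'⟩
    · obtain ⟨_, B', hB', hy', hw', _⟩ := mem_pArcs.mp hyw
      have : B = B' := p.eq_of_mem_parts hB hB' hwB hw'
      subst this
      exact ⟨B, hB, hxB, hy'⟩

lemma partOf_eq_block {p : Finpartition (Finset.Icc 1 n : Finset ℕ)} {B : Finset ℕ}
    (hB : B ∈ p.parts) {x : ℕ} (hx : x ∈ B) : partOf (n := n) (pArcs p) x = B := by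
  ext y
  rw [mem_partOf]
  constructor
  · rintro ⟨hy, hr⟩
    obtain ⟨B', hB', hxB', hyB'⟩ := same_block_of_rel (p.le hB hx) hr
    have : B = B' := p.eq_of_mem_parts hB hB' hx hxB'
    subst this
    exact hyB'
  · intro hy
    refine ⟨p.le hB hy, ?_⟩
    rcases Nat.le_total x y with h | h
    · exact rel_of_same_block hB (y - x) x y hx hy h (le_refl _)
    · exact rel_symm (rel_of_same_block hB (x - y) y x hy hx h (le_refl _))

lemma toPart_pArcs (p : Finpartition (Finset.Icc 1 n : Finset ℕ)) : toPart (pArcs p) = p := by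
  apply Finpartition.ext
  ext B
  simp only [toPart, Finset.mem_image]
  constructor
  · rintro ⟨x, hx, rfl⟩
    obtain ⟨B, hB, hxB⟩ := p.exists_mem hx
    rw [partOf_eq_block hB hxB]
    exact hB
  · intro hB
    obtain ⟨x, hx⟩ := p.nonempty_of_mem_parts hB
    exact ⟨x, p.le hB hx, partOf_eq_block hB hx⟩

end Partitions

noncomputable def equivPartDiag (n : ℕ) :
    {p : Finpartition (Finset.Icc 1 n : Finset ℕ) // noncrossing p} ≃ {E : Arcs // IsDiag n E} where
  toFun q := ⟨pArcs q.1, isDiag_pArcs q.2⟩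
  invFun E := ⟨toPart E.1, noncrossing_toPart E.2⟩
  left_inv q := Subtype.ext (toPart_pArcs q.1)
  right_inv E := Subtype.ext (pArcs_toPart E.2)

noncomputable def equivDiagTree (n : ℕ) (hn : 1 ≤ n) :
    {E : Arcs // IsDiag n E} ≃ {t : PUB // t.size = n ∧ t.good} where
  toFun E := ⟨decode n n E.1, (decode_valid n hn E.1 E.2 n le_rfl).2.1,
    (decode_valid n hn E.1 E.2 n le_rfl).1⟩
  invFun t := ⟨treeArcs t.1, by
    have := (good_diag t.1 t.2.2).1
    rwa [t.2.1] at this⟩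
  left_inv E := Subtype.ext (decode_valid n hn E.1 E.2 n le_rfl).2.2.1
  right_inv t := Subtype.ext (by
    obtain ⟨t, ht, hg⟩ := t
    show decode n n (treeArcs t) = t
    subst ht
    exact decode_treeArcs t hg t.size le_rfl)

end NCP

theorem card_noncrossing_eq_card_trees (n : ℕ) (hn : 1 ≤ n) :
    Nat.card {p : Finpartition (Finset.Icc 1 n : Finset ℕ) // noncrossing p} =
      Nat.card {t : PUB // t.size = n ∧ t.good} := by
  apply Nat.card_congr
  refine Equiv.trans (NCP.equivPartDiag n) (NCP.equivDiagTree n hn)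
end

section
/- Let d2(n) be the number of 2-distant noncrossing partitions of [n]. Then d2(0)=d2(1)=1, and for n ≥ 2, d2(n) = 2·d2(n-1) + Σ_{i=2}^{n-1} d2(n-i)·(d2(i) - d2(i-1)). -/
section DNCAux

open Finset
open scoped Classical

def okE (n : ℕ) (E : Finset (ℕ × ℕ)) : Prop :=
  (∀ e ∈ E, 1 ≤ e.1 ∧ e.1 < e.2 ∧ e.2 ≤ n) ∧
  (∀ e ∈ E, ∀ f ∈ E, e.1 = f.1 → e = f) ∧
  (∀ e ∈ E, ∀ f ∈ E, e.2 = f.2 → e = f) ∧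
  (∀ e ∈ E, ∀ f ∈ E, ¬ (e.1 < f.1 ∧ f.1 < e.2 ∧ e.2 < f.2 ∧ 2 ≤ e.2 - f.1))

noncomputable def Dset (n : ℕ) : Finset (Finset (ℕ × ℕ)) :=
  ((Finset.Icc 1 n ×ˢ Finset.Icc 1 n).powerset).filter (fun E => okE n E)

noncomputable def Eset (m : ℕ) : Finset (Finset (ℕ × ℕ)) :=
  (Dset m).filter (fun E => ∃ s, (s, m) ∈ E)

lemma mem_Dset {n : ℕ} {E : Finset (ℕ × ℕ)} : E ∈ Dset n ↔ okE n E := by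
  unfold Dset
  rw [mem_filter, mem_powerset]
  refine ⟨fun h => h.2, fun h => ⟨fun e he => ?_, h⟩⟩
  have := h.1 e he
  rw [mem_product, mem_Icc, mem_Icc]
  omega

noncomputable def qm (t : ℕ) (E : Finset (ℕ × ℕ)) : Finset (ℕ × ℕ) :=
  if ∃ s, (s, t + 1) ∈ E then E.filter (fun e => e.2 ≤ t + 1)
  else insert (t, t + 1) (E.filter (fun e => e.2 ≤ t + 1))

def shiftE (t : ℕ) (S : Finset (ℕ × ℕ)) : Finset (ℕ × ℕ) :=
  S.image (fun e => (e.1 + t, e.2 + t))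

noncomputable def unshiftE (t : ℕ) (S : Finset (ℕ × ℕ)) : Finset (ℕ × ℕ) :=
  S.image (fun e => (e.1 - t, e.2 - t))

set_option maxHeartbeats 1000000 in
lemma card_Dset_mid {n t : ℕ} (ht1 : 1 ≤ t) (ht2 : t + 2 ≤ n) :
    ((Dset n).filter (fun E => (t, n) ∈ E)).card
      = ((Dset (n - t - 1)) ×ˢ (Eset (t + 1))).card := by
  refine Finset.card_bij'
    (fun E _ => (unshiftE t (E.filter (fun e => t + 1 ≤ e.1)), qm t E))
    (fun p _ => (p.2.erase (t, t + 1)) ∪ shiftE t p.1 ∪ {(t, n)})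
    ?hi ?hj ?li ?ri
  case hi =>
    intro E hE
    show (unshiftE t (E.filter (fun e => t + 1 ≤ e.1)), qm t E)
      ∈ (Dset (n - t - 1)) ×ˢ (Eset (t + 1))
    rw [mem_filter, mem_Dset] at hE
    obtain ⟨⟨h1, h2, h3, h4⟩, htn⟩ := hE
    have hA : ∀ e ∈ E, e.1 = t → e = (t, n) := fun e he h =>
      h2 e he (t, n) htn (by simpa using h)
    have hB : ∀ e ∈ E, e.2 = n → e = (t, n) := fun e he h =>
      h3 e he (t, n) htn (by simpa using h)
    rw [mem_product]
    constructor
    · -- right part is a valid set on [n-t-1]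
      rw [mem_Dset]
      have hmem : ∀ x ∈ unshiftE t (E.filter (fun e => t + 1 ≤ e.1)),
          ∃ e ∈ E, t + 1 ≤ e.1 ∧ e.2 ≤ n - 1 ∧ (e.1 - t, e.2 - t) = x := by
        intro x hx
        obtain ⟨e, he, rfl⟩ := Finset.mem_image.1 hx
        rw [Finset.mem_filter] at he
        refine ⟨e, he.1, he.2, ?_, rfl⟩
        have := h1 e he.1
        have hn2 : e.2 ≠ n := by
          intro h
          have := hB e he.1 h
          rw [this] at he
          omega
        omega
      refine ⟨fun x hx => ?_, fun x hx y hy hxy => ?_, fun x hx y hy hxy => ?_,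
        fun x hx y hy => ?_⟩
      · obtain ⟨e, he, he1, he2, rfl⟩ := hmem x hx
        have := h1 e he
        simp
        omega
      · obtain ⟨e, he, he1, he2, rfl⟩ := hmem x hx
        obtain ⟨f, hf, hf1, hf2, rfl⟩ := hmem y hy
        have hbe := h1 e he
        have hbf := h1 f hf
        simp at hxy
        have : e.1 = f.1 := by omega
        rw [h2 e he f hf this]
      · obtain ⟨e, he, he1, he2, rfl⟩ := hmem x hx
        obtain ⟨f, hf, hf1, hf2, rfl⟩ := hmem y hy
        have hbe := h1 e he
        have hbf := h1 f hf
        simp at hxy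
        have : e.2 = f.2 := by omega
        rw [h3 e he f hf this]
      · rintro ⟨c1, c2, c3, c4⟩
        obtain ⟨e, he, he1, he2, rfl⟩ := hmem x hx
        obtain ⟨f, hf, hf1, hf2, rfl⟩ := hmem y hy
        have hbe := h1 e he
        have hbf := h1 f hf
        simp at c1 c2 c3 c4
        exact h4 e he f hf (by omega)
    · -- left part is in Eset (t+1)
      rw [Eset, mem_filter, mem_Dset]
      unfold qm
      split_ifs with hex
      · obtain ⟨s0, hs0⟩ := hex
        have hsub : E.filter (fun e => e.2 ≤ t + 1) ⊆ E := Finset.filter_subset _ _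
        refine ⟨⟨fun e he => ?_, fun e he f hf => h2 e (hsub he) f (hsub hf),
          fun e he f hf => h3 e (hsub he) f (hsub hf),
          fun e he f hf => h4 e (hsub he) f (hsub hf)⟩, s0, ?_⟩
        · rw [Finset.mem_filter] at he
          have := h1 e he.1
          omega
        · rw [Finset.mem_filter]
          have := h1 _ hs0
          exact ⟨hs0, by simp⟩
      · have hmm : ∀ e ∈ E.filter (fun e => e.2 ≤ t + 1), e.2 ≠ t + 1 := by
          intro e he h
          rw [Finset.mem_filter] at he
          apply hex
          refine ⟨e.1, ?_⟩
          have : (e.1, t + 1) = e := by rw [← h]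
          rw [this]
          exact he.1
        refine ⟨⟨fun e he => ?_, fun e he f hf hef => ?_, fun e he f hf hef => ?_,
          fun e he f hf => ?_⟩, t, Finset.mem_insert_self _ _⟩
        · rcases Finset.mem_insert.1 he with rfl | he
          · simp; omega
          · rw [Finset.mem_filter] at he
            have := h1 e he.1
            omega
        · rcases Finset.mem_insert.1 he with rfl | he <;>
            rcases Finset.mem_insert.1 hf with rfl | hf
          · rfl
          · exfalso
            rw [Finset.mem_filter] at hf
            have hfA := hA f hf.1 (by simpa using hef.symm)
            rw [hfA] at hf
            simp at hf
            omega
          · exfalso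
            rw [Finset.mem_filter] at he
            have heA := hA e he.1 (by simpa using hef)
            rw [heA] at he
            simp at he
            omega
          · exact h2 e (Finset.filter_subset _ _ he) f (Finset.filter_subset _ _ hf) hef
        · rcases Finset.mem_insert.1 he with rfl | he <;>
            rcases Finset.mem_insert.1 hf with rfl | hf
          · rfl
          · exact absurd (by simpa using hef.symm) (hmm f hf)
          · exact absurd (by simpa using hef) (hmm e he)
          · exact h3 e (Finset.filter_subset _ _ he) f (Finset.filter_subset _ _ hf) hef
        · rcases Finset.mem_insert.1 he with rfl | he <;>
            rcases Finset.mem_insert.1 hf with rfl | hf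
          · simp
          · rw [Finset.mem_filter] at hf
            simp
            omega
          · rw [Finset.mem_filter] at he
            rintro ⟨c1, c2, c3, c4⟩
            simp at c1 c2 c3 c4
            omega
          · exact h4 e (Finset.filter_subset _ _ he) f (Finset.filter_subset _ _ hf)
  case hj =>
    intro p hp
    show (p.2.erase (t, t + 1)) ∪ shiftE t p.1 ∪ {(t, n)}
      ∈ (Dset n).filter (fun E => (t, n) ∈ E)
    rw [mem_product, mem_Dset] at hp
    obtain ⟨hr, hq⟩ := hp
    rw [Eset, mem_filter, mem_Dset] at hq
    obtain ⟨⟨q1, q2, q3, q4⟩, s, hs⟩ := hq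
    obtain ⟨r1, r2, r3, r4⟩ := hr
    have hsle : s ≤ t := by have := q1 _ hs; simp at this; omega
    have hcls : ∀ x ∈ (p.2.erase (t, t + 1)) ∪ shiftE t p.1 ∪ {(t, n)},
        (x ∈ p.2 ∧ ¬(x.1 = t ∧ x.2 = t + 1) ∧ 1 ≤ x.1 ∧ x.1 < x.2 ∧ x.2 ≤ t + 1)
        ∨ ((x.1 - t, x.2 - t) ∈ p.1 ∧ t + 1 ≤ x.1 ∧ x.1 < x.2 ∧ t + 2 ≤ x.2 ∧ x.2 ≤ n - 1)
        ∨ x = (t, n) := by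
      intro x hx
      rcases Finset.mem_union.1 hx with hx' | hx'
      · rcases Finset.mem_union.1 hx' with hx'' | hx''
        · left
          have hm := Finset.mem_of_mem_erase hx''
          have hb := q1 _ hm
          have hne := Finset.ne_of_mem_erase hx''
          refine ⟨hm, fun hcc => hne ?_, hb.1, hb.2.1, hb.2.2⟩
          exact Prod.ext hcc.1 hcc.2
        · right; left
          obtain ⟨e, he, rfl⟩ := Finset.mem_image.1 hx''
          have hb := r1 e he
          have hid : ((e.1 + t, e.2 + t).1 - t, (e.1 + t, e.2 + t).2 - t) = e := by
            cases e; dsimp only; congr 1 <;> omega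
          rw [hid]
          refine ⟨he, ?_, ?_, ?_, ?_⟩ <;> dsimp only <;> omega
      · right; right; exact Finset.mem_singleton.1 hx'
    rw [mem_filter, mem_Dset]
    refine ⟨⟨fun x hx => ?_, fun x hx y hy hxy => ?_, fun x hx y hy hxy => ?_,
      fun x hx y hy => ?_⟩, by simp⟩
    · rcases hcls x hx with ⟨_, _, h⟩ | ⟨_, h⟩ | rfl
      · omega
      · omega
      · dsimp only; omega
    · -- first coordinates equal implies equal
      rcases hcls x hx with ⟨hx2, hxc, hxb⟩ | ⟨hx1, hxb⟩ | rfl <;>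
        rcases hcls y hy with ⟨hy2, hyc, hyb⟩ | ⟨hy1, hyb⟩ | h2
      · exact q2 x hx2 y hy2 hxy
      · omega
      · exfalso
        rw [h2] at hxy
        dsimp only at hxy
        exact hxc ⟨by omega, by omega⟩
      · omega
      · have heq := r2 _ hx1 _ hy1 (by dsimp only; omega)
        have h2' := congrArg Prod.snd heq
        dsimp only at h2'
        exact Prod.ext hxy (by omega)
      · exfalso
        rw [h2] at hxy
        dsimp only at hxy
        omega
      · exfalso
        dsimp only at hxy
        exact hyc ⟨by omega, by omega⟩
      · exfalso
        dsimp only at hxy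
        omega
      · rw [h2]
    · -- second coordinates equal implies equal
      rcases hcls x hx with ⟨hx2, hxc, hxb⟩ | ⟨hx1, hxb⟩ | rfl <;>
        rcases hcls y hy with ⟨hy2, hyc, hyb⟩ | ⟨hy1, hyb⟩ | h2
      · exact q3 x hx2 y hy2 hxy
      · omega
      · exfalso
        rw [h2] at hxy
        dsimp only at hxy
        omega
      · omega
      · have heq := r3 _ hx1 _ hy1 (by dsimp only; omega)
        have h1' := congrArg Prod.fst heq
        dsimp only at h1'
        exact Prod.ext (by omega) hxy
      · exfalso
        rw [h2] at hxy
        dsimp only at hxy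
        omega
      · exfalso
        dsimp only at hxy
        omega
      · exfalso
        dsimp only at hxy
        omega
      · rw [h2]
    · -- no 2-distant crossing
      rintro ⟨c1, c2, c3, c4⟩
      rcases hcls x hx with ⟨hx2, hxc, hxb⟩ | ⟨hx1, hxb⟩ | hxtn <;>
        rcases hcls y hy with ⟨hy2, hyc, hyb⟩ | ⟨hy1, hyb⟩ | hytn
      · exact q4 x hx2 y hy2 ⟨c1, c2, c3, c4⟩
      · omega
      · rw [hytn] at c1 c2 c3 c4
        dsimp only at c1 c2 c3 c4
        omega
      · omega
      · apply r4 _ hx1 _ hy1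
        dsimp only
        omega
      · rw [hytn] at c1 c2 c3 c4
        dsimp only at c1 c2 c3 c4
        omega
      · rw [hxtn] at c1 c2 c3 c4
        dsimp only at c1 c2 c3 c4
        omega
      · rw [hxtn] at c1 c2 c3 c4
        dsimp only at c1 c2 c3 c4
        omega
      · rw [hxtn, hytn] at c1
        dsimp only at c1
        omega
  case li =>
    intro E hE
    rw [mem_filter, mem_Dset] at hE
    obtain ⟨⟨h1, h2, h3, h4⟩, htn⟩ := hE
    have hA : ∀ e ∈ E, e.1 = t → e = (t, n) := fun e he h =>
      h2 e he (t, n) htn (by simpa using h)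
    have hB : ∀ e ∈ E, e.2 = n → e = (t, n) := fun e he h =>
      h3 e he (t, n) htn (by simpa using h)
    have hnotc : (t, t + 1) ∉ E := by
      intro h
      have := hA _ h rfl
      simp at this
      omega
    have herase : (qm t E).erase (t, t + 1) = E.filter (fun e => e.2 ≤ t + 1) := by
      unfold qm
      split_ifs with h
      · exact Finset.erase_eq_of_notMem (fun hc => hnotc (Finset.mem_filter.1 hc).1)
      · exact Finset.erase_insert (fun hc => hnotc (Finset.mem_filter.1 hc).1)
    have hshift : shiftE t (unshiftE t (E.filter (fun e => t + 1 ≤ e.1)))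
        = E.filter (fun e => t + 1 ≤ e.1) := by
      unfold shiftE unshiftE
      ext x
      simp only [Finset.mem_image, Finset.mem_filter]
      constructor
      · rintro ⟨y, ⟨e, ⟨he, he1⟩, rfl⟩, rfl⟩
        have hb := h1 e he
        have : (e.1 - t + t, e.2 - t + t) = e := by cases e; simp; omega
        rw [this]
        exact ⟨he, he1⟩
      · rintro ⟨he, he1⟩
        refine ⟨(x.1 - t, x.2 - t), ⟨x, ⟨he, he1⟩, rfl⟩, ?_⟩
        have hb := h1 x he
        cases x; simp; omega
    show (qm t E).erase (t, t + 1)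
        ∪ shiftE t (unshiftE t (E.filter (fun e => t + 1 ≤ e.1))) ∪ {(t, n)} = E
    rw [herase, hshift]
    ext x
    simp only [Finset.mem_union, Finset.mem_filter, Finset.mem_singleton]
    constructor
    · rintro ((⟨h, _⟩ | ⟨h, _⟩) | rfl)
      · exact h
      · exact h
      · exact htn
    · intro hx
      rcases eq_or_ne x (t, n) with rfl | hne
      · right; rfl
      · left
        have hb := h1 x hx
        rcases Nat.lt_trichotomy x.1 t with h | h | h
        · left
          refine ⟨hx, ?_⟩
          by_contra hc
          push_neg at hc
          have hxn : x.2 ≠ n := fun h' => hne (hB x hx h')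
          exact h4 x hx (t, n) htn (by simp; omega)
        · exact absurd (hA x hx h) hne
        · right; exact ⟨hx, by omega⟩
  case ri =>
    intro p hp
    rw [mem_product, mem_Dset] at hp
    obtain ⟨hr, hq⟩ := hp
    rw [Eset, mem_filter, mem_Dset] at hq
    obtain ⟨⟨q1, q2, q3, q4⟩, s, hs⟩ := hq
    obtain ⟨r1, r2, r3, r4⟩ := hr
    have hfil1 : (p.2.erase (t, t + 1) ∪ shiftE t p.1 ∪ {(t, n)}).filter
        (fun e => t + 1 ≤ e.1) = shiftE t p.1 := by
      ext x
      simp only [Finset.mem_filter, Finset.mem_union, Finset.mem_singleton, shiftE,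
        Finset.mem_image]
      constructor
      · rintro ⟨(hx | hx) | rfl, hx1⟩
        · exfalso
          have := q1 _ (Finset.mem_of_mem_erase hx)
          omega
        · exact hx
        · exfalso; omega
      · rintro ⟨e, he, rfl⟩
        have := r1 e he
        exact ⟨Or.inl (Or.inr ⟨e, he, rfl⟩), by simp; omega⟩
    have hfil2 : (p.2.erase (t, t + 1) ∪ shiftE t p.1 ∪ {(t, n)}).filter
        (fun e => e.2 ≤ t + 1) = p.2.erase (t, t + 1) := by
      ext x
      simp only [Finset.mem_filter, Finset.mem_union, Finset.mem_singleton, shiftE,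
        Finset.mem_image]
      constructor
      · rintro ⟨(hx | hx) | rfl, hx2⟩
        · exact hx
        · exfalso
          obtain ⟨e, he, rfl⟩ := hx
          have := r1 e he
          simp at hx2
          omega
        · exfalso; omega
      · intro hx
        have := q1 _ (Finset.mem_of_mem_erase hx)
        exact ⟨Or.inl (Or.inl hx), by omega⟩
    have hunshift : unshiftE t (shiftE t p.1) = p.1 := by
      unfold shiftE unshiftE
      rw [Finset.image_image]
      rw [show ((fun e : ℕ × ℕ => (e.1 - t, e.2 - t)) ∘ (fun e : ℕ × ℕ => (e.1 + t, e.2 + t)))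
        = id by funext e; cases e; simp]
      exact Finset.image_id
    have hq' : qm t (p.2.erase (t, t + 1) ∪ shiftE t p.1 ∪ {(t, n)}) = p.2 := by
      unfold qm
      rw [hfil2]
      split_ifs with h
      · obtain ⟨x, hx⟩ := h
        have hx' : (x, t + 1) ∈ p.2.erase (t, t + 1) := by
          rcases Finset.mem_union.1 hx with hx2 | hx2
          · rcases Finset.mem_union.1 hx2 with h' | h'
            · exact h'
            · exfalso
              obtain ⟨e, he, hee⟩ := Finset.mem_image.1 h'
              have := r1 e he
              have : e.2 + t = t + 1 := by
                have := congrArg Prod.snd hee; simpa using this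
              omega
          · exfalso
            have h2' : ((t : ℕ), n) = ((x : ℕ), t + 1) := (Finset.mem_singleton.1 hx2).symm
            have := congrArg Prod.snd h2'
            simp at this
            omega
        apply Finset.erase_eq_of_notMem
        intro hc
        have heq := q3 _ (Finset.mem_of_mem_erase hx') _ hc (by simp)
        exact Finset.ne_of_mem_erase hx' heq
      · have hst : s = t := by
          by_contra hst
          apply h
          refine ⟨s, Finset.mem_union.2 (Or.inl (Finset.mem_union.2 (Or.inl ?_)))⟩
          apply Finset.mem_erase.2
          refine ⟨?_, hs⟩
          intro hc
          have := congrArg Prod.fst hc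
          simp at this
          exact hst this
        rw [hst] at hs
        exact Finset.insert_erase hs
    show (unshiftE t ((p.2.erase (t, t + 1) ∪ shiftE t p.1 ∪ {(t, n)}).filter
        (fun e => t + 1 ≤ e.1)), qm t (p.2.erase (t, t + 1) ∪ shiftE t p.1 ∪ {(t, n)}))
        = p
    rw [hfil1, hunshift, hq']

lemma Dset_zero : Dset 0 = {∅} := by
  ext E
  simp only [mem_Dset, mem_singleton]
  constructor
  · intro h
    ext e
    simp only [Finset.notMem_empty, iff_false]
    intro he
    have := h.1 e he
    omega
  · rintro rfl
    exact ⟨by simp, by simp, by simp, by simp⟩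

lemma Dset_one : Dset 1 = {∅} := by
  ext E
  simp only [mem_Dset, mem_singleton]
  constructor
  · intro h
    ext e
    simp only [Finset.notMem_empty, iff_false]
    intro he
    have := h.1 e he
    omega
  · rintro rfl
    exact ⟨by simp, by simp, by simp, by simp⟩

/-- if no edge ends at n, a valid edge set on [n] is a valid edge set on [n-1] -/
lemma Dset_no_last {n : ℕ} (hn : 1 ≤ n) :
    (Dset n).filter (fun E => ¬ ∃ s, (s, n) ∈ E)
      = Dset (n - 1) := by
  ext E
  rw [mem_filter, mem_Dset, mem_Dset]
  constructor
  · rintro ⟨⟨h1, h2, h3, h4⟩, hno⟩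
    refine ⟨fun e he => ?_, h2, h3, h4⟩
    have := h1 e he
    have : e.2 ≠ n := fun h => hno ⟨e.1, by rw [← h]; exact he⟩
    omega
  · rintro ⟨h1, h2, h3, h4⟩
    refine ⟨⟨fun e he => ?_, h2, h3, h4⟩, ?_⟩
    · have := h1 e he; omega
    · rintro ⟨s, hs⟩
      have := h1 _ hs
      simp at this
      omega

lemma card_Dset_eq_Eset_add {m : ℕ} (hm : 1 ≤ m) :
    (Dset m).card = (Eset m).card + (Dset (m - 1)).card := by
  classical
  rw [← Dset_no_last hm]
  unfold Eset
  rw [← Finset.card_filter_add_card_filter_not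
    (s := Dset m) (p := fun E => ∃ s, (s, m) ∈ E)]

lemma card_Dset_penult {n : ℕ} (hn : 2 ≤ n) :
    ((Dset n).filter (fun E => (n - 1, n) ∈ E)).card = (Dset (n - 1)).card := by
  classical
  apply Finset.card_bij' (i := fun E _ => E.erase (n - 1, n))
    (j := fun E _ => insert (n - 1, n) E)
  · intro E hE
    rw [mem_filter] at hE
    exact Finset.insert_erase hE.2
  · intro E hE
    rw [mem_Dset] at hE
    apply Finset.erase_insert
    intro h
    have := hE.1 _ h
    simp at this
    omega

  · intro E hE
    rw [mem_filter, mem_Dset] at hE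
    obtain ⟨⟨h1, h2, h3, h4⟩, hmem⟩ := hE
    rw [mem_Dset]
    refine ⟨fun e he => ?_, fun e he f hf => ?_, fun e he f hf => ?_, fun e he f hf => ?_⟩
    · rw [mem_erase] at he
      have hb := h1 e he.2
      have : e.2 ≠ n := by
        intro h
        exact he.1 (h3 e he.2 (n-1, n) hmem (by simpa using h))
      omega
    · exact h2 e (mem_of_mem_erase he) f (mem_of_mem_erase hf)
    · exact h3 e (mem_of_mem_erase he) f (mem_of_mem_erase hf)
    · exact h4 e (mem_of_mem_erase he) f (mem_of_mem_erase hf)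
  · intro E hE
    rw [mem_Dset] at hE
    obtain ⟨h1, h2, h3, h4⟩ := hE
    have hnotin : (n - 1, n) ∉ E := by
      intro h; have := h1 _ h; simp at this; omega
    have hb' : ∀ e ∈ E, 1 ≤ e.1 ∧ e.1 < e.2 ∧ e.2 ≤ n - 1 := h1
    rw [mem_filter, mem_Dset]
    refine ⟨⟨fun e he => ?_, fun e he f hf hef => ?_, fun e he f hf hef => ?_,
      fun e he f hf => ?_⟩, mem_insert_self _ _⟩
    · rcases mem_insert.1 he with h | h
      · subst h; simp; omega
      · have := h1 e h; omega
    · rcases mem_insert.1 he with h | h <;> rcases mem_insert.1 hf with h' | h'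
      · rw [h, h']
      · subst h; have := h1 f h'; simp at hef; omega
      · subst h'; have := h1 e h; simp at hef; omega
      · exact h2 e h f h' hef
    · rcases mem_insert.1 he with h | h <;> rcases mem_insert.1 hf with h' | h'
      · rw [h, h']
      · subst h; have := h1 f h'; simp at hef; omega
      · subst h'; have := h1 e h; simp at hef; omega
      · exact h3 e h f h' hef
    · rcases mem_insert.1 he with h | h <;> rcases mem_insert.1 hf with h' | h'
      · subst h; subst h'; simp
      · subst h; have := h1 f h'; simp; omega
      · subst h'; have := h1 e h; simp; omega
      · exact h4 e h f h'
lemma card_Dset_fiber_sum {n : ℕ} (hn : 1 ≤ n) :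
    (Dset n).card = (Dset (n - 1)).card
      + ∑ t ∈ Finset.Icc 1 (n - 1), ((Dset n).filter (fun E => (t, n) ∈ E)).card := by
  classical
  have hsplit := Finset.card_filter_add_card_filter_not
    (s := Dset n) (p := fun E => ∃ s, (s, n) ∈ E)
  rw [Dset_no_last hn] at hsplit
  have hbi : (Dset n).filter (fun E => ∃ s, (s, n) ∈ E)
      = (Finset.Icc 1 (n - 1)).biUnion (fun t => (Dset n).filter (fun E => (t, n) ∈ E)) := by
    ext E
    simp only [mem_filter, mem_biUnion, mem_Icc]
    constructor
    · rintro ⟨hE, s, hs⟩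
      have hb := (mem_Dset.1 hE).1 _ hs
      exact ⟨s, by omega, hE, hs⟩
    · rintro ⟨t, _, hE, ht⟩
      exact ⟨hE, t, ht⟩
  have hdisj : ∀ x ∈ Finset.Icc 1 (n - 1), ∀ y ∈ Finset.Icc 1 (n - 1), x ≠ y →
      Disjoint ((Dset n).filter (fun E => (x, n) ∈ E)) ((Dset n).filter (fun E => (y, n) ∈ E)) := by
    intro x _ y _ hxy
    rw [Finset.disjoint_left]
    intro E hx hy
    rw [mem_filter] at hx hy
    have := (mem_Dset.1 hx.1).2.2.1 _ hx.2 _ hy.2 rfl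
    simp at this
    exact hxy this
  rw [hbi, Finset.card_biUnion hdisj] at hsplit
  omega

lemma Dset_card_rec {n : ℕ} (hn : 2 ≤ n) :
    ((Dset n).card : ℤ) = 2 * (Dset (n - 1)).card
      + ∑ i ∈ Finset.Icc 2 (n - 1),
          ((Dset (n - i)).card : ℤ) * (((Dset i).card : ℤ) - ((Dset (i - 1)).card : ℤ)) := by
  have h0 := card_Dset_fiber_sum (show 1 ≤ n by omega)
  have hIcc : Finset.Icc 1 (n - 1) = insert (n - 1) (Finset.Icc 1 (n - 2)) := by
    ext x; simp only [Finset.mem_Icc, Finset.mem_insert]; omega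
  rw [hIcc, Finset.sum_insert (by simp only [Finset.mem_Icc]; omega)] at h0
  rw [card_Dset_penult hn] at h0
  have hsum : ∀ t ∈ Finset.Icc 1 (n - 2), ((Dset n).filter (fun E => (t, n) ∈ E)).card
      = (Dset (n - t - 1)).card * (Eset (t + 1)).card := by
    intro t ht
    rw [Finset.mem_Icc] at ht
    rw [card_Dset_mid ht.1 (by omega), Finset.card_product]
  rw [Finset.sum_congr rfl hsum] at h0
  have him : Finset.Icc 2 (n - 1) = (Finset.Icc 1 (n - 2)).image (· + 1) := by
    ext x
    simp only [Finset.mem_Icc, Finset.mem_image]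
    constructor
    · intro h; exact ⟨x - 1, by omega, by omega⟩
    · rintro ⟨y, hy, rfl⟩; omega
  have hEi : ∀ i, 1 ≤ i → ((Eset i).card : ℤ)
      = ((Dset i).card : ℤ) - ((Dset (i - 1)).card : ℤ) := by
    intro i hi
    have := card_Dset_eq_Eset_add hi
    push_cast [this]
    ring
  rw [him, Finset.sum_image (by intro a _ b _ h; simp only at h; omega)]
  have hterm : ∀ t ∈ Finset.Icc 1 (n - 2),
      ((Dset (n - (t + 1))).card : ℤ) * (((Dset (t + 1)).card : ℤ) - ((Dset (t + 1 - 1)).card : ℤ))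
        = ((Dset (n - t - 1)).card : ℤ) * ((Eset (t + 1)).card : ℤ) := by
    intro t ht
    rw [hEi (t + 1) (by omega)]
    have h1 : n - (t + 1) = n - t - 1 := by omega
    rw [h1]
  rw [Finset.sum_congr rfl hterm]
  have := congrArg (fun k : ℕ => (k : ℤ)) h0
  push_cast at this
  rw [this]
  ring

/-- successor function of an edge set -/
noncomputable def fE (E : Finset (ℕ × ℕ)) (a : ℕ) : ℕ :=
  (E.filter (fun e => e.1 = a)).sup (fun e => e.2)

section fE_lemmas

variable {n : ℕ} {E : Finset (ℕ × ℕ)}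

lemma fE_eq (hE : okE n E) {a b : ℕ} (hab : (a, b) ∈ E) : fE E a = b := by
  have : E.filter (fun e => e.1 = a) = {(a, b)} := by
    ext x
    simp only [Finset.mem_filter, Finset.mem_singleton]
    constructor
    · rintro ⟨hx, hx1⟩
      exact hE.2.1 x hx (a, b) hab (by simpa using hx1)
    · rintro rfl
      exact ⟨hab, rfl⟩
  rw [fE, this, Finset.sup_singleton]

lemma fE_mem (hE : okE n E) {a : ℕ} (ha : fE E a ≠ 0) : (a, fE E a) ∈ E := by
  by_cases hne : (E.filter (fun e => e.1 = a)).Nonempty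
  · obtain ⟨x, hx⟩ := hne
    rw [Finset.mem_filter] at hx
    have hx' : (a, x.2) ∈ E := by
      have : (a, x.2) = x := by cases x; simp_all
      rw [this]; exact hx.1
    rw [fE_eq hE hx']
    exact hx'
  · exfalso
    apply ha
    rw [Finset.not_nonempty_iff_eq_empty] at hne
    rw [fE, hne, Finset.sup_empty]
    rfl

lemma fE_lt (hE : okE n E) {a : ℕ} (ha : fE E a ≠ 0) :
    1 ≤ a ∧ a < fE E a ∧ fE E a ≤ n := hE.1 _ (fE_mem hE ha)

lemma fE_iter_le (hE : okE n E) : ∀ (m : ℕ) (a : ℕ), (fE E)^[m] a ≠ 0 →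
    a + m ≤ (fE E)^[m] a := by
  intro m
  induction m with
  | zero => intro a _; simp
  | succ k ih =>
    intro a ha
    rw [Function.iterate_succ_apply'] at ha ⊢
    have h1 := fE_lt hE ha
    have h2 : (fE E)^[k] a ≠ 0 := by omega
    have := ih a h2
    omega

lemma fE_zero (hE : okE n E) : fE E 0 = 0 := by
  by_contra h
  have := fE_lt hE h
  omega

lemma fE_iter_zero (hE : okE n E) (m : ℕ) : (fE E)^[m] 0 = 0 := by
  induction m with
  | zero => rfl
  | succ k ih => rw [Function.iterate_succ_apply', ih, fE_zero hE]

lemma fE_inj (hE : okE n E) {x y : ℕ} (h : fE E x = fE E y) (hx : fE E x ≠ 0) : x = y := by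
  have h1 := fE_mem hE hx
  have h2 := fE_mem hE (h ▸ hx)
  rw [← h] at h2
  have := hE.2.2.1 _ h1 _ h2 rfl
  simpa using this

/-- reachability along successor edges -/
def ReachE (E : Finset (ℕ × ℕ)) (a b : ℕ) : Prop := ∃ m : ℕ, (fE E)^[m] a = b

def RelE (E : Finset (ℕ × ℕ)) (a b : ℕ) : Prop := ReachE E a b ∨ ReachE E b a

lemma relE_refl (E : Finset (ℕ × ℕ)) (a : ℕ) : RelE E a a := Or.inl ⟨0, rfl⟩

lemma relE_symm {E : Finset (ℕ × ℕ)} {a b : ℕ} (h : RelE E a b) : RelE E b a := h.symm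

lemma reachE_trans {E : Finset (ℕ × ℕ)} {a b c : ℕ} (h1 : ReachE E a b) (h2 : ReachE E b c) :
    ReachE E a c := by
  obtain ⟨m, rfl⟩ := h1
  obtain ⟨k, rfl⟩ := h2
  exact ⟨k + m, (Function.iterate_add_apply _ k m a)⟩

lemma reachE_meet (hE : okE n E) : ∀ (m k a c b : ℕ), b ≠ 0 →
    (fE E)^[m] a = b → (fE E)^[k] c = b → RelE E a c := by
  intro m
  induction m with
  | zero =>
    intro k a c b _ ha hc
    exact Or.inr ⟨k, by rw [hc, ← ha, Function.iterate_zero_apply]⟩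
  | succ j ih =>
    intro k a c b hb ha hc
    match k with
    | 0 => exact Or.inl ⟨j + 1, by rw [ha, ← hc, Function.iterate_zero_apply]⟩
    | Nat.succ l =>
      rw [Function.iterate_succ_apply'] at ha hc
      have hb' : (fE E)^[j] a = (fE E)^[l] c := by
        apply fE_inj hE (by rw [ha, hc]) (by rw [ha]; exact hb)
      have hnz : (fE E)^[j] a ≠ 0 := by
        intro h
        rw [h, fE_zero hE] at ha
        exact hb ha.symm
      exact ih l a c _ hnz rfl hb'.symm

lemma relE_trans (hE : okE n E) {a b c : ℕ} (hb : b ≠ 0)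
    (h1 : RelE E a b) (h2 : RelE E b c) : RelE E a c := by
  rcases h1 with h1 | h1 <;> rcases h2 with h2 | h2
  · exact Or.inl (reachE_trans h1 h2)
  · obtain ⟨m, hm⟩ := h1
    obtain ⟨k, hk⟩ := h2
    exact reachE_meet hE m k a c b hb hm hk
  · -- b reaches a and b reaches c
    obtain ⟨m, hm⟩ := h1
    obtain ⟨k, hk⟩ := h2
    rcases le_total m k with h | h
    · left
      refine ⟨k - m, ?_⟩
      rw [← hm, ← Function.iterate_add_apply]
      rw [show k - m + m = k by omega, hk]
    · right
      refine ⟨m - k, ?_⟩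
      rw [← hk, ← Function.iterate_add_apply]
      rw [show m - k + k = m by omega, hm]
  · exact Or.inr (reachE_trans h2 h1)

end fE_lemmas

/-- class of `a` -/
noncomputable def clE (n : ℕ) (E : Finset (ℕ × ℕ)) (a : ℕ) : Finset ℕ :=
  (Finset.Icc 1 n).filter (fun b => RelE E a b)

lemma clE_eq_of_rel {n : ℕ} {E : Finset (ℕ × ℕ)} (hE : okE n E) {a b : ℕ}
    (ha : a ∈ Finset.Icc 1 n) (hb : b ∈ Finset.Icc 1 n) (hab : RelE E a b) :
    clE n E a = clE n E b := by
  have ha' : a ≠ 0 := by rw [Finset.mem_Icc] at ha; omega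
  have hb' : b ≠ 0 := by rw [Finset.mem_Icc] at hb; omega
  ext x
  simp only [clE, Finset.mem_filter, and_congr_right_iff]
  intro _
  constructor
  · intro h
    exact relE_trans hE ha' (relE_symm hab) h
  · intro h
    exact relE_trans hE hb' hab h

/-- the set partition determined by an edge set -/
noncomputable def fromE (n : ℕ) (E : Finset (ℕ × ℕ)) (hE : okE n E) :
    Finpartition (Finset.Icc 1 n : Finset ℕ) where
  parts := (Finset.Icc 1 n).image (fun a => clE n E a)
  supIndep := by
    rw [Finset.supIndep_iff_pairwiseDisjoint]
    intro x hx y hy hxy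
    simp only [Finset.coe_image, Set.mem_image, Finset.mem_coe] at hx hy
    obtain ⟨a, ha, rfl⟩ := hx
    obtain ⟨b, hb, rfl⟩ := hy
    rw [Function.onFun, Finset.disjoint_left]
    intro c hc hc'
    apply hxy
    simp only [id] at hc hc' ⊢
    rw [clE, Finset.mem_filter] at hc hc'
    have h1 := clE_eq_of_rel hE ha hc.1 hc.2
    have h2 := clE_eq_of_rel hE hb hc.1 hc'.2
    rw [h1, h2]
  sup_parts := by
    apply le_antisymm
    · rw [Finset.sup_le_iff]
      intro b hb
      rw [Finset.mem_image] at hb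
      obtain ⟨a, _, rfl⟩ := hb
      simp only [id]
      rw [Finset.le_iff_subset]
      exact Finset.filter_subset _ _
    · rw [Finset.le_iff_subset]
      intro a ha
      rw [Finset.mem_sup]
      refine ⟨clE n E a, Finset.mem_image_of_mem _ ha, ?_⟩
      show a ∈ clE n E a
      rw [clE, Finset.mem_filter]
      exact ⟨ha, relE_refl E a⟩
  bot_notMem := by
    intro h
    rw [Finset.bot_eq_empty, Finset.mem_image] at h
    obtain ⟨a, ha, hcl⟩ := h
    have : a ∈ clE n E a := by
      rw [clE, Finset.mem_filter]
      exact ⟨ha, relE_refl E a⟩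
    rw [hcl] at this
    exact absurd this (Finset.notMem_empty a)

section transfer

variable {n : ℕ}

lemma part_subset_ground (p : Finpartition (Finset.Icc 1 n : Finset ℕ)) {a : ℕ}
    (ha : a ∈ Finset.Icc 1 n) : p.part a ⊆ Finset.Icc 1 n := by
  have h := p.le (p.part_mem.2 ha)
  exact h

lemma part_fromE {E : Finset (ℕ × ℕ)} (hE : okE n E) {a : ℕ} (ha : a ∈ Finset.Icc 1 n) :
    (fromE n E hE).part a = clE n E a := by
  apply Finpartition.part_eq_of_mem
  · exact Finset.mem_image_of_mem _ ha
  · rw [clE, Finset.mem_filter]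
    exact ⟨ha, relE_refl E a⟩

lemma stdEdge_fromE {E : Finset (ℕ × ℕ)} (hE : okE n E) {i j : ℕ} :
    stdEdge (fromE n E hE) i j ↔ (i, j) ∈ E := by
  constructor
  · rintro ⟨hij, B, hB, hiB, hjB, hbet⟩
    -- B is the class of i
    obtain ⟨a, ha, rfl⟩ := Finset.mem_image.1 hB
    rw [clE, Finset.mem_filter] at hiB hjB
    obtain ⟨hiG, hai⟩ := hiB
    obtain ⟨hjG, haj⟩ := hjB
    have hii : i ≠ 0 := by rw [Finset.mem_Icc] at hiG; omega
    have hjj : j ≠ 0 := by rw [Finset.mem_Icc] at hjG; omega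
    have hij' : RelE E i j := relE_trans hE (by rw [Finset.mem_Icc] at ha; omega)
      (relE_symm hai) haj
    -- i reaches j (the other direction is impossible)
    have hreach : ReachE E i j := by
      rcases hij' with h | h
      · exact h
      · obtain ⟨m, hm⟩ := h
        match m with
        | 0 => exfalso; simp at hm; omega
        | Nat.succ l =>
          exfalso
          have hm' : (fE E)^[l + 1] j = i := hm
          have := fE_iter_le hE (l + 1) j (by rw [hm']; exact hii)
          omega
    obtain ⟨m, hm⟩ := hreach
    have hm1 : m ≠ 0 := by rintro rfl; simp at hm; omega
    -- first step c = fE E i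
    have hc : fE E i ≠ 0 := by
      intro h0
      have : (fE E)^[m] i = 0 := by
        obtain ⟨l, rfl⟩ := Nat.exists_eq_succ_of_ne_zero hm1
        rw [Function.iterate_succ_apply, h0, fE_iter_zero hE]
      omega
    have hcE := fE_mem hE hc
    have hcb := hE.1 _ hcE
    have hcj : fE E i ≤ j := by
      obtain ⟨l, rfl⟩ := Nat.exists_eq_succ_of_ne_zero hm1
      rw [Function.iterate_succ_apply] at hm
      have := fE_iter_le hE l (fE E i) (by rw [hm]; exact hjj)
      omega
    have hcin : fE E i ∈ clE n E a := by
      rw [clE, Finset.mem_filter]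
      refine ⟨by rw [Finset.mem_Icc]; omega, ?_⟩
      exact relE_trans hE hii hai (Or.inl ⟨1, by simp⟩)
    have := hbet _ hcin
    have : fE E i = j := by omega
    rw [← this]
    exact hcE
  · intro hij
    have hb := hE.1 _ hij
    have hiG : i ∈ Finset.Icc 1 n := by rw [Finset.mem_Icc]; omega
    have hjG : j ∈ Finset.Icc 1 n := by rw [Finset.mem_Icc]; omega
    have hfi : fE E i = j := fE_eq hE hij
    refine ⟨by omega, clE n E i, Finset.mem_image_of_mem _ hiG, ?_, ?_, ?_⟩
    · rw [clE, Finset.mem_filter]; exact ⟨hiG, relE_refl E i⟩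
    · rw [clE, Finset.mem_filter]
      exact ⟨hjG, Or.inl ⟨1, by simp [hfi]⟩⟩
    · intro t ht
      rintro ⟨h1, h2⟩
      rw [clE, Finset.mem_filter] at ht
      obtain ⟨htG, hrel⟩ := ht
      rcases hrel with ⟨m, hm⟩ | ⟨m, hm⟩
      · match m with
        | 0 => simp at hm; omega
        | Nat.succ l =>
          rw [Function.iterate_succ_apply, hfi] at hm
          have : t ≠ 0 := by rw [Finset.mem_Icc] at htG; omega
          have := fE_iter_le hE l j (by rw [hm]; exact this)
          omega
      · match m with
        | 0 => simp at hm; omega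
        | Nat.succ l =>
          have hm' : (fE E)^[l + 1] t = i := hm
          have : i ≠ 0 := by rw [Finset.mem_Icc] at hiG; omega
          have := fE_iter_le hE (l + 1) t (by rw [hm']; exact this)
          omega

/-- the standard edge set of a partition -/
noncomputable def edgesP (n : ℕ) (p : Finpartition (Finset.Icc 1 n : Finset ℕ)) :
    Finset (ℕ × ℕ) :=
  ((Finset.Icc 1 n) ×ˢ (Finset.Icc 1 n)).filter (fun e => stdEdge p e.1 e.2)

lemma stdEdge_ground {p : Finpartition (Finset.Icc 1 n : Finset ℕ)} {i j : ℕ}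
    (h : stdEdge p i j) : i ∈ Finset.Icc 1 n ∧ j ∈ Finset.Icc 1 n := by
  obtain ⟨hij, B, hB, hiB, hjB, _⟩ := h
  exact ⟨p.le hB hiB, p.le hB hjB⟩

lemma mem_edgesP {p : Finpartition (Finset.Icc 1 n : Finset ℕ)} {e : ℕ × ℕ} :
    e ∈ edgesP n p ↔ stdEdge p e.1 e.2 := by
  rw [edgesP, Finset.mem_filter]
  constructor
  · exact fun h => h.2
  · intro h
    refine ⟨?_, h⟩
    rw [Finset.mem_product]
    exact stdEdge_ground h

lemma stdEdge_unique_right {p : Finpartition (Finset.Icc 1 n : Finset ℕ)} {i j j' : ℕ}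
    (h : stdEdge p i j) (h' : stdEdge p i j') : j = j' := by
  obtain ⟨hij, B, hB, hiB, hjB, hbet⟩ := h
  obtain ⟨hij', B', hB', hiB', hjB', hbet'⟩ := h'
  have hBB : B = B' := p.eq_of_mem_parts hB hB' hiB hiB'
  subst hBB
  rcases Nat.lt_trichotomy j j' with h | h | h
  · exact absurd ⟨hij, h⟩ (hbet' j hjB)
  · exact h
  · exact absurd ⟨hij', h⟩ (hbet j' hjB')

lemma stdEdge_unique_left {p : Finpartition (Finset.Icc 1 n : Finset ℕ)} {i i' j : ℕ}
    (h : stdEdge p i j) (h' : stdEdge p i' j) : i = i' := by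
  obtain ⟨hij, B, hB, hiB, hjB, hbet⟩ := h
  obtain ⟨hij', B', hB', hiB', hjB', hbet'⟩ := h'
  have hBB : B = B' := p.eq_of_mem_parts hB hB' hjB hjB'
  subst hBB
  rcases Nat.lt_trichotomy i i' with h | h | h
  · exact absurd ⟨h, hij'⟩ (hbet i' hiB')
  · exact h
  · exact absurd ⟨h, hij⟩ (hbet' i hiB)

lemma okE_edgesP {p : Finpartition (Finset.Icc 1 n : Finset ℕ)}
    (hp : kDistantNoncrossing 2 p) : okE n (edgesP n p) := by
  refine ⟨fun e he => ?_, fun e he f hf hef => ?_, fun e he f hf hef => ?_,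
    fun e he f hf hc => ?_⟩
  · rw [mem_edgesP] at he
    have h1 := he.1
    have h2 := stdEdge_ground he
    rw [Finset.mem_Icc] at h2
    rw [Finset.mem_Icc] at h2
    omega
  · rw [mem_edgesP] at he hf
    have : e.2 = f.2 := stdEdge_unique_right (hef ▸ he) hf
    cases e; cases f; simp_all
  · rw [mem_edgesP] at he hf
    have : e.1 = f.1 := stdEdge_unique_left (hef ▸ he) hf
    cases e; cases f; simp_all
  · rw [mem_edgesP] at he hf
    exact hp ⟨e.1, e.2, f.1, f.2, he, hf, hc.1, hc.2.1, hc.2.2.1, hc.2.2.2⟩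

lemma kDNC_of_okE {E : Finset (ℕ × ℕ)} (hE : okE n E)
    {p : Finpartition (Finset.Icc 1 n : Finset ℕ)}
    (h : ∀ i j, stdEdge p i j ↔ (i, j) ∈ E) : kDistantNoncrossing 2 p := by
  rintro ⟨i1, j1, i2, j2, e1, e2, c1, c2, c3, c4⟩
  rw [h] at e1 e2
  exact hE.2.2.2 _ e1 _ e2 (by simp; omega)

lemma kDNC_fromE {E : Finset (ℕ × ℕ)} (hE : okE n E) :
    kDistantNoncrossing 2 (fromE n E hE) :=
  kDNC_of_okE hE (fun i j => stdEdge_fromE hE)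

lemma edgesP_fromE {E : Finset (ℕ × ℕ)} (hE : okE n E) : edgesP n (fromE n E hE) = E := by
  ext e
  rw [mem_edgesP, stdEdge_fromE hE]

end transfer

section transfer2

variable {n : ℕ}

lemma reach_mem_part (p : Finpartition (Finset.Icc 1 n : Finset ℕ))
    (hok : okE n (edgesP n p)) :
    ∀ (m : ℕ) (a : ℕ), a ∈ Finset.Icc 1 n → (fE (edgesP n p))^[m] a ≠ 0 →
      (fE (edgesP n p))^[m] a ∈ p.part a := by
  intro m
  induction m with
  | zero => intro a ha _; exact p.mem_part ha
  | succ k ih =>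
    intro a ha hz
    rw [Function.iterate_succ_apply'] at hz ⊢
    set c := (fE (edgesP n p))^[k] a with hc
    have hcc : (c, fE (edgesP n p) c) ∈ edgesP n p := fE_mem hok hz
    have hcz : c ≠ 0 := by
      have := hok.1 _ hcc
      simp at this
      omega
    have hcin : c ∈ p.part a := ih a ha (by omega)
    have hstd : stdEdge p c (fE (edgesP n p) c) := mem_edgesP.1 hcc
    obtain ⟨_, B, hB, hcB, hfB, _⟩ := hstd
    have h1 : p.part c = B := p.part_eq_of_mem hB hcB
    have h2 : p.part c = p.part a := p.part_eq_of_mem (p.part_mem.2 ha) hcin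
    rw [← h2, h1]
    exact hfB

lemma part_reach (p : Finpartition (Finset.Icc 1 n : Finset ℕ))
    (hok : okE n (edgesP n p)) :
    ∀ (d a b : ℕ), a ∈ Finset.Icc 1 n → b ∈ p.part a → a < b → b - a ≤ d →
      ReachE (edgesP n p) a b := by
  intro d
  induction d with
  | zero => intro a b _ _ h1 h2; omega
  | succ k ih =>
    intro a b ha hb hab hd
    have hS : ((p.part a).filter (fun x => a < x)).Nonempty :=
      ⟨b, Finset.mem_filter.2 ⟨hb, hab⟩⟩
    set c := ((p.part a).filter (fun x => a < x)).min' hS with hcdef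
    have hcS : c ∈ (p.part a).filter (fun x => a < x) := Finset.min'_mem _ hS
    rw [Finset.mem_filter] at hcS
    have hcb : c ≤ b := Finset.min'_le _ b (Finset.mem_filter.2 ⟨hb, hab⟩)
    have hstd : stdEdge p a c := by
      refine ⟨hcS.2, p.part a, p.part_mem.2 ha, p.mem_part ha, hcS.1, ?_⟩
      intro t ht
      rintro ⟨h1, h2⟩
      have : c ≤ t := Finset.min'_le _ t (Finset.mem_filter.2 ⟨ht, h1⟩)
      omega
    have hE : (a, c) ∈ edgesP n p := mem_edgesP.2 hstd
    have hfa : fE (edgesP n p) a = c := fE_eq hok hE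
    have hcG : c ∈ Finset.Icc 1 n := part_subset_ground p ha hcS.1
    rcases eq_or_lt_of_le hcb with rfl | hlt
    · exact ⟨1, by simp [hfa]⟩
    · have hbc : b ∈ p.part c := by
        have : p.part c = p.part a := p.part_eq_of_mem (p.part_mem.2 ha) hcS.1
        rw [this]
        exact hb
      obtain ⟨m, hm⟩ := ih c b hcG hbc hlt (by omega)
      exact ⟨m + 1, by rw [Function.iterate_succ_apply, hfa, hm]⟩

lemma part_rel (p : Finpartition (Finset.Icc 1 n : Finset ℕ))
    (hok : okE n (edgesP n p)) {a b : ℕ}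
    (ha : a ∈ Finset.Icc 1 n) (hb : b ∈ Finset.Icc 1 n) :
    b ∈ p.part a ↔ RelE (edgesP n p) a b := by
  constructor
  · intro h
    rcases Nat.lt_trichotomy a b with h' | rfl | h'
    · exact Or.inl (part_reach p hok (b - a) a b ha h h' le_rfl)
    · exact relE_refl _ a
    · have hmem : a ∈ p.part b := by
        have : p.part b = p.part a := p.part_eq_of_mem (p.part_mem.2 ha) h
        rw [this]
        exact p.mem_part ha
      exact Or.inr (part_reach p hok (a - b) b a hb hmem h' le_rfl)
  · intro h
    have hbz : b ≠ 0 := by rw [Finset.mem_Icc] at hb; omega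
    have haz : a ≠ 0 := by rw [Finset.mem_Icc] at ha; omega
    rcases h with ⟨m, hm⟩ | ⟨m, hm⟩
    · rw [← hm]
      exact reach_mem_part p hok m a ha (by rw [hm]; exact hbz)
    · have : a ∈ p.part b := by
        rw [← hm]
        exact reach_mem_part p hok m b hb (by rw [hm]; exact haz)
      have heq : p.part a = p.part b := p.part_eq_of_mem (p.part_mem.2 hb) this
      rw [heq]
      exact p.mem_part hb

lemma parts_eq_image (p : Finpartition (Finset.Icc 1 n : Finset ℕ)) :
    p.parts = (Finset.Icc 1 n).image p.part := by
  ext B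
  rw [Finset.mem_image]
  constructor
  · intro hB
    obtain ⟨a, haB⟩ := p.nonempty_of_mem_parts hB
    have haG : a ∈ Finset.Icc 1 n := p.le hB haB
    exact ⟨a, haG, p.part_eq_of_mem hB haB⟩
  · rintro ⟨a, ha, rfl⟩
    exact p.part_mem.2 ha

lemma fromE_edgesP (p : Finpartition (Finset.Icc 1 n : Finset ℕ))
    (hp : kDistantNoncrossing 2 p) :
    fromE n (edgesP n p) (okE_edgesP hp) = p := by
  apply Finpartition.ext
  show (Finset.Icc 1 n).image (fun a => clE n (edgesP n p) a) = p.parts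
  rw [parts_eq_image p]
  apply Finset.image_congr
  intro a ha
  rw [Finset.mem_coe] at ha
  ext b
  show b ∈ (Finset.Icc 1 n).filter (fun x => RelE (edgesP n p) a x) ↔ b ∈ p.part a
  rw [Finset.mem_filter]
  constructor
  · rintro ⟨hbG, hrel⟩
    exact (part_rel p (okE_edgesP hp) ha hbG).2 hrel
  · intro hb
    have hbG : b ∈ Finset.Icc 1 n := part_subset_ground p ha hb
    exact ⟨hbG, (part_rel p (okE_edgesP hp) ha hbG).1 hb⟩

noncomputable def equivD (n : ℕ) :
    {p : Finpartition (Finset.Icc 1 n : Finset ℕ) // kDistantNoncrossing 2 p}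
      ≃ {E // E ∈ Dset n} where
  toFun p := ⟨edgesP n p.1, mem_Dset.2 (okE_edgesP p.2)⟩
  invFun E := ⟨fromE n E.1 (mem_Dset.1 E.2), kDNC_fromE (mem_Dset.1 E.2)⟩
  left_inv := by
    rintro ⟨p, hp⟩
    simp only [Subtype.mk.injEq]
    exact fromE_edgesP p hp
  right_inv := by
    rintro ⟨E, hE⟩
    simp only [Subtype.mk.injEq]
    exact edgesP_fromE (mem_Dset.1 hE)

lemma card_transfer (n : ℕ) :
    Nat.card {p : Finpartition (Finset.Icc 1 n : Finset ℕ) // kDistantNoncrossing 2 p}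
      = (Dset n).card := by
  rw [Nat.card_congr (equivD n)]
  exact Nat.card_eq_finsetCard _

end transfer2

end DNCAux

theorem dcount_two_rec :
    dcount 2 0 = 1 ∧ dcount 2 1 = 1 ∧ ∀ n, 2 ≤ n →
      (dcount 2 n : ℤ) = 2 * dcount 2 (n - 1) +
        ∑ i ∈ Finset.Icc 2 (n - 1),
          (dcount 2 (n - i) : ℤ) * ((dcount 2 i : ℤ) - (dcount 2 (i - 1) : ℤ)) := by
  have htrans : ∀ m, dcount 2 m = (Dset m).card := fun m => card_transfer m
  refine ⟨?_, ?_, ?_⟩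
  · rw [htrans, Dset_zero]
    rfl
  · rw [htrans, Dset_one]
    rfl
  · intro n hn
    simp only [htrans]
    exact Dset_card_rec hn
end
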